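/- arXiv:2203.05350 — 6 statements merged into one kernel-verified Lean document; each statement's English description precedes it below -/
import Mathlib

section
/- For every n ≥ 0 the orthonormal polynomials P_n satisfy the explicit formula (−1)^n k^n P_n(x) = 1 + Σ_{m=1}^{n} (−1)^m [ Σ_{0≤j₁<j₂<…<j_m≤n−1} (1−k^{2(j₁+1)})(1−k^{2(j₂−j₁)})⋯(1−k^{2(j_m−j_{m−1})}) / ((1−k²)^m a_{j₁}a_{j₂}⋯a_{j_m}) ] x^m, as an identity of polynomials in x. -/
open scoped BigOperators

noncomputable def alph (a : ℕ → ℝ) (k : ℝ) (n : ℕ) : ℝ := k * a n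

noncomputable def bet (a : ℕ → ℝ) (k : ℝ) : ℕ → ℝ
  | 0 => a 0
  | n + 1 => a (n + 1) + k ^ 2 * a n

noncomputable def gapPow (k : ℝ) (m : ℕ) (j : Fin m → ℕ) : ℝ :=
  ∏ i : Fin m,
    (1 - k ^ (2 * (j i + 1 -
      (if (i : ℕ) = 0 then 0
       else j ⟨(i : ℕ) - 1, Nat.lt_of_le_of_lt (Nat.sub_le _ _) i.isLt⟩ + 1))))

noncomputable def cC (a : ℕ → ℝ) (k : ℝ) (m : ℕ) : ℝ :=
  ∑' j : {j : Fin m → ℕ // StrictMono j},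
    gapPow k m j.1 / ((1 - k ^ 2) ^ m * ∏ i : Fin m, a (j.1 i))

noncomputable def Fgt (a : ℕ → ℝ) (k : ℝ) (z : ℂ) : ℂ :=
  1 + ∑' m : ℕ, (-1 : ℂ) ^ (m + 1) * (cC a k (m + 1) : ℂ) * z ^ (m + 1)

noncomputable def dC (a : ℕ → ℝ) (k : ℝ) (n m : ℕ) : ℝ :=
  ∑' j : {j : Fin (m + 1) → ℕ // StrictMono j ∧ n ≤ j 0},
    (k ^ (2 * j.1 0) *
      ∏ i : Fin m, (1 - k ^ (2 * (j.1 i.succ - j.1 i.castSucc)))) /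
      ((1 - k ^ 2) ^ m * ∏ i : Fin (m + 1), a (j.1 i))

noncomputable def Wgt (a : ℕ → ℝ) (k : ℝ) (n : ℕ) (z : ℂ) : ℂ :=
  ∑' m : ℕ, (-1 : ℂ) ^ m * (dC a k n m : ℂ) * z ^ m

noncomputable def Phi (a : ℕ → ℝ) (k : ℝ) (n : ℕ) (z : ℂ) : ℂ :=
  (-1 : ℂ) ^ n * ((k : ℂ) ^ n)⁻¹ * Wgt a k n z

namespace St0

noncomputable def Wt (a : ℕ → ℝ) (k : ℝ) (m : ℕ) (v : Fin m → ℕ) : ℝ :=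
  gapPow k m v / ((1 - k ^ 2) ^ m * ∏ i : Fin m, a (v i))

noncomputable def cc (a : ℕ → ℝ) (k : ℝ) (n m : ℕ) : ℝ :=
  ∑ j ∈ Finset.univ.filter
      (fun j : Fin m → Fin n => ∀ i₁ i₂ : Fin m, i₁ < i₂ → j i₁ < j i₂),
    gapPow k m (fun i => (j i : ℕ)) /
      ((1 - k ^ 2) ^ m * ∏ i : Fin m, a (j i))

lemma cc_eq (a : ℕ → ℝ) (k : ℝ) (n m : ℕ) :
    cc a k n m = ∑ j ∈ Finset.univ.filter
      (fun j : Fin m → Fin n => ∀ i₁ i₂ : Fin m, i₁ < i₂ → j i₁ < j i₂),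
      Wt a k m (fun i => (j i : ℕ)) := rfl

lemma smp_iff {m n : ℕ} (j : Fin m → Fin n) :
    (∀ i₁ i₂ : Fin m, i₁ < i₂ → j i₁ < j i₂) ↔ StrictMono j :=
  ⟨fun h _ _ hlt => h _ _ hlt, fun h _ _ hlt => h hlt⟩

lemma cc_zero (a : ℕ → ℝ) (k : ℝ) (n : ℕ) : cc a k n 0 = 1 := by
  rw [cc]
  rw [Finset.filter_true_of_mem (fun j _ => fun i₁ _ _ => i₁.elim0)]
  simp [gapPow]

lemma cc_vanish (a : ℕ → ℝ) (k : ℝ) {n m : ℕ} (h : n < m) : cc a k n m = 0 := by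
  rw [cc]
  apply Finset.sum_eq_zero
  intro j hj
  exfalso
  have hsm : StrictMono j := (smp_iff j).1 (Finset.mem_filter.mp hj).2
  have := Fintype.card_le_of_injective j hsm.injective
  simp only [Fintype.card_fin] at this
  omega

def lastv : {m : ℕ} → (Fin m → ℕ) → ℕ
  | 0, _ => 0
  | (m+1), v => v (Fin.last m) + 1

lemma gapPow_snoc (k : ℝ) (m : ℕ) (v : Fin m → ℕ) (N : ℕ) :
    gapPow k (m+1) (Fin.snoc v N) =
      gapPow k m v * (1 - k ^ (2 * (N + 1 - lastv v))) := by
  rw [gapPow, Fin.prod_univ_castSucc]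
  congr 1
  · rw [gapPow]
    apply Finset.prod_congr rfl
    intro i _
    by_cases h0 : (i : ℕ) = 0
    · simp [h0, Fin.snoc_castSucc]
    · have hc : ((i.castSucc : ℕ)) = (i : ℕ) := rfl
      simp only [hc, h0, if_neg]
      have hidx : (⟨(i : ℕ) - 1, Nat.lt_of_le_of_lt (Nat.sub_le _ _) i.castSucc.isLt⟩ : Fin (m+1))
          = (⟨(i : ℕ) - 1, Nat.lt_of_le_of_lt (Nat.sub_le _ _) i.isLt⟩ : Fin m).castSucc := rfl
      rw [hidx, Fin.snoc_castSucc, Fin.snoc_castSucc]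
  · have hl : ((Fin.last m : Fin (m+1)) : ℕ) = m := rfl
    rw [Fin.snoc_last]
    cases m with
    | zero => simp [lastv]
    | succ m' =>
        have hm : ((Fin.last (m'+1) : Fin (m'+2)) : ℕ) ≠ 0 := by simp
        simp only [hl]
        have hidx : (⟨m' + 1 - 1, Nat.lt_of_le_of_lt (Nat.sub_le _ _) (Fin.last (m'+1)).isLt⟩ : Fin (m'+2))
            = (Fin.last m').castSucc := by
          apply Fin.ext; simp
        rw [if_neg (by omega), hidx, Fin.snoc_castSucc, lastv]

lemma prod_a_snoc (a : ℕ → ℝ) (m : ℕ) (v : Fin m → ℕ) (N : ℕ) :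
    (∏ i : Fin (m+1), a ((Fin.snoc v N : Fin (m+1) → ℕ) i)) = (∏ i : Fin m, a (v i)) * a N := by
  simp [Fin.prod_univ_castSucc]

noncomputable def Tn (a : ℕ → ℝ) (k : ℝ) (n m : ℕ) : ℝ :=
  ∑ u ∈ Finset.univ.filter
      (fun u : Fin m → Fin n => ∀ i₁ i₂ : Fin m, i₁ < i₂ → u i₁ < u i₂),
    Wt a k (m+1) (Fin.snoc (fun i => ((u i : ℕ))) n)

lemma sum_cast (n m : ℕ) (F : (Fin m → ℕ) → ℝ) :
    ∑ u ∈ Finset.univ.filter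
        (fun u : Fin m → Fin (n+1) =>
          (∀ i₁ i₂ : Fin m, i₁ < i₂ → u i₁ < u i₂) ∧ ∀ i, (u i : ℕ) < n),
      F (fun i => (u i : ℕ))
    = ∑ u ∈ Finset.univ.filter
        (fun u : Fin m → Fin n => ∀ i₁ i₂ : Fin m, i₁ < i₂ → u i₁ < u i₂),
      F (fun i => (u i : ℕ)) := by
  refine Finset.sum_bij'
    (fun u hu => fun t => (⟨(u t : ℕ), ((Finset.mem_filter.mp hu).2.2 t)⟩ : Fin n))
    (fun u _ => fun t => (u t).castSucc) ?_ ?_ ?_ ?_ ?_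
  · intro u hu
    simp only [Finset.mem_filter, Finset.mem_univ, true_and] at hu ⊢
    intro i₁ i₂ hlt
    exact hu.1 i₁ i₂ hlt
  · intro u hu
    simp only [Finset.mem_filter, Finset.mem_univ, true_and] at hu ⊢
    constructor
    · intro i₁ i₂ hlt
      exact Fin.castSucc_lt_castSucc_iff.mpr (hu i₁ i₂ hlt)
    · intro i
      exact (u i).isLt
  · intro u _
    funext t
    apply Fin.ext
    rfl
  · intro u _
    funext t
    apply Fin.ext
    rfl
  · intro u _
    rfl

lemma cc_split (a : ℕ → ℝ) (k : ℝ) (n m : ℕ) :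
    cc a k (n+1) (m+1) = cc a k n (m+1) + Tn a k n m := by
  rw [cc_eq]
  rw [← Finset.sum_filter_add_sum_filter_not _
      (fun j : Fin (m+1) → Fin (n+1) => j (Fin.last m) = Fin.last n)]
  rw [add_comm]
  congr 1
  · -- not-top part equals cc a k n (m+1)
    rw [cc_eq, ← sum_cast n (m+1) (Wt a k (m+1))]
    apply Finset.sum_congr
    · ext j
      simp only [Finset.mem_filter, Finset.mem_univ, true_and]
      constructor
      · rintro ⟨hsm, hne⟩
        refine ⟨hsm, fun i => ?_⟩
        have hmono : Monotone j := ((smp_iff j).1 hsm).monotone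
        have h1 : j i ≤ j (Fin.last m) := hmono (Fin.le_last i)
        have h2 : (j (Fin.last m) : ℕ) < n := by
          have := (j (Fin.last m)).isLt
          have hne' : (j (Fin.last m) : ℕ) ≠ n := by
            intro hval
            exact hne (Fin.ext hval)
          omega
        exact lt_of_le_of_lt h1 h2
      · rintro ⟨hsm, hlt⟩
        refine ⟨hsm, fun heq => ?_⟩
        have := hlt (Fin.last m)
        rw [heq] at this
        simp at this
    · intro j _
      rfl
  · -- top part equals Tn a k n m
    rw [Tn]
    refine Finset.sum_bij'
      (fun j hj => fun t : Fin m =>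
        (⟨(j t.castSucc : ℕ), by
          have hj' := Finset.mem_filter.mp (Finset.mem_filter.mp hj).1
          have hsm := (smp_iff j).1 hj'.2
          have htop : j (Fin.last m) = Fin.last n := (Finset.mem_filter.mp hj).2
          have h1 : j t.castSucc < j (Fin.last m) := hsm (Fin.castSucc_lt_last t)
          rw [htop] at h1
          exact h1⟩ : Fin n))
      (fun u _ => Fin.snoc (fun i => (u i).castSucc) (Fin.last n)) ?_ ?_ ?_ ?_ ?_
    · intro j hj
      have hj' := (Finset.mem_filter.mp (Finset.mem_filter.mp hj).1).2
      simp only [Finset.mem_filter, Finset.mem_univ, true_and]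
      intro i₁ i₂ hlt
      exact Fin.mk_lt_mk.mpr (hj' i₁.castSucc i₂.castSucc
        (Fin.castSucc_lt_castSucc_iff.mpr hlt))
    · intro u hu
      have hu' := (Finset.mem_filter.mp hu).2
      simp only [Finset.mem_filter, Finset.mem_univ, true_and]
      constructor
      · rw [smp_iff]
        rw [Fin.strictMono_iff_lt_succ]
        intro i
        rcases Fin.eq_castSucc_or_eq_last i.succ with ⟨t, ht⟩ | ht
        · rw [ht, Fin.snoc_castSucc, Fin.snoc_castSucc]
          apply Fin.castSucc_lt_castSucc_iff.mpr
          apply hu'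
          have h1 : i.castSucc < i.succ := Fin.castSucc_lt_succ
          rw [ht] at h1
          exact Fin.castSucc_lt_castSucc_iff.mp h1
        · rw [ht, Fin.snoc_castSucc, Fin.snoc_last]
          exact Fin.castSucc_lt_last _
      · rw [Fin.snoc_last]
    · intro j hj
      have htop : j (Fin.last m) = Fin.last n := (Finset.mem_filter.mp hj).2
      dsimp only
      funext t
      rcases Fin.eq_castSucc_or_eq_last t with ⟨s, hs⟩ | hs
      · rw [hs, Fin.snoc_castSucc]
        apply Fin.ext
        rfl
      · rw [hs, Fin.snoc_last, htop]
    · intro u _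
      funext t
      apply Fin.ext
      simp [Fin.snoc_castSucc]
    · intro j hj
      have htop : j (Fin.last m) = Fin.last n := (Finset.mem_filter.mp hj).2
      have hv : (fun i => ((j i : ℕ))) = Fin.snoc (fun t : Fin m => ((j t.castSucc : ℕ))) n := by
        funext t
        rcases Fin.eq_castSucc_or_eq_last t with ⟨s, hs⟩ | hs
        · rw [hs, Fin.snoc_castSucc]
        · rw [hs, Fin.snoc_last, htop]
          rfl
      dsimp only
      rw [show (fun i => ((j i : ℕ))) = Fin.snoc (fun t : Fin m => ((j t.castSucc : ℕ))) n from hv]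

lemma lastv_le {N m : ℕ} (u : Fin m → Fin (N+1)) :
    lastv (fun i => (u i : ℕ)) ≤ N + 1 := by
  cases m with
  | zero => simp [lastv]
  | succ m' =>
      have := (u (Fin.last m')).isLt
      simp only [lastv]
      omega

lemma Wt_snoc (a : ℕ → ℝ) (k : ℝ) (m : ℕ) (v : Fin m → ℕ) (N : ℕ) :
    Wt a k (m+1) (Fin.snoc v N) =
      gapPow k m v * (1 - k ^ (2 * (N + 1 - lastv v))) /
        ((1 - k ^ 2) ^ (m+1) * (∏ i : Fin m, a (v i)) * a N) := by
  rw [Wt, gapPow_snoc, prod_a_snoc]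
  ring

lemma Trec (a : ℕ → ℝ) (k : ℝ) (hk2 : (1:ℝ) - k ^ 2 ≠ 0)
    (hne : ∀ i, a i ≠ 0) (n m : ℕ) :
    a (n+1) * Tn a k (n+1) m = k ^ 2 * a n * Tn a k n m + cc a k (n+1) m := by
  have hPane : ∀ (v : Fin m → ℕ), (∏ i : Fin m, a (v i)) ≠ 0 :=
    fun v => Finset.prod_ne_zero_iff.mpr (fun i _ => hne _)
  have step1 : a (n+1) * Tn a k (n+1) m
      = (∑ u ∈ Finset.univ.filter
          (fun u : Fin m → Fin (n+1) => ∀ i₁ i₂ : Fin m, i₁ < i₂ → u i₁ < u i₂),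
          k ^ 2 * (gapPow k m (fun i => (u i : ℕ)) *
            (1 - k ^ (2 * (n + 1 - lastv (fun i => ((u i : ℕ)))))) /
            ((1 - k ^ 2) ^ (m+1) * ∏ i : Fin m, a ((u i : ℕ)))))
        + cc a k (n+1) m := by
    rw [Tn, Finset.mul_sum, cc_eq, ← Finset.sum_add_distrib]
    apply Finset.sum_congr rfl
    intro u _
    have hl : lastv (fun i => ((u i : ℕ))) ≤ n + 1 := lastv_le u
    rw [Wt_snoc]
    rw [show n + 1 + 1 - lastv (fun i => ((u i : ℕ)))
        = (n + 1 - lastv (fun i => ((u i : ℕ)))) + 1 from by omega]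
    rw [show 2 * ((n + 1 - lastv (fun i => ((u i : ℕ)))) + 1)
        = 2 * (n + 1 - lastv (fun i => ((u i : ℕ)))) + 2 from by ring]
    rw [pow_add, Wt]
    have h1 : ((1:ℝ) - k ^ 2) ^ (m+1) ≠ 0 := pow_ne_zero _ hk2
    have h2 : ((1:ℝ) - k ^ 2) ^ m ≠ 0 := pow_ne_zero _ hk2
    have h3 : (∏ i : Fin m, a ((u i : ℕ))) ≠ 0 := hPane _
    have h4 : a (n+1) ≠ 0 := hne _
    have h5 : a n ≠ 0 := hne _
    field_simp
    ring
  have step3 : (∑ u ∈ Finset.univ.filter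
          (fun u : Fin m → Fin (n+1) => ∀ i₁ i₂ : Fin m, i₁ < i₂ → u i₁ < u i₂),
          k ^ 2 * (gapPow k m (fun i => (u i : ℕ)) *
            (1 - k ^ (2 * (n + 1 - lastv (fun i => ((u i : ℕ)))))) /
            ((1 - k ^ 2) ^ (m+1) * ∏ i : Fin m, a ((u i : ℕ)))))
      = (∑ u ∈ Finset.univ.filter
          (fun u : Fin m → Fin n => ∀ i₁ i₂ : Fin m, i₁ < i₂ → u i₁ < u i₂),
          k ^ 2 * (gapPow k m (fun i => (u i : ℕ)) *
            (1 - k ^ (2 * (n + 1 - lastv (fun i => ((u i : ℕ)))))) /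
            ((1 - k ^ 2) ^ (m+1) * ∏ i : Fin m, a ((u i : ℕ))))) := by
    rw [← Finset.sum_filter_add_sum_filter_not
      (Finset.univ.filter (fun u : Fin m → Fin (n+1) => ∀ i₁ i₂ : Fin m, i₁ < i₂ → u i₁ < u i₂))
      (fun u => ∀ i : Fin m, (u i : ℕ) < n)]
    have hzero : ∑ u ∈ (Finset.univ.filter
          (fun u : Fin m → Fin (n+1) => ∀ i₁ i₂ : Fin m, i₁ < i₂ → u i₁ < u i₂)).filter
          (fun u => ¬ ∀ i : Fin m, (u i : ℕ) < n),
          k ^ 2 * (gapPow k m (fun i => (u i : ℕ)) *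
            (1 - k ^ (2 * (n + 1 - lastv (fun i => ((u i : ℕ)))))) /
            ((1 - k ^ 2) ^ (m+1) * ∏ i : Fin m, a ((u i : ℕ)))) = 0 := by
      apply Finset.sum_eq_zero
      intro u hu
      rw [Finset.mem_filter, Finset.mem_filter] at hu
      obtain ⟨⟨_, hsm⟩, hnb⟩ := hu
      push_neg at hnb
      obtain ⟨i, hni⟩ := hnb
      cases m with
      | zero => exact i.elim0
      | succ m' =>
          have hval : (u i : ℕ) = n := by
            have := (u i).isLt
            omega
          have hmono := ((smp_iff u).1 hsm).monotone (Fin.le_last i)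
          have hlast : (u (Fin.last m') : ℕ) = n := by
            have h1 : (u i : ℕ) ≤ (u (Fin.last m') : ℕ) := hmono
            have := (u (Fin.last m')).isLt
            omega
          have hlv : lastv (fun i => ((u i : ℕ))) = n + 1 := by
            simp only [lastv]
            omega
          rw [hlv]
          simp
    rw [hzero, add_zero, Finset.filter_filter]
    exact sum_cast n m
      (fun v => k ^ 2 * (gapPow k m v * (1 - k ^ (2 * (n + 1 - lastv v))) /
        ((1 - k ^ 2) ^ (m+1) * ∏ i : Fin m, a (v i))))
  have step4 : (∑ u ∈ Finset.univ.filter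
          (fun u : Fin m → Fin n => ∀ i₁ i₂ : Fin m, i₁ < i₂ → u i₁ < u i₂),
          k ^ 2 * (gapPow k m (fun i => (u i : ℕ)) *
            (1 - k ^ (2 * (n + 1 - lastv (fun i => ((u i : ℕ)))))) /
            ((1 - k ^ 2) ^ (m+1) * ∏ i : Fin m, a ((u i : ℕ)))))
      = k ^ 2 * a n * Tn a k n m := by
    rw [Tn, Finset.mul_sum]
    apply Finset.sum_congr rfl
    intro u _
    rw [Wt_snoc]
    have h1 : ((1:ℝ) - k ^ 2) ^ (m+1) ≠ 0 := pow_ne_zero _ hk2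
    have h2 : ((1:ℝ) - k ^ 2) ^ m ≠ 0 := pow_ne_zero _ hk2
    have h3 : (∏ i : Fin m, a ((u i : ℕ))) ≠ 0 := hPane _
    have h4 : a (n+1) ≠ 0 := hne _
    have h5 : a n ≠ 0 := hne _
    field_simp
  rw [step1, step3, step4]

lemma LR (a : ℕ → ℝ) (k : ℝ) (hk2 : (1:ℝ) - k ^ 2 ≠ 0)
    (hne : ∀ i, a i ≠ 0) (n m : ℕ) :
    a (n+1) * cc a k (n+2) (m+1)
      = (a (n+1) + k ^ 2 * a n) * cc a k (n+1) (m+1) + cc a k (n+1) m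
        - k ^ 2 * a n * cc a k n (m+1) := by
  have h1 : cc a k (n+2) (m+1) = cc a k (n+1) (m+1) + Tn a k (n+1) m :=
    cc_split a k (n+1) m
  have h2 : Tn a k n m = cc a k (n+1) (m+1) - cc a k n (m+1) := by
    have := cc_split a k n m; linarith
  have h3 := Trec a k hk2 hne n m
  rw [h1, mul_add, h3, h2]; ring

noncomputable def Sr (a : ℕ → ℝ) (k : ℝ) (n : ℕ) (x : ℝ) : ℝ :=
  ∑ m ∈ Finset.range (n+1), (-1:ℝ)^m * cc a k n m * x^m

lemma sum_range_eq (f : ℕ → ℝ) (N : ℕ) :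
    ∑ m ∈ Finset.range (N+1), f m = f 0 + ∑ m ∈ Finset.Icc 1 N, f m := by
  induction N with
  | zero => simp
  | succ N ih =>
      rw [Finset.sum_range_succ, ih, Finset.sum_Icc_succ_top (by omega)]
      ring

lemma cc_one_one (a : ℕ → ℝ) (k : ℝ) (hk2 : (1:ℝ) - k ^ 2 ≠ 0) :
    cc a k 1 1 = 1 / a 0 := by
  rw [cc]
  rw [Finset.filter_true_of_mem (fun j _ => fun i₁ i₂ h => by
    have h' : (i₁ : ℕ) < (i₂ : ℕ) := h
    have := i₂.isLt
    omega)]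
  rw [Finset.sum_eq_single_of_mem (fun _ => (0 : Fin 1)) (Finset.mem_univ _)
    (fun b _ hb => absurd (Subsingleton.elim b _) hb)]
  simp [gapPow]
  rw [div_mul_eq_div_div, div_self hk2, one_div]

lemma Sr_rec (a : ℕ → ℝ) (k : ℝ) (hk2 : (1:ℝ) - k ^ 2 ≠ 0)
    (hne : ∀ i, a i ≠ 0) (n : ℕ) (x : ℝ) :
    a (n+1) * Sr a k (n+2) x
      = (a (n+1) + k ^ 2 * a n - x) * Sr a k (n+1) x - k ^ 2 * a n * Sr a k n x := by
  have E2 : Sr a k (n+2) x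
      = (∑ m ∈ Finset.range (n+2), (-1:ℝ)^(m+1) * cc a k (n+2) (m+1) * x^(m+1)) + 1 := by
    rw [Sr, Finset.sum_range_succ']
    simp [cc_zero]
  have E1 : Sr a k (n+1) x
      = (∑ m ∈ Finset.range (n+2), (-1:ℝ)^(m+1) * cc a k (n+1) (m+1) * x^(m+1)) + 1 := by
    rw [Sr, Finset.sum_range_succ']
    have hext : (∑ m ∈ Finset.range (n+2), (-1:ℝ)^(m+1) * cc a k (n+1) (m+1) * x^(m+1))
        = ∑ m ∈ Finset.range (n+1), (-1:ℝ)^(m+1) * cc a k (n+1) (m+1) * x^(m+1) := by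
      rw [Finset.sum_range_succ, cc_vanish a k (show n+1 < n+1+1 by omega)]
      ring
    rw [hext]
    simp [cc_zero]
  have E0 : Sr a k n x
      = (∑ m ∈ Finset.range (n+2), (-1:ℝ)^(m+1) * cc a k n (m+1) * x^(m+1)) + 1 := by
    rw [Sr, Finset.sum_range_succ']
    have hext : (∑ m ∈ Finset.range (n+2), (-1:ℝ)^(m+1) * cc a k n (m+1) * x^(m+1))
        = ∑ m ∈ Finset.range n, (-1:ℝ)^(m+1) * cc a k n (m+1) * x^(m+1) := by
      rw [Finset.sum_range_succ, Finset.sum_range_succ,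
        cc_vanish a k (show n < n+1 by omega), cc_vanish a k (show n < n+2 by omega)]
      ring
    rw [hext]
    simp [cc_zero]
  have hx : (∑ m ∈ Finset.range (n+2), (-1:ℝ)^(m+1) * cc a k (n+1) m * x^(m+1))
      = -(x * (((∑ m ∈ Finset.range (n+2), (-1:ℝ)^(m+1) * cc a k (n+1) (m+1) * x^(m+1)) + 1))) := by
    rw [← E1, Sr, Finset.mul_sum, ← Finset.sum_neg_distrib]
    apply Finset.sum_congr rfl
    intro m _
    ring
  have key : ∑ m ∈ Finset.range (n+2), a (n+1) * ((-1:ℝ)^(m+1) * cc a k (n+2) (m+1) * x^(m+1))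
      = ∑ m ∈ Finset.range (n+2),
          ((a (n+1) + k^2 * a n) * ((-1:ℝ)^(m+1) * cc a k (n+1) (m+1) * x^(m+1))
           + ((-1:ℝ)^(m+1) * cc a k (n+1) m * x^(m+1))
           - k^2 * a n * ((-1:ℝ)^(m+1) * cc a k n (m+1) * x^(m+1))) := by
    apply Finset.sum_congr rfl
    intro m _
    have h := LR a k hk2 hne n m
    linear_combination ((-1:ℝ)^(m+1) * x^(m+1)) * h
  rw [E2, E1, E0, mul_add, mul_one, Finset.mul_sum, key,
    Finset.sum_sub_distrib, Finset.sum_add_distrib, ← Finset.mul_sum, ← Finset.mul_sum, hx]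
  ring

end St0

/-- Explicit formula for the orthonormal polynomials `P n`:
`(−1)^n k^n P_n(x) = 1 + Σ_{m=1}^{n} (−1)^m (Σ_{0 ≤ j₁ < … < j_m ≤ n−1} …) x^m`. -/
theorem statement0
    (a : ℕ → ℝ) (ha : ∀ n, 0 < a n) (hsum : Summable fun n => 1 / a n)
    (k : ℝ) (hk : k ∈ Set.Ioo (0 : ℝ) 1)
    (P : ℕ → ℝ → ℝ)
    (hP0 : ∀ x, P 0 x = 1)
    (hP1 : ∀ x, alph a k 0 * P 1 x + (bet a k 0 - x) * P 0 x = 0)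
    (hPrec : ∀ n, 1 ≤ n → ∀ x,
      alph a k n * P (n + 1) x + (bet a k n - x) * P n x
        + alph a k (n - 1) * P (n - 1) x = 0)
    (n : ℕ) (x : ℝ) :
    (-1 : ℝ) ^ n * k ^ n * P n x =
      1 + ∑ m ∈ Finset.Icc 1 n, (-1 : ℝ) ^ m *
        (∑ j ∈ Finset.univ.filter
            (fun j : Fin m → Fin n => ∀ i₁ i₂ : Fin m, i₁ < i₂ → j i₁ < j i₂),
          gapPow k m (fun i => (j i : ℕ)) /
            ((1 - k ^ 2) ^ m * ∏ i : Fin m, a (j i))) * x ^ m := by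
  have hk2 : (1:ℝ) - k ^ 2 ≠ 0 := by
    have h1 := hk.2
    have h0 := hk.1
    nlinarith
  have hne : ∀ i, a i ≠ 0 := fun i => (ha i).ne'
  show (-1 : ℝ) ^ n * k ^ n * P n x
      = 1 + ∑ m ∈ Finset.Icc 1 n, (-1 : ℝ) ^ m * St0.cc a k n m * x ^ m
  have hSr : St0.Sr a k n x
      = 1 + ∑ m ∈ Finset.Icc 1 n, (-1 : ℝ) ^ m * St0.cc a k n m * x ^ m := by
    rw [St0.Sr, St0.sum_range_eq (fun m => (-1:ℝ)^m * St0.cc a k n m * x^m) n]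
    simp [St0.cc_zero]
  rw [← hSr]
  suffices H : ∀ N : ℕ, ((-1:ℝ)^N * k^N * P N x = St0.Sr a k N x)
      ∧ ((-1:ℝ)^(N+1) * k^(N+1) * P (N+1) x = St0.Sr a k (N+1) x) from (H n).1
  intro N
  induction N with
  | zero =>
      constructor
      · simp [hP0, St0.Sr, St0.cc_zero]
      · have h := hP1 x
        simp only [alph, bet] at h
        rw [hP0 x] at h
        have hc : St0.cc a k 1 1 = 1 / a 0 := St0.cc_one_one a k hk2
        have hSr1 : St0.Sr a k 1 x = 1 + (-1) * (1/(a 0)) * x := by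
          rw [St0.Sr, Finset.sum_range_succ, Finset.sum_range_one]
          simp [St0.cc_zero, hc]
        rw [hSr1]
        have h0 := hne 0
        field_simp
        linear_combination -h
  | succ N ih =>
      refine ⟨ih.2, ?_⟩
      have hrec := hPrec (N+1) (by omega) x
      simp only [alph, bet, Nat.add_sub_cancel] at hrec
      have hS := St0.Sr_rec a k hk2 hne N x
      have hA : a (N+1) ≠ 0 := hne _
      apply mul_left_cancel₀ hA
      rw [hS, ← ih.2, ← ih.1]
      linear_combination ((-1:ℝ)^N * k^(N+1)) * hrec
end

section
/- Let a_min = inf_{n≥0} a_n; then a_min > 0 and for every finitely supported real sequence (f_n)_{n≥0} one has Σ_{n≥0} β_n f_n² + 2 Σ_{n≥0} α_n f_n f_{n+1} ≥ a_min (1−k)² Σ_{n≥0} f_n². In particular the Jacobi quadratic form associated with the matrix with diagonal entries β_n and off-diagonal entries α_n is bounded below by the positive constant a_min(1−k)². -/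
open scoped BigOperators

lemma key_identity (a : ℕ → ℝ) (k : ℝ) (f : ℕ → ℝ) (M : ℕ) :
    ∑ n ∈ Finset.range (M + 1), a n * (f n + k * f (n + 1)) ^ 2 =
      (∑ n ∈ Finset.range (M + 1), bet a k n * f n ^ 2) +
        2 * ∑ n ∈ Finset.range (M + 1), alph a k n * f n * f (n + 1) +
        k ^ 2 * a M * f (M + 1) ^ 2 := by
  induction M with
  | zero => simp [bet, alph]; ring
  | succ M ih =>
      rw [Finset.sum_range_succ, ih,
        Finset.sum_range_succ (fun n => bet a k n * f n ^ 2) (M + 1),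
        Finset.sum_range_succ (fun n => alph a k n * f n * f (n + 1)) (M + 1)]
      simp only [bet, alph]
      ring

/-- The Jacobi quadratic form is bounded below by
`a_min (1−k)²` with `a_min = inf_n a_n > 0`, on finitely supported sequences. -/
theorem statement1
    (a : ℕ → ℝ) (ha : ∀ n, 0 < a n) (hsum : Summable fun n => 1 / a n)
    (k : ℝ) (hk : k ∈ Set.Ioo (0 : ℝ) 1)
    (f : ℕ → ℝ) (hf : ∃ N, ∀ n, N ≤ n → f n = 0) :
    0 < ⨅ n, a n ∧
      (∑' n, bet a k n * f n ^ 2) + 2 * ∑' n, alph a k n * f n * f (n + 1) ≥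
        (⨅ n, a n) * (1 - k) ^ 2 * ∑' n, f n ^ 2 := by
  obtain ⟨hk0, hk1⟩ := hk
  -- Part 1: the infimum is positive
  have hbdd : BddBelow (Set.range a) := ⟨0, by rintro x ⟨n, rfl⟩; exact (ha n).le⟩
  have htend : Filter.Tendsto (fun n => 1 / a n) Filter.atTop (nhds 0) :=
    hsum.tendsto_atTop_zero
  obtain ⟨N₀, hN₀⟩ := (Filter.tendsto_atTop'.mp (by simpa using htend)
    (Set.Ioo (-1 : ℝ) 1) (Ioo_mem_nhds (by norm_num) (by norm_num)))
  set c : ℝ := min 1 ((Finset.range (N₀ + 1)).inf' (by simp) a) with hc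
  have hcpos : 0 < c := by
    apply lt_min one_pos
    rw [Finset.lt_inf'_iff]
    exact fun n _ => ha n
  have hcle : ∀ n, c ≤ a n := by
    intro n
    rcases le_or_gt n N₀ with h | h
    · exact le_trans (min_le_right _ _)
        (Finset.inf'_le a (by simp [Nat.lt_succ_iff, h]))
    · have h2 := (hN₀ n h.le).2
      have h3 : 1 ≤ a n := by
        nlinarith [ha n, mul_inv_cancel₀ (ne_of_gt (ha n))]
      exact le_trans (min_le_left _ _) h3
  have hinf_pos : 0 < ⨅ n, a n := lt_of_lt_of_le hcpos (le_ciInf hcle)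
  refine ⟨hinf_pos, ?_⟩
  set amin := ⨅ n, a n with hamin
  have haminle : ∀ n, amin ≤ a n := fun n => ciInf_le hbdd n
  -- finite support
  obtain ⟨N, hN⟩ := hf
  set M : ℕ := N with hM
  have hfz : ∀ n, M + 1 ≤ n → f n = 0 := fun n hn => hN n (by omega)
  -- convert tsums to finite sums over range (M+1)
  have h1 : ∑' n, bet a k n * f n ^ 2
      = ∑ n ∈ Finset.range (M + 1), bet a k n * f n ^ 2 := by
    refine tsum_eq_sum ?_
    intro n hn
    have hn' : M + 1 ≤ n := by simp [Finset.mem_range] at hn; omega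
    rw [hfz n hn']
    ring
  have h2 : ∑' n, alph a k n * f n * f (n + 1)
      = ∑ n ∈ Finset.range (M + 1), alph a k n * f n * f (n + 1) := by
    refine tsum_eq_sum ?_
    intro n hn
    have hn' : M + 1 ≤ n := by simp [Finset.mem_range] at hn; omega
    rw [hfz n hn']
    ring
  have h3 : ∑' n, f n ^ 2 = ∑ n ∈ Finset.range (M + 1), f n ^ 2 := by
    refine tsum_eq_sum ?_
    intro n hn
    have hn' : M + 1 ≤ n := by simp [Finset.mem_range] at hn; omega
    rw [hfz n hn']
    ring
  rw [h1, h2, h3]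
  -- key identity
  have hftop : f (M + 1) = 0 := hfz _ le_rfl
  have hid := key_identity a k f M
  rw [hftop] at hid
  simp only [ne_eq, OfNat.ofNat_ne_zero, not_false_eq_true, zero_pow, mul_zero,
    add_zero] at hid
  -- shifted sum bound
  have hshift : ∑ n ∈ Finset.range (M + 1), f (n + 1) ^ 2
      ≤ ∑ n ∈ Finset.range (M + 1), f n ^ 2 := by
    have := Finset.sum_range_succ' (fun n => f n ^ 2) (M + 1)
    have h2' := Finset.sum_range_succ (fun n => f n ^ 2) (M + 1)
    rw [hftop] at h2'
    nlinarith [sq_nonneg (f 0)]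
  -- pointwise: a n * g² ≥ amin * g², g² ≥ (1-k) fn² - k(1-k) f(n+1)²
  have step1 : amin * ∑ n ∈ Finset.range (M + 1), (f n + k * f (n + 1)) ^ 2
      ≤ ∑ n ∈ Finset.range (M + 1), a n * (f n + k * f (n + 1)) ^ 2 := by
    rw [Finset.mul_sum]
    refine Finset.sum_le_sum fun n _ => ?_
    exact mul_le_mul_of_nonneg_right (haminle n) (sq_nonneg _)
  have step2 : (1 - k) * ∑ n ∈ Finset.range (M + 1), f n ^ 2
      - k * (1 - k) * ∑ n ∈ Finset.range (M + 1), f (n + 1) ^ 2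
      ≤ ∑ n ∈ Finset.range (M + 1), (f n + k * f (n + 1)) ^ 2 := by
    rw [Finset.mul_sum, Finset.mul_sum, ← Finset.sum_sub_distrib]
    refine Finset.sum_le_sum fun n _ => ?_
    nlinarith [sq_nonneg (f n + f (n + 1)), mul_nonneg hk0.le (sq_nonneg (f n + f (n + 1)))]
  have hS2nn : (0:ℝ) ≤ ∑ n ∈ Finset.range (M + 1), (f n + k * f (n + 1)) ^ 2 :=
    Finset.sum_nonneg fun n _ => sq_nonneg _
  have hk1k : (0:ℝ) ≤ k * (1 - k) := mul_nonneg hk0.le (by linarith)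
  rw [ge_iff_le, ← hid]
  calc amin * (1 - k) ^ 2 * ∑ n ∈ Finset.range (M + 1), f n ^ 2
      ≤ amin * ((1 - k) * ∑ n ∈ Finset.range (M + 1), f n ^ 2
        - k * (1 - k) * ∑ n ∈ Finset.range (M + 1), f (n + 1) ^ 2) := by
        nlinarith [mul_le_mul_of_nonneg_left hshift (mul_nonneg hinf_pos.le hk1k)]
    _ ≤ amin * ∑ n ∈ Finset.range (M + 1), (f n + k * f (n + 1)) ^ 2 :=
        mul_le_mul_of_nonneg_left step2 hinf_pos.le
    _ ≤ ∑ n ∈ Finset.range (M + 1), a n * (f n + k * f (n + 1)) ^ 2 := step1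
end

section
/- For every z ∈ ℂ one has α_0 Φ_1(z) + (β_0 − z) Φ_0(z) − 𝔉(z) = 0, where Φ_n(z) = (−1)^n k^{−n} 𝔚_n(z). -/
open scoped BigOperators

/- ### Auxiliary material -/

set_option maxHeartbeats 1000000

namespace St4

section
variable {a : ℕ → ℝ} {k : ℝ}

/-! #### Basic terms -/

noncomputable def dT (a : ℕ → ℝ) (k : ℝ) (m : ℕ) (j : Fin (m + 1) → ℕ) : ℝ :=
  (k ^ (2 * j 0) * ∏ i : Fin m, (1 - k ^ (2 * (j i.succ - j i.castSucc)))) /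
    ((1 - k ^ 2) ^ m * ∏ i : Fin (m + 1), a (j i))

noncomputable def cT (a : ℕ → ℝ) (k : ℝ) (m : ℕ) (j : Fin m → ℕ) : ℝ :=
  gapPow k m j / ((1 - k ^ 2) ^ m * ∏ i : Fin m, a (j i))

lemma dC_eq (n m : ℕ) :
    dC a k n m = ∑' j : {j : Fin (m+1) → ℕ // StrictMono j ∧ n ≤ j 0}, dT a k m j.1 := rfl

lemma cC_eq (m : ℕ) :
    cC a k m = ∑' j : {j : Fin m → ℕ // StrictMono j}, cT a k m j.1 := rfl

lemma fac01 (hk0 : 0 < k) (hk1 : k < 1) (e : ℕ) : 0 ≤ 1 - k ^ e ∧ 1 - k ^ e ≤ 1 := by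
  constructor
  · have := pow_le_one₀ hk0.le hk1.le (n := e); linarith
  · have : 0 ≤ k ^ e := pow_nonneg hk0.le e; linarith

lemma one_sub_k2_pos (hk0 : 0 < k) (hk1 : k < 1) : 0 < 1 - k ^ 2 := by nlinarith

lemma hden (hk0 : 0 < k) (hk1 : k < 1) (m : ℕ) : 0 < (1 - k ^ 2) ^ m :=
  pow_pos (one_sub_k2_pos hk0 hk1) m

lemma prodA_pos (ha : ∀ n, 0 < a n) (m : ℕ) (j : Fin m → ℕ) : 0 < ∏ i, a (j i) :=
  Finset.prod_pos fun _ _ => ha _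

lemma dT_nonneg (ha : ∀ n, 0 < a n) (hk0 : 0 < k) (hk1 : k < 1) (m : ℕ)
    (j : Fin (m+1) → ℕ) : 0 ≤ dT a k m j := by
  apply div_nonneg
  · exact mul_nonneg (pow_nonneg hk0.le _)
      (Finset.prod_nonneg fun i _ => (fac01 hk0 hk1 _).1)
  · exact mul_nonneg (hden hk0 hk1 m).le (prodA_pos ha _ _).le

lemma cT_nonneg (ha : ∀ n, 0 < a n) (hk0 : 0 < k) (hk1 : k < 1) (m : ℕ)
    (j : Fin m → ℕ) : 0 ≤ cT a k m j := by
  apply div_nonneg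
  · exact Finset.prod_nonneg fun i _ => (fac01 hk0 hk1 _).1
  · exact mul_nonneg (hden hk0 hk1 m).le (prodA_pos ha _ _).le

lemma dT_le (ha : ∀ n, 0 < a n) (hk0 : 0 < k) (hk1 : k < 1) (m : ℕ) (j : Fin (m+1) → ℕ) :
    dT a k m j ≤ ((1 - k ^ 2)⁻¹) ^ m * ∏ i, (a (j i))⁻¹ := by
  have h1 : k ^ (2 * j 0) * ∏ i : Fin m, (1 - k ^ (2 * (j i.succ - j i.castSucc))) ≤ 1 := by
    have hp : ∏ i : Fin m, (1 - k ^ (2 * (j i.succ - j i.castSucc))) ≤ 1 :=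
      Finset.prod_le_one (fun i _ => (fac01 hk0 hk1 _).1) (fun i _ => (fac01 hk0 hk1 _).2)
    have hq : k ^ (2 * j 0) ≤ 1 := pow_le_one₀ hk0.le hk1.le
    have := mul_le_mul hq hp (Finset.prod_nonneg fun i _ => (fac01 hk0 hk1 _).1) zero_le_one
    linarith
  have hd : 0 < (1 - k ^ 2) ^ m * ∏ i, a (j i) :=
    mul_pos (hden hk0 hk1 m) (prodA_pos ha _ _)
  calc dT a k m j ≤ 1 / ((1 - k ^ 2) ^ m * ∏ i, a (j i)) := by
        unfold dT; gcongr
      _ = ((1 - k ^ 2)⁻¹) ^ m * ∏ i, (a (j i))⁻¹ := by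
        rw [one_div, mul_inv, inv_pow, Finset.prod_inv_distrib]

lemma gapPow_le_one (hk0 : 0 < k) (hk1 : k < 1) (m : ℕ) (j : Fin m → ℕ) :
    gapPow k m j ≤ 1 :=
  Finset.prod_le_one (fun i _ => (fac01 hk0 hk1 _).1) (fun i _ => (fac01 hk0 hk1 _).2)

lemma cT_le (ha : ∀ n, 0 < a n) (hk0 : 0 < k) (hk1 : k < 1) (m : ℕ) (j : Fin m → ℕ) :
    cT a k m j ≤ ((1 - k ^ 2)⁻¹) ^ m * ∏ i, (a (j i))⁻¹ := by
  have hd : 0 < (1 - k ^ 2) ^ m * ∏ i, a (j i) :=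
    mul_pos (hden hk0 hk1 m) (prodA_pos ha _ _)
  calc cT a k m j ≤ 1 / ((1 - k ^ 2) ^ m * ∏ i, a (j i)) := by
        unfold cT; gcongr
        exact gapPow_le_one hk0 hk1 m j
      _ = ((1 - k ^ 2)⁻¹) ^ m * ∏ i, (a (j i))⁻¹ := by
        rw [one_div, mul_inv, inv_pow, Finset.prod_inv_distrib]

/-! #### Summability over tuples -/

def consE (m : ℕ) : ℕ × (Fin m → ℕ) ≃ (Fin (m+1) → ℕ) where
  toFun p := Fin.cons p.1 p.2
  invFun j := (j 0, fun i => j i.succ)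
  left_inv p := by simp
  right_inv j := Fin.cons_self_tail j

lemma prodSummable (ha : ∀ n, 0 < a n) (hs : Summable fun n => (a n)⁻¹) :
    ∀ m, Summable (fun j : Fin m → ℕ => ∏ i, (a (j i))⁻¹) := by
  intro m
  induction m with
  | zero => exact summable_of_finite_support (Set.toFinite _)
  | succ m ih =>
    have hf : 0 ≤ (fun n => (a n)⁻¹) := by
      intro n; exact inv_nonneg.2 (ha n).le
    have hg : 0 ≤ (fun j : Fin m → ℕ => ∏ i, (a (j i))⁻¹) := by
      intro j; exact Finset.prod_nonneg fun i _ => inv_nonneg.2 (ha _).le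
    have h2 := Summable.mul_of_nonneg hs ih hf hg
    apply (consE m).summable_iff.mp
    refine h2.congr fun p => ?_
    show (a p.1)⁻¹ * ∏ i, (a (p.2 i))⁻¹ = ∏ i, (a ((Fin.cons p.1 p.2 : Fin (m+1) → ℕ) i))⁻¹
    rw [Fin.prod_univ_succ]
    simp [Fin.cons_zero, Fin.cons_succ]

noncomputable def S (a : ℕ → ℝ) (m : ℕ) : ℝ :=
  ∑' j : {j : Fin m → ℕ // StrictMono j}, ∏ i, (a (j.1 i))⁻¹

noncomputable def T (a : ℕ → ℝ) (n : ℕ) : ℝ := ∑' i : ℕ, (a (i + n))⁻¹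

lemma sm_le_apply {m : ℕ} {j : Fin m → ℕ} (hj : StrictMono j) :
    ∀ q (h : q < m), q ≤ j ⟨q, h⟩ := by
  intro q
  induction q with
  | zero => intro h; exact Nat.zero_le _
  | succ q ih =>
    intro h
    have hq : q < m := Nat.lt_of_succ_lt h
    have h1 : j ⟨q, hq⟩ < j ⟨q+1, h⟩ := hj (by simp [Fin.lt_def])
    have := ih hq
    omega

lemma S_nonneg (ha : ∀ n, 0 < a n) (m : ℕ) : 0 ≤ S a m :=
  tsum_nonneg fun j => Finset.prod_nonneg fun i _ => inv_nonneg.2 (ha _).le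

lemma S_succ_le (ha : ∀ n, 0 < a n) (hs : Summable fun n => (a n)⁻¹)
    (hps : ∀ m, Summable (fun j : Fin m → ℕ => ∏ i, (a (j i))⁻¹)) (m : ℕ) :
    S a (m+1) ≤ S a m * T a m := by
  classical
  set f : {j : Fin (m+1) → ℕ // StrictMono j} → ℝ := fun j => ∏ i, (a (j.1 i))⁻¹
  set G : {j : Fin m → ℕ // StrictMono j} × ℕ → ℝ :=
    fun p => (∏ i, (a (p.1.1 i))⁻¹) * (a (p.2 + m))⁻¹
  have hglast : ∀ j : {j : Fin (m+1) → ℕ // StrictMono j}, m ≤ j.1 (Fin.last m) :=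
    fun j => sm_le_apply j.2 m (Nat.lt_succ_self m)
  set e : {j : Fin (m+1) → ℕ // StrictMono j} → {j : Fin m → ℕ // StrictMono j} × ℕ :=
    fun j => (⟨fun i => j.1 i.castSucc,
      fun x y hxy => j.2 (Fin.castSucc_lt_castSucc_iff.mpr hxy)⟩, j.1 (Fin.last m) - m)
  have he : Function.Injective e := by
    intro j j' h
    have h1 : ∀ i : Fin m, j.1 i.castSucc = j'.1 i.castSucc := by
      intro i
      have := congrArg (fun p => p.1.1 i) h
      simpa [e] using this
    have h2 : j.1 (Fin.last m) = j'.1 (Fin.last m) := by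
      have := congrArg Prod.snd h
      simp only [e] at this
      have l1 := hglast j
      have l2 := hglast j'
      omega
    apply Subtype.ext
    funext i
    rcases Fin.eq_castSucc_or_eq_last i with ⟨i', rfl⟩ | rfl
    · exact h1 i'
    · exact h2
  have hG : Summable G := by
    apply Summable.mul_of_nonneg ((hps m).comp_injective Subtype.val_injective)
      ((summable_nat_add_iff m).2 hs)
    · intro j; exact Finset.prod_nonneg fun i _ => inv_nonneg.2 (ha _).le
    · intro i; exact inv_nonneg.2 (ha _).le
  have hf : Summable f := (hps (m+1)).comp_injective Subtype.val_injective
  have key : tsum f ≤ tsum G := by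
    apply Summable.tsum_le_tsum_of_inj e he
    · intro c _; exact mul_nonneg (Finset.prod_nonneg fun i _ => inv_nonneg.2 (ha _).le)
        (inv_nonneg.2 (ha _).le)
    · intro j
      show ∏ i, (a (j.1 i))⁻¹ ≤ (∏ i : Fin m, (a (j.1 i.castSucc))⁻¹) * (a (j.1 (Fin.last m) - m + m))⁻¹
      have : j.1 (Fin.last m) - m + m = j.1 (Fin.last m) := Nat.sub_add_cancel (hglast j)
      rw [this, Fin.prod_univ_castSucc]
    · exact hf
    · exact hG
  have hGval : tsum G = S a m * T a m := by
    rw [Summable.tsum_prod' hG (fun b => (hG.prod_factor b))]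
    simp only [G]
    have : ∀ b : {j : Fin m → ℕ // StrictMono j},
        ∑' c : ℕ, (∏ x, (a (b.1 x))⁻¹) * (a (c + m))⁻¹ = (∏ x, (a (b.1 x))⁻¹) * T a m :=
      fun b => tsum_mul_left
    rw [tsum_congr this, tsum_mul_right]
    rfl
  calc S a (m+1) = tsum f := rfl
    _ ≤ tsum G := key
    _ = S a m * T a m := hGval

lemma master (ha : ∀ n, 0 < a n) (hs : Summable fun n => (a n)⁻¹)
    (hS0 : ∀ m, 0 ≤ S a m)
    (hSle : ∀ m, S a (m+1) ≤ S a m * T a m)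
    (r : ℝ) (hr : 0 ≤ r) (C : ℝ) (hC : 0 ≤ C) :
    Summable (fun m => C ^ m * S a (m+1) * r ^ m) := by
  have hT : Filter.Tendsto (fun n => C * r * T a n) Filter.atTop (nhds 0) := by
    have h0 := tendsto_sum_nat_add (fun n => (a n)⁻¹)
    have : Filter.Tendsto (fun n => C * r * T a n) Filter.atTop (nhds (C * r * 0)) :=
      h0.const_mul (C * r)
    simpa using this
  have hev : ∀ᶠ n in Filter.atTop, C * r * T a (n + 1) ≤ 1/2 := by
    have := (hT.comp (Filter.tendsto_add_atTop_nat 1)).eventually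
      (eventually_le_nhds (by norm_num : (0:ℝ) < 1/2))
    simpa using this
  apply summable_of_ratio_norm_eventually_le (r := 1/2) (by norm_num)
  filter_upwards [hev] with n hn
  have hTn : 0 ≤ T a (n+1) := tsum_nonneg fun i => inv_nonneg.2 (ha _).le
  have h1 : 0 ≤ C ^ n * S a (n+1) * r ^ n :=
    mul_nonneg (mul_nonneg (pow_nonneg hC _) (hS0 _)) (pow_nonneg hr _)
  have h2 : 0 ≤ C ^ (n+1) * S a (n+2) * r ^ (n+1) :=
    mul_nonneg (mul_nonneg (pow_nonneg hC _) (hS0 _)) (pow_nonneg hr _)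
  rw [Real.norm_of_nonneg h2, Real.norm_of_nonneg h1]
  calc C ^ (n+1) * S a (n+2) * r ^ (n+1)
      ≤ C ^ (n+1) * (S a (n+1) * T a (n+1)) * r ^ (n+1) := by
        have := hSle (n+1)
        apply mul_le_mul_of_nonneg_right _ (pow_nonneg hr _)
        exact mul_le_mul_of_nonneg_left this (pow_nonneg hC _)
    _ = (C * r * T a (n+1)) * (C ^ n * S a (n+1) * r ^ n) := by ring
    _ ≤ (1/2) * (C ^ n * S a (n+1) * r ^ n) := mul_le_mul_of_nonneg_right hn h1

/-! #### Summability and bounds for the coefficient sums -/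

lemma dT_subtype_summable
    (hps : ∀ m, Summable (fun j : Fin m → ℕ => ∏ i, (a (j i))⁻¹))
    (hnn : ∀ m (j : Fin (m+1) → ℕ), 0 ≤ dT a k m j)
    (hle : ∀ m (j : Fin (m+1) → ℕ), dT a k m j ≤ ((1 - k ^ 2)⁻¹) ^ m * ∏ i, (a (j i))⁻¹)
    (n m : ℕ) :
    Summable (fun j : {j : Fin (m+1) → ℕ // StrictMono j ∧ n ≤ j 0} => dT a k m j.1) := by
  have hbs : Summable (fun j : {j : Fin (m+1) → ℕ // StrictMono j ∧ n ≤ j 0} =>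
      ((1 - k ^ 2)⁻¹) ^ m * ∏ i, (a (j.1 i))⁻¹) :=
    (((hps (m+1)).mul_left _).comp_injective Subtype.val_injective)
  exact Summable.of_nonneg_of_le (fun j => hnn m j.1) (fun j => hle m j.1) hbs

lemma cT_subtype_summable
    (hps : ∀ m, Summable (fun j : Fin m → ℕ => ∏ i, (a (j i))⁻¹))
    (hnn : ∀ m (j : Fin m → ℕ), 0 ≤ cT a k m j)
    (hle : ∀ m (j : Fin m → ℕ), cT a k m j ≤ ((1 - k ^ 2)⁻¹) ^ m * ∏ i, (a (j i))⁻¹)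
    (m : ℕ) :
    Summable (fun j : {j : Fin m → ℕ // StrictMono j} => cT a k m j.1) := by
  have hbs : Summable (fun j : {j : Fin m → ℕ // StrictMono j} =>
      ((1 - k ^ 2)⁻¹) ^ m * ∏ i, (a (j.1 i))⁻¹) :=
    (((hps m).mul_left _).comp_injective Subtype.val_injective)
  exact Summable.of_nonneg_of_le (fun j => hnn m j.1) (fun j => hle m j.1) hbs

lemma dC_nonneg' (hnn : ∀ m (j : Fin (m+1) → ℕ), 0 ≤ dT a k m j) (n m : ℕ) :
    0 ≤ dC a k n m := by
  rw [dC_eq]; exact tsum_nonneg fun j => hnn m j.1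

lemma cC_nonneg' (hnn : ∀ m (j : Fin m → ℕ), 0 ≤ cT a k m j) (m : ℕ) :
    0 ≤ cC a k m := by
  rw [cC_eq]; exact tsum_nonneg fun j => hnn m j.1

lemma dC_le (ha : ∀ n, 0 < a n) (hC : 0 ≤ (1 - k ^ 2)⁻¹)
    (hps : ∀ m, Summable (fun j : Fin m → ℕ => ∏ i, (a (j i))⁻¹))
    (hnn : ∀ m (j : Fin (m+1) → ℕ), 0 ≤ dT a k m j)
    (hle : ∀ m (j : Fin (m+1) → ℕ), dT a k m j ≤ ((1 - k ^ 2)⁻¹) ^ m * ∏ i, (a (j i))⁻¹)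
    (n m : ℕ) :
    dC a k n m ≤ ((1 - k ^ 2)⁻¹) ^ m * S a (m+1) := by
  rw [dC_eq]
  have hbs : Summable (fun j : {j : Fin (m+1) → ℕ // StrictMono j} =>
      ((1 - k ^ 2)⁻¹) ^ m * ∏ i, (a (j.1 i))⁻¹) :=
    (((hps (m+1)).mul_left _).comp_injective Subtype.val_injective)
  have := Summable.tsum_le_tsum_of_inj
    (fun j : {j : Fin (m+1) → ℕ // StrictMono j ∧ n ≤ j 0} => (⟨j.1, j.2.1⟩ : {j : Fin (m+1) → ℕ // StrictMono j}))
    (fun j j' h => Subtype.ext (by simpa using congrArg Subtype.val h))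
    (fun c _ => mul_nonneg (pow_nonneg hC m) (Finset.prod_nonneg fun i _ => inv_nonneg.2 (ha _).le))
    (fun j => hle m j.1)
    (dT_subtype_summable hps hnn hle n m) hbs
  refine this.trans_eq ?_
  rw [S, ← tsum_mul_left]

lemma cC_le (ha : ∀ n, 0 < a n)
    (hps : ∀ m, Summable (fun j : Fin m → ℕ => ∏ i, (a (j i))⁻¹))
    (hnn : ∀ m (j : Fin m → ℕ), 0 ≤ cT a k m j)
    (hle : ∀ m (j : Fin m → ℕ), cT a k m j ≤ ((1 - k ^ 2)⁻¹) ^ m * ∏ i, (a (j i))⁻¹)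
    (m : ℕ) :
    cC a k m ≤ ((1 - k ^ 2)⁻¹) ^ m * S a m := by
  rw [cC_eq]
  have hbs : Summable (fun j : {j : Fin m → ℕ // StrictMono j} =>
      ((1 - k ^ 2)⁻¹) ^ m * ∏ i, (a (j.1 i))⁻¹) :=
    (((hps m).mul_left _).comp_injective Subtype.val_injective)
  have h2 := Summable.tsum_le_tsum (f := fun j : {j : Fin m → ℕ // StrictMono j} => cT a k m j.1)
    (g := fun j : {j : Fin m → ℕ // StrictMono j} => ((1 - k ^ 2)⁻¹) ^ m * ∏ i, (a (j.1 i))⁻¹)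
    (fun j => hle m j.1) (cT_subtype_summable hps hnn hle m) hbs
  refine h2.trans_eq ?_
  rw [S, ← tsum_mul_left]

end

/-! #### Coefficient identities -/

section
variable {a : ℕ → ℝ} {k : ℝ}

def k0e (n : ℕ) : ℕ ≃ {j : Fin 1 → ℕ // StrictMono j ∧ n ≤ j 0} where
  toFun u := ⟨fun _ => u + n,
    ⟨fun x y hxy => by
      have hxy' : x = y := Subsingleton.elim x y
      subst hxy'; exact absurd hxy (lt_irrefl _),
      Nat.le_add_left n u⟩⟩
  invFun j := j.1 0 - n
  left_inv u := by simp
  right_inv j := Subtype.ext (funext fun i => by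
    have hi : i = 0 := Subsingleton.elim i 0
    subst hi
    have := j.2.2
    show j.1 0 - n + n = j.1 0
    omega)

lemma dC_zero_eq (n : ℕ) : dC a k n 0 = ∑' u : ℕ, k ^ (2*(u+n)) * (a (u+n))⁻¹ := by
  rw [dC_eq, ← (k0e n).tsum_eq]
  apply tsum_congr
  intro u
  show (k ^ (2 * (u + n)) * ∏ i : Fin 0, _) / ((1 - k ^ 2) ^ 0 * ∏ i : Fin 1, a ((u + n))) = _
  simp [div_eq_mul_inv]

lemma K0 (ha : ∀ n, 0 < a n) (hk0 : 0 < k) (hk1 : k < 1)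
    (hs : Summable fun n => (a n)⁻¹) :
    a 0 * (dC a k 0 0 - dC a k 1 0) = 1 := by
  set g : ℕ → ℝ := fun t => k ^ (2*t) * (a t)⁻¹ with hg
  have hgs : Summable g := by
    apply Summable.of_nonneg_of_le
      (fun t => mul_nonneg (pow_nonneg hk0.le _) (inv_nonneg.2 (ha t).le)) _ hs
    intro t
    calc g t ≤ 1 * (a t)⁻¹ := by
          apply mul_le_mul_of_nonneg_right (pow_le_one₀ hk0.le hk1.le)
            (inv_nonneg.2 (ha t).le)
      _ = (a t)⁻¹ := one_mul _
  have h0 : dC a k 0 0 = ∑' u : ℕ, g u := by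
    rw [dC_zero_eq]; apply tsum_congr; intro u; simp [hg]
  have h1 : dC a k 1 0 = ∑' u : ℕ, g (u + 1) := dC_zero_eq 1
  rw [h0, h1, Summable.tsum_eq_zero_add hgs]
  have hg0 : g 0 = (a 0)⁻¹ := by simp [hg]
  rw [hg0]
  have : (a 0)⁻¹ + ∑' (b : ℕ), g (b + 1) - ∑' (b : ℕ), g (b + 1) = (a 0)⁻¹ := by ring
  rw [this]
  exact mul_inv_cancel₀ (ha 0).ne'

lemma consSM {m : ℕ} (j' : Fin (m+1) → ℕ) :
    StrictMono (Fin.cons 0 j' : Fin (m+1+1) → ℕ) ↔ (StrictMono j' ∧ 0 < j' 0) := by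
  rw [Fin.strictMono_iff_lt_succ, Fin.strictMono_iff_lt_succ]
  constructor
  · intro h
    constructor
    · intro q
      have := h q.succ
      rwa [← Fin.succ_castSucc, Fin.cons_succ, Fin.cons_succ] at this
    · have := h 0
      simpa using this
  · rintro ⟨h1, h2⟩ i
    refine Fin.cases ?_ ?_ i
    · simpa using h2
    · intro q
      have := h1 q
      rwa [← Fin.succ_castSucc, Fin.cons_succ, Fin.cons_succ]

noncomputable def P (k : ℝ) {m : ℕ} (j' : Fin (m+1) → ℕ) : ℝ :=
  ∏ i : Fin m, (1 - k ^ (2 * (j' i.succ - j' i.castSucc)))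

lemma consProd {m : ℕ} (j' : Fin (m+1) → ℕ) :
    (∏ i : Fin (m+1), (1 - k ^ (2 * ((Fin.cons 0 j' : Fin (m+1+1) → ℕ) i.succ
      - (Fin.cons 0 j' : Fin (m+1+1) → ℕ) i.castSucc))))
      = (1 - k ^ (2 * j' 0)) * P k j' := by
  rw [Fin.prod_univ_succ]
  congr 1

lemma consA {m : ℕ} (j' : Fin (m+1) → ℕ) :
    (∏ i : Fin (m+1+1), a ((Fin.cons 0 j' : Fin (m+1+1) → ℕ) i))
      = a 0 * ∏ i : Fin (m+1), a (j' i) := by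
  rw [Fin.prod_univ_succ]
  simp

lemma gapPow_eq {m : ℕ} (j' : Fin (m+1) → ℕ) :
    gapPow k (m+1) j' = (1 - k ^ (2 * (j' 0 + 1))) * P k j' := by
  unfold gapPow
  rw [Fin.prod_univ_succ]
  congr 1
  unfold P
  apply Finset.prod_congr rfl
  intro q _
  have h1 : ((q.succ : Fin (m+1)) : ℕ) ≠ 0 := by simp [Fin.val_succ]
  rw [if_neg h1]
  show (1 - k ^ (2 * (j' q.succ + 1 - (j' q.castSucc + 1))))
    = (1 - k ^ (2 * (j' q.succ - j' q.castSucc)))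
  congr 2
  omega

lemma dT_cons_eq {m : ℕ} (j' : Fin (m+1) → ℕ) :
    dT a k (m+1) (Fin.cons 0 j') =
      ((1 - k ^ (2 * j' 0)) * P k j')
        / ((1 - k^2)^(m+1) * (a 0 * ∏ i : Fin (m+1), a (j' i))) := by
  unfold dT
  rw [consProd, consA]
  norm_num

lemma dT_cons_zero {m : ℕ} (j' : Fin (m+1) → ℕ) (h0 : j' 0 = 0) :
    dT a k (m+1) (Fin.cons 0 j') = 0 := by
  rw [dT_cons_eq, h0]
  simp

lemma cT_eq' {m : ℕ} (j' : Fin (m+1) → ℕ) :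
    cT a k (m+1) j' = ((1 - k^(2*(j' 0 + 1))) * P k j')
      / ((1 - k^2)^(m+1) * ∏ i : Fin (m+1), a (j' i)) := by
  unfold cT
  rw [gapPow_eq]

lemma ptwise (ha : ∀ n, 0 < a n) (hk0 : 0 < k) (hk1 : k < 1) {m : ℕ}
    (j' : Fin (m+1) → ℕ) :
    a 0 * dT a k (m+1) (Fin.cons 0 j') + dT a k m j' = cT a k (m+1) j' := by
  rw [dT_cons_eq, cT_eq']
  show a 0 * _ + (k ^ (2 * j' 0) * P k j') / ((1 - k^2)^m * ∏ i : Fin (m+1), a (j' i)) = _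
  have hD : (1 - k^2) ≠ 0 := by nlinarith
  have hA : (∏ i : Fin (m+1), a (j' i)) ≠ 0 :=
    (Finset.prod_pos fun i _ => ha _).ne'
  have ha0 : a 0 ≠ 0 := (ha 0).ne'
  have hexp : 2 * (j' 0 + 1) = 2 * j' 0 + 2 := by ring
  rw [hexp, pow_add]
  field_simp
  ring

end

/-! #### The recurrence identity for coefficients -/

section
variable {a : ℕ → ℝ} {k : ℝ}

lemma dC_ind (n M : ℕ) :
    dC a k n M = ∑' j : Fin (M+1) → ℕ,
      Set.indicator {j | StrictMono j ∧ n ≤ j 0} (dT a k M) j := by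
  rw [dC_eq]
  exact tsum_subtype {j | StrictMono j ∧ n ≤ j 0} (dT a k M)

lemma cC_ind (M : ℕ) :
    cC a k M = ∑' j : Fin M → ℕ, Set.indicator {j | StrictMono j} (cT a k M) j := by
  rw [cC_eq]
  exact tsum_subtype {j | StrictMono j} (cT a k M)

lemma K1 (ha : ∀ n, 0 < a n) (hk0 : 0 < k) (hk1 : k < 1)
    (hs : Summable fun n => (a n)⁻¹) (m : ℕ) :
    a 0 * (dC a k 0 (m+1) - dC a k 1 (m+1)) + dC a k 0 m = cC a k (m+1) := by
  classical
  have hps := prodSummable ha hs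
  have hnn : ∀ M (j : Fin (M+1) → ℕ), 0 ≤ dT a k M j := dT_nonneg ha hk0 hk1
  have hle := dT_le ha hk0 hk1
  have hdTs : ∀ M, Summable (dT a k M) := fun M =>
    Summable.of_nonneg_of_le (hnn M) (hle M) ((hps (M+1)).mul_left _)
  set s0 : Set (Fin (m+1+1) → ℕ) := {j | StrictMono j ∧ 0 ≤ j 0} with hs0
  set s1 : Set (Fin (m+1+1) → ℕ) := {j | StrictMono j ∧ 1 ≤ j 0} with hs1
  have hsub : s1 ⊆ s0 := fun j hj => ⟨hj.1, Nat.zero_le _⟩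
  have hi0 : Summable (s0.indicator (dT a k (m+1))) := (hdTs (m+1)).indicator s0
  have hi1 : Summable (s1.indicator (dT a k (m+1))) := (hdTs (m+1)).indicator s1
  have hdiff : dC a k 0 (m+1) - dC a k 1 (m+1)
      = ∑' j : Fin (m+1+1) → ℕ, ((s0 \ s1).indicator (dT a k (m+1))) j := by
    rw [dC_ind 0 (m+1), dC_ind 1 (m+1), ← Summable.tsum_sub hi0 hi1]
    apply tsum_congr
    intro j
    rw [Set.indicator_sdiff hsub (dT a k (m+1))]
    rfl
  have hconsinj : Function.Injective
      (fun j' : Fin (m+1) → ℕ => (Fin.cons 0 j' : Fin (m+1+1) → ℕ)) := by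
    intro x y h
    funext i
    have := congrFun h i.succ
    simpa using this
  have hsupp : Function.support ((s0 \ s1).indicator (dT a k (m+1)))
      ⊆ Set.range (fun j' : Fin (m+1) → ℕ => (Fin.cons 0 j' : Fin (m+1+1) → ℕ)) := by
    intro j hj
    have hmem : j ∈ s0 \ s1 := by
      by_contra hc
      exact hj (Set.indicator_of_notMem hc _)
    have hj0 : j 0 = 0 := by
      have h1 := hmem.2
      have h2 := hmem.1
      simp only [hs0, hs1, Set.mem_setOf_eq] at h1 h2
      by_contra hne
      exact h1 ⟨h2.1, by omega⟩
    refine ⟨Fin.tail j, ?_⟩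
    show (Fin.cons 0 (Fin.tail j) : Fin (m+1+1) → ℕ) = j
    rw [← hj0]
    exact Fin.cons_self_tail j
  have hreindex := Function.Injective.tsum_eq hconsinj hsupp
  have hcons_ind : ∀ j' : Fin (m+1) → ℕ,
      ((s0 \ s1).indicator (dT a k (m+1))) (Fin.cons 0 j')
        = Set.indicator {j' : Fin (m+1) → ℕ | StrictMono j'}
            (fun j' => dT a k (m+1) (Fin.cons 0 j')) j' := by
    intro j'
    by_cases hsm : StrictMono j'
    · by_cases h0 : j' 0 = 0
      · have hns : ¬ StrictMono (Fin.cons 0 j' : Fin (m+1+1) → ℕ) := by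
          rw [consSM]; rintro ⟨-, h⟩; omega
        rw [Set.indicator_of_notMem (by
            simp only [hs0, hs1, Set.mem_diff, Set.mem_setOf_eq]
            rintro ⟨⟨h, -⟩, -⟩
            exact hns h),
          Set.indicator_of_mem (by exact hsm)]
        exact (dT_cons_zero j' h0).symm
      · have hc : StrictMono (Fin.cons 0 j' : Fin (m+1+1) → ℕ) :=
          (consSM j').mpr ⟨hsm, by omega⟩
        have hmem : (Fin.cons 0 j' : Fin (m+1+1) → ℕ) ∈ s0 \ s1 := by
          constructor
          · exact ⟨hc, Nat.zero_le _⟩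
          · intro hc1
            have := hc1.2
            simp at this
        rw [Set.indicator_of_mem hmem, Set.indicator_of_mem (by exact hsm)]
    · have hns : ¬ StrictMono (Fin.cons 0 j' : Fin (m+1+1) → ℕ) := by
        rw [consSM]; rintro ⟨h, -⟩; exact hsm h
      rw [Set.indicator_of_notMem (by
          simp only [hs0, hs1, Set.mem_diff, Set.mem_setOf_eq]
          rintro ⟨⟨h, -⟩, -⟩
          exact hns h),
        Set.indicator_of_notMem (by exact hsm)]
  set g1 : (Fin (m+1) → ℕ) → ℝ :=
    Set.indicator {j' : Fin (m+1) → ℕ | StrictMono j'}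
      (fun j' => dT a k (m+1) (Fin.cons 0 j')) with hg1def
  have hA : dC a k 0 (m+1) - dC a k 1 (m+1) = ∑' j', g1 j' :=
    calc dC a k 0 (m+1) - dC a k 1 (m+1)
        = ∑' j : Fin (m+1+1) → ℕ, ((s0 \ s1).indicator (dT a k (m+1))) j := hdiff
      _ = ∑' j' : Fin (m+1) → ℕ, ((s0 \ s1).indicator (dT a k (m+1))) (Fin.cons 0 j') :=
          hreindex.symm
      _ = ∑' j', g1 j' := tsum_congr hcons_ind
  have hg1s : Summable g1 := by
    have hcs : Summable (fun j' : Fin (m+1) → ℕ => dT a k (m+1) (Fin.cons 0 j')) :=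
      (hdTs (m+1)).comp_injective hconsinj
    exact hcs.indicator _
  have hg2s : Summable (Set.indicator {j' : Fin (m+1) → ℕ | StrictMono j'} (dT a k m)) :=
    (hdTs m).indicator _
  have hdC0m : dC a k 0 m = ∑' j',
      Set.indicator {j' : Fin (m+1) → ℕ | StrictMono j'} (dT a k m) j' := by
    rw [dC_ind 0 m]
    apply tsum_congr
    intro j
    congr 1
    ext x
    simp [Set.mem_setOf_eq]
  have hkey : ∀ j' : Fin (m+1) → ℕ,
      a 0 * g1 j' + Set.indicator {j' : Fin (m+1) → ℕ | StrictMono j'} (dT a k m) j'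
        = Set.indicator {j' : Fin (m+1) → ℕ | StrictMono j'} (cT a k (m+1)) j' := by
    intro j'
    by_cases hsm : StrictMono j'
    · rw [hg1def, Set.indicator_of_mem (by exact hsm), Set.indicator_of_mem (by exact hsm),
        Set.indicator_of_mem (by exact hsm)]
      exact ptwise ha hk0 hk1 j'
    · rw [hg1def, Set.indicator_of_notMem (by exact hsm),
        Set.indicator_of_notMem (by exact hsm), Set.indicator_of_notMem (by exact hsm)]
      ring
  have hcC : cC a k (m+1) = ∑' j' : Fin (m+1) → ℕ,
      (a 0 * g1 j' + Set.indicator {j' : Fin (m+1) → ℕ | StrictMono j'} (dT a k m) j') := by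
    rw [cC_ind (m+1)]
    exact (tsum_congr hkey).symm
  rw [hcC, Summable.tsum_add (hg1s.mul_left (a 0)) hg2s, tsum_mul_left, ← hA, ← hdC0m]

end

end St4


/-- For every `z ∈ ℂ`, `α₀ Φ₁(z) + (β₀ − z) Φ₀(z) − 𝔉(z) = 0`. -/
theorem statement4
    (a : ℕ → ℝ) (ha : ∀ n, 0 < a n) (hsum : Summable fun n => 1 / a n)
    (k : ℝ) (hk : k ∈ Set.Ioo (0 : ℝ) 1)
    (z : ℂ) :
    (alph a k 0 : ℂ) * Phi a k 1 z + ((bet a k 0 : ℂ) - z) * Phi a k 0 z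
      - Fgt a k z = 0 := by
  obtain ⟨hk0, hk1⟩ := hk
  have hs : Summable fun n => (a n)⁻¹ := by simpa [one_div] using hsum
  have hps := St4.prodSummable ha hs
  have hnnD : ∀ M (j : Fin (M+1) → ℕ), 0 ≤ St4.dT a k M j := St4.dT_nonneg ha hk0 hk1
  have hleD := St4.dT_le ha hk0 hk1
  have hnnC : ∀ M (j : Fin M → ℕ), 0 ≤ St4.cT a k M j := St4.cT_nonneg ha hk0 hk1
  have hleC := St4.cT_le ha hk0 hk1
  have hCpos : (0:ℝ) < (1 - k^2)⁻¹ := inv_pos.2 (St4.one_sub_k2_pos hk0 hk1)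
  have hmaster : Summable (fun m => ((1 - k^2)⁻¹) ^ m * St4.S a (m+1) * ‖z‖ ^ m) :=
    St4.master ha hs (St4.S_nonneg ha) (St4.S_succ_le ha hs hps) ‖z‖ (norm_nonneg z)
      ((1 - k^2)⁻¹) hCpos.le
  have hdle : ∀ n m, dC a k n m ≤ ((1 - k^2)⁻¹) ^ m * St4.S a (m+1) :=
    fun n m => St4.dC_le ha hCpos.le hps hnnD hleD n m
  have hdnn : ∀ n m, 0 ≤ dC a k n m := fun n m => St4.dC_nonneg' hnnD n m
  have hcle : ∀ m, cC a k m ≤ ((1 - k^2)⁻¹) ^ m * St4.S a m :=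
    St4.cC_le ha hps hnnC hleC
  have hcnn : ∀ m, 0 ≤ cC a k m := St4.cC_nonneg' hnnC
  have hnormd : ∀ (x : ℝ) (m : ℕ), 0 ≤ x →
      ‖(-1:ℂ)^m * (x : ℂ) * z^m‖ = x * ‖z‖^m := by
    intro x m hx
    rw [norm_mul, norm_mul, norm_pow, norm_pow, norm_neg, norm_one, one_pow, one_mul,
      Complex.norm_real, Real.norm_of_nonneg hx]
  have hW : ∀ n, Summable (fun m => (-1:ℂ)^m * (dC a k n m : ℂ) * z^m) := by
    intro n
    apply Summable.of_norm_bounded hmaster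
    intro m
    rw [hnormd _ m (hdnn n m)]
    exact mul_le_mul_of_nonneg_right (hdle n m) (pow_nonneg (norm_nonneg z) m)
  have hFs : Summable (fun m => (-1:ℂ)^(m+1) * (cC a k (m+1) : ℂ) * z^(m+1)) := by
    apply Summable.of_norm_bounded
      (g := fun m => ((1 - k^2)⁻¹ * ‖z‖) * (((1 - k^2)⁻¹) ^ m * St4.S a (m+1) * ‖z‖ ^ m))
      (hmaster.mul_left _)
    intro m
    rw [hnormd _ (m+1) (hcnn (m+1))]
    calc cC a k (m+1) * ‖z‖^(m+1)
        ≤ (((1 - k^2)⁻¹)^(m+1) * St4.S a (m+1)) * ‖z‖^(m+1) :=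
          mul_le_mul_of_nonneg_right (hcle (m+1)) (pow_nonneg (norm_nonneg z) _)
      _ = ((1 - k^2)⁻¹ * ‖z‖) * (((1 - k^2)⁻¹) ^ m * St4.S a (m+1) * ‖z‖ ^ m) := by ring
  have hK0 := St4.K0 ha hk0 hk1 hs
  have hK1 := St4.K1 ha hk0 hk1 hs
  set W0 := Wgt a k 0 z with hW0def
  set W1 := Wgt a k 1 z with hW1def
  have hsub : Summable (fun m => (-1:ℂ)^m * (dC a k 0 m : ℂ) * z^m
      - (-1:ℂ)^m * (dC a k 1 m : ℂ) * z^m) := (hW 0).sub (hW 1)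
  have e1 : W0 - W1 = ∑' m : ℕ, ((-1:ℂ)^m * (dC a k 0 m : ℂ) * z^m
      - (-1:ℂ)^m * (dC a k 1 m : ℂ) * z^m) := (Summable.tsum_sub (hW 0) (hW 1)).symm
  set h : ℕ → ℂ := fun m => (a 0 : ℂ) * ((-1:ℂ)^m * (dC a k 0 m : ℂ) * z^m
      - (-1:ℂ)^m * (dC a k 1 m : ℂ) * z^m) with hhdef
  have hhs : Summable h := hsub.mul_left _
  have e2 : (a 0 : ℂ) * (W0 - W1) = ∑' m, h m := by
    rw [e1]; exact tsum_mul_left.symm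
  have e3 : ∑' m, h m = h 0 + ∑' m, h (m+1) := Summable.tsum_eq_zero_add hhs
  have h0val : h 0 = 1 := by
    have hh0 : h 0 = ((a 0 : ℝ) : ℂ) * (((dC a k 0 0 : ℝ) : ℂ) - ((dC a k 1 0 : ℝ) : ℂ)) := by
      simp [hhdef]
    rw [hh0, ← Complex.ofReal_sub, ← Complex.ofReal_mul, hK0, Complex.ofReal_one]
  have e4 : z * W0 = ∑' m, z * ((-1:ℂ)^m * (dC a k 0 m : ℂ) * z^m) := tsum_mul_left.symm
  have hzs : Summable (fun m => z * ((-1:ℂ)^m * (dC a k 0 m : ℂ) * z^m)) := (hW 0).mul_left z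
  have hh1s : Summable (fun m => h (m+1)) := (summable_nat_add_iff 1).2 hhs
  have e5 : (a 0 : ℂ) * (W0 - W1) - z * W0
      = 1 + ∑' m, (h (m+1) - z * ((-1:ℂ)^m * (dC a k 0 m : ℂ) * z^m)) := by
    calc (a 0 : ℂ) * (W0 - W1) - z * W0
        = (h 0 + ∑' m, h (m+1)) - ∑' m, z * ((-1:ℂ)^m * (dC a k 0 m : ℂ) * z^m) := by
          rw [e2, e3, e4]
      _ = 1 + (∑' m, h (m+1) - ∑' m, z * ((-1:ℂ)^m * (dC a k 0 m : ℂ) * z^m)) := by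
          rw [h0val]; ring
      _ = 1 + ∑' m, (h (m+1) - z * ((-1:ℂ)^m * (dC a k 0 m : ℂ) * z^m)) := by
          rw [Summable.tsum_sub hh1s hzs]
  have e6 : ∀ m : ℕ, h (m+1) - z * ((-1:ℂ)^m * (dC a k 0 m : ℂ) * z^m)
      = (-1:ℂ)^(m+1) * (cC a k (m+1) : ℂ) * z^(m+1) := by
    intro m
    have hcCC : ((cC a k (m+1) : ℝ) : ℂ)
        = (a 0 : ℂ) * (((dC a k 0 (m+1) : ℝ) : ℂ) - ((dC a k 1 (m+1) : ℝ) : ℂ))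
          + ((dC a k 0 m : ℝ) : ℂ) := by
      rw [← hK1 m]; push_cast; ring
    rw [hhdef, hcCC]; ring
  have e7 : (a 0 : ℂ) * (W0 - W1) - z * W0 = Fgt a k z := by
    rw [e5, tsum_congr e6]; rfl
  have hkC : (k:ℂ) ≠ 0 := Complex.ofReal_ne_zero.mpr hk0.ne'
  rw [← e7]
  simp only [alph, bet, Phi, pow_one, pow_zero, inv_one, mul_one, one_mul, ← hW0def, ← hW1def]
  push_cast
  field_simp
  ring
end

section
/- The Wronskian of the sequences (P_n(z)) and (Φ_n(z)) is constant and equals 𝔉(z): for every n ≥ 0 and every z ∈ ℂ, α_n ( P_n(z) Φ_{n+1}(z) − P_{n+1}(z) Φ_n(z) ) = 𝔉(z), where Φ_n(z) = (−1)^n k^{−n} 𝔚_n(z). -/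
open scoped BigOperators

open scoped BigOperators ENNReal Classical

namespace S5

/-- recursive real term -/
noncomputable def rterm (a : ℕ → ℝ) (k : ℝ) : (m : ℕ) → ℕ → (Fin m → ℕ) → ℝ
  | 0, _, _ => 1
  | m + 1, n, j =>
      (1 - k ^ (2 * (j 0 + 1 - n))) / ((1 - k ^ 2) * a (j 0)) *
        rterm a k m (j 0 + 1) (Fin.tail j)

def condR : (m : ℕ) → ℕ → (Fin m → ℕ) → Prop
  | 0, _, _ => True
  | m + 1, n, j => n ≤ j 0 ∧ condR m (j 0 + 1) (Fin.tail j)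

noncomputable def V (a : ℕ → ℝ) (k : ℝ) (n m : ℕ) (j : Fin m → ℕ) : ℝ≥0∞ :=
  if condR m n j then ENNReal.ofReal (rterm a k m n j) else 0

noncomputable def WW (a : ℕ → ℝ) (k : ℝ) (n m : ℕ) : ℝ≥0∞ :=
  ∑' j : Fin m → ℕ, V a k n m j

noncomputable def Ghead (a : ℕ → ℝ) (k : ℝ) (n t : ℕ) : ℝ≥0∞ :=
  ENNReal.ofReal ((1 - k ^ (2 * (t + 1 - n))) / ((1 - k ^ 2) * a t))

noncomputable def bb (a : ℕ → ℝ) (k : ℝ) (t : ℕ) : ℝ≥0∞ :=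
  ENNReal.ofReal (1 / ((1 - k ^ 2) * a t))

noncomputable def Kh (a : ℕ → ℝ) (k : ℝ) (t : ℕ) : ℝ≥0∞ :=
  ENNReal.ofReal (k ^ (2 * t) / a t)

noncomputable def Sb (a : ℕ → ℝ) (k : ℝ) (n : ℕ) : ℝ≥0∞ :=
  ∑' t : ℕ, if n ≤ t then bb a k t else 0

noncomputable def DD (a : ℕ → ℝ) (k : ℝ) (n m : ℕ) : ℝ≥0∞ :=
  ∑' t : ℕ, if n ≤ t then Kh a k t * WW a k (t + 1) m else 0

noncomputable def Eser (a : ℕ → ℝ) (k : ℝ) (p : ℕ) (z : ℂ) : ℕ → ℂ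
  | 0 => 0
  | m + 1 => (-1 : ℂ) ^ m * (dC a k p m : ℂ) * z ^ (m + 1)

noncomputable def Gser (a : ℕ → ℝ) (k : ℝ) (z : ℂ) : ℕ → ℂ
  | 0 => 1
  | m + 1 => (-1 : ℂ) ^ (m + 1) * (cC a k (m + 1) : ℂ) * z ^ (m + 1)

section basic
variable {a : ℕ → ℝ} {k : ℝ}

lemma rterm_nonneg (ha : ∀ n, 0 < a n) (hk0 : 0 ≤ k) (hk1 : k ≤ 1) :
    ∀ m n (j : Fin m → ℕ), 0 ≤ rterm a k m n j := by
  intro m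
  induction m with
  | zero => intro n j; simp [rterm]
  | succ m ih =>
    intro n j
    refine mul_nonneg (div_nonneg ?_ ?_) (ih _ _)
    · have : k ^ (2 * (j 0 + 1 - n)) ≤ 1 :=
        pow_le_one₀ hk0 hk1
      linarith
    · have h2 : k ^ 2 ≤ 1 := pow_le_one₀ hk0 hk1
      have := (ha (j 0)).le
      nlinarith

lemma V_zero (n : ℕ) (j : Fin 0 → ℕ) : V a k n 0 j = 1 := by
  simp [V, condR, rterm]

lemma WW_zero (n : ℕ) : WW a k n 0 = 1 := by
  rw [WW]
  rw [tsum_eq_single (fun i => i.elim0)]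
  · exact V_zero n _
  · intro b hb
    exact absurd (funext fun i => i.elim0) hb

lemma V_succ (ha : ∀ n, 0 < a n) (hk0 : 0 ≤ k) (hk1 : k ≤ 1)
    (n m : ℕ) (j : Fin (m + 1) → ℕ) :
    V a k n (m + 1) j =
      (if n ≤ j 0 then Ghead a k n (j 0) else 0) * V a k (j 0 + 1) m (Fin.tail j) := by
  have hnn : 0 ≤ (1 - k ^ (2 * (j 0 + 1 - n))) / ((1 - k ^ 2) * a (j 0)) := by
    have : k ^ (2 * (j 0 + 1 - n)) ≤ 1 := pow_le_one₀ hk0 hk1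
    have h2 : k ^ 2 ≤ 1 := pow_le_one₀ hk0 hk1
    have := (ha (j 0)).le
    apply div_nonneg <;> nlinarith
  by_cases h1 : n ≤ j 0
  · by_cases h2 : condR m (j 0 + 1) (Fin.tail j)
    · rw [V, if_pos ⟨h1, h2⟩, if_pos h1, V, if_pos h2, rterm,
        ENNReal.ofReal_mul hnn, Ghead]
    · rw [V, if_neg (fun h => h2 h.2), V, if_neg h2, mul_zero]
  · rw [V, if_neg (fun h => h1 h.1), if_neg h1, zero_mul]

lemma tsum_split (H : ℕ → ℝ≥0∞) (n m : ℕ) :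
    (∑' j : Fin (m + 1) → ℕ,
        (if n ≤ j 0 then H (j 0) else 0) * V a k (j 0 + 1) m (Fin.tail j))
      = ∑' t : ℕ, if n ≤ t then H t * WW a k (t + 1) m else 0 := by
  rw [← (Fin.consEquiv (fun _ : Fin (m + 1) => ℕ)).tsum_eq]
  rw [ENNReal.tsum_prod']
  apply tsum_congr
  intro t
  have : ∀ g : Fin m → ℕ,
      (Fin.consEquiv (fun _ : Fin (m + 1) => ℕ)) (t, g) = Fin.cons t g := fun g => rfl
  simp only [this, Fin.cons_zero, Fin.tail_cons]
  rw [ENNReal.tsum_mul_left]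
  rw [← WW]
  split_ifs with h
  · rfl
  · simp

lemma WW_succ (ha : ∀ n, 0 < a n) (hk0 : 0 ≤ k) (hk1 : k ≤ 1) (n m : ℕ) :
    WW a k n (m + 1) = ∑' t : ℕ, if n ≤ t then Ghead a k n t * WW a k (t + 1) m else 0 := by
  rw [WW]
  rw [← tsum_split (H := Ghead a k n)]
  exact tsum_congr fun j => V_succ ha hk0 hk1 n m j

lemma head_split (f : ℕ → ℝ≥0∞) (n : ℕ) :
    (∑' t : ℕ, if n ≤ t then f t else 0)
      = f n + ∑' t : ℕ, if n + 1 ≤ t then f t else 0 := by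
  have h : ∀ t : ℕ, (if n ≤ t then f t else 0)
      = (if t = n then f t else 0) + (if n + 1 ≤ t then f t else 0) := by
    intro t
    rcases lt_trichotomy t n with h | h | h
    · rw [if_neg (by omega), if_neg (by omega), if_neg (by omega), add_zero]
    · rw [if_pos (by omega), if_pos (by omega), if_neg (by omega), add_zero]
    · rw [if_pos (by omega), if_neg (by omega), if_pos (by omega), zero_add]
  calc (∑' t : ℕ, if n ≤ t then f t else 0)
      = ∑' t : ℕ, ((if t = n then f t else 0) + (if n + 1 ≤ t then f t else 0)) :=
        tsum_congr h
    _ = (∑' t : ℕ, if t = n then f t else 0) + ∑' t : ℕ, if n + 1 ≤ t then f t else 0 :=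
        ENNReal.tsum_add
    _ = f n + ∑' t : ℕ, if n + 1 ≤ t then f t else 0 := by
        congr 1
        rw [tsum_eq_single n (fun b hb => if_neg hb), if_pos rfl]

lemma Sb_succ (n : ℕ) : Sb a k n = bb a k n + Sb a k (n + 1) := head_split _ n

lemma DD_split (n m : ℕ) :
    DD a k n m = Kh a k n * WW a k (n + 1) m + DD a k (n + 1) m := head_split _ n


-- ## bounds
lemma Ghead_le_bb (ha : ∀ n, 0 < a n) (hk0 : 0 ≤ k) (hkk : k ^ 2 < 1) (n t : ℕ) :
    Ghead a k n t ≤ bb a k t := by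
  apply ENNReal.ofReal_le_ofReal
  have hden : (0:ℝ) < (1 - k ^ 2) * a t := mul_pos (by linarith) (ha t)
  have h1 : (1 - k ^ (2 * (t + 1 - n))) ≤ 1 := by
    nlinarith [pow_nonneg hk0 (2 * (t + 1 - n))]
  exact (div_le_div_iff_of_pos_right hden).mpr h1

lemma Kh_le_bb (ha : ∀ n, 0 < a n) (hk0 : 0 ≤ k) (hk1 : k ≤ 1) (hkk : k ^ 2 < 1) (t : ℕ) :
    Kh a k t ≤ bb a k t := by
  apply ENNReal.ofReal_le_ofReal
  have h2 : (0:ℝ) < 1 - k ^ 2 := by linarith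
  rw [div_le_div_iff₀ (ha t) (mul_pos h2 (ha t))]
  have h1 : k ^ (2 * t) ≤ 1 := pow_le_one₀ hk0 hk1
  have h3 : (1:ℝ) - k ^ 2 ≤ 1 := by nlinarith [sq_nonneg k]
  have h4 : k ^ (2 * t) * (1 - k ^ 2) ≤ 1 := by nlinarith [pow_nonneg hk0 (2 * t)]
  nlinarith [(ha t).le]

lemma Sb_anti {n n' : ℕ} (h : n ≤ n') : Sb a k n' ≤ Sb a k n := by
  apply ENNReal.tsum_le_tsum
  intro t
  by_cases h' : n' ≤ t
  · rw [if_pos h', if_pos (h.trans h')]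
  · rw [if_neg h']; exact zero_le

lemma Sb_ne_top (ha : ∀ n, 0 < a n) (hsum : Summable fun n => 1 / a n)
    (hkk : 0 < 1 - k ^ 2) (n : ℕ) : Sb a k n ≠ ⊤ := by
  have hb : Summable fun t => 1 / ((1 - k ^ 2) * a t) := by
    have := hsum.mul_left (1 / (1 - k ^ 2))
    convert this using 2 with t
    · rfl
    simp only [one_div, mul_inv]
  have h1 : Sb a k n ≤ ∑' t, bb a k t := by
    apply ENNReal.tsum_le_tsum
    intro t
    split_ifs
    · exact le_rfl
    · exact zero_le
  have h2 : (∑' t, bb a k t) ≠ ⊤ := by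
    simp only [bb]
    rw [← ENNReal.ofReal_tsum_of_nonneg (fun t => div_nonneg zero_le_one (mul_pos hkk (ha t)).le) hb]
    exact ENNReal.ofReal_ne_top
  exact fun h => h2 (top_le_iff.mp (h ▸ h1))

lemma binom (y d : ℝ≥0∞) (m : ℕ) :
    ((m + 1 : ℕ) : ℝ≥0∞) * (d * y ^ m) + y ^ (m + 1) ≤ (d + y) ^ (m + 1) := by
  induction m with
  | zero => simp [add_comm]
  | succ m ih =>
    have h1 : (d + y) ^ (m + 2) = (d + y) * (d + y) ^ (m + 1) := by ring
    rw [h1]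
    calc ((m + 2 : ℕ) : ℝ≥0∞) * (d * y ^ (m + 1)) + y ^ (m + 2)
        = d * y ^ (m + 1) + y * (((m + 1 : ℕ) : ℝ≥0∞) * (d * y ^ m) + y ^ (m + 1)) := by
          push_cast; ring
      _ ≤ d * (((m + 1 : ℕ) : ℝ≥0∞) * (d * y ^ m) + y ^ (m + 1))
            + y * (((m + 1 : ℕ) : ℝ≥0∞) * (d * y ^ m) + y ^ (m + 1)) := by
          gcongr
          exact le_add_self
      _ = (d + y) * (((m + 1 : ℕ) : ℝ≥0∞) * (d * y ^ m) + y ^ (m + 1)) := by ring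
      _ ≤ (d + y) * (d + y) ^ (m + 1) := mul_le_mul_right ih _

-- ## telescoping and factorial bounds

lemma telescope_aux (n m : ℕ) : ∀ N : ℕ,
    (∑ t ∈ Finset.range N,
        if n ≤ t then ((m + 1 : ℕ) : ℝ≥0∞) * (bb a k t * Sb a k (t + 1) ^ m) else 0)
      + Sb a k (max n N) ^ (m + 1) ≤ Sb a k n ^ (m + 1) := by
  intro N
  induction N with
  | zero =>
    rw [Finset.sum_range_zero, zero_add, Nat.max_eq_left (Nat.zero_le n)]
  | succ N ih =>
    rw [Finset.sum_range_succ]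
    by_cases h : n ≤ N
    · rw [if_pos h, Nat.max_eq_right (by omega : n ≤ N + 1)]
      have hb : ((m + 1 : ℕ) : ℝ≥0∞) * (bb a k N * Sb a k (N + 1) ^ m)
          + Sb a k (N + 1) ^ (m + 1) ≤ Sb a k N ^ (m + 1) := by
        have hB := binom (Sb a k (N + 1)) (bb a k N) m
        rw [← Sb_succ] at hB
        exact hB
      calc (∑ t ∈ Finset.range N,
              if n ≤ t then ((m + 1 : ℕ) : ℝ≥0∞) * (bb a k t * Sb a k (t + 1) ^ m) else 0)
            + ((m + 1 : ℕ) : ℝ≥0∞) * (bb a k N * Sb a k (N + 1) ^ m)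
            + Sb a k (N + 1) ^ (m + 1)
          = (∑ t ∈ Finset.range N,
              if n ≤ t then ((m + 1 : ℕ) : ℝ≥0∞) * (bb a k t * Sb a k (t + 1) ^ m) else 0)
            + (((m + 1 : ℕ) : ℝ≥0∞) * (bb a k N * Sb a k (N + 1) ^ m)
              + Sb a k (N + 1) ^ (m + 1)) := by rw [add_assoc]
        _ ≤ (∑ t ∈ Finset.range N,
              if n ≤ t then ((m + 1 : ℕ) : ℝ≥0∞) * (bb a k t * Sb a k (t + 1) ^ m) else 0)
            + Sb a k N ^ (m + 1) := add_le_add_right hb _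
        _ ≤ Sb a k n ^ (m + 1) := by
            rw [Nat.max_eq_right h] at ih; exact ih
    · rw [if_neg h, add_zero]
      have : max n (N + 1) = max n N := by omega
      rw [this]; exact ih

lemma telescope (n m : ℕ) :
    (∑' t : ℕ, if n ≤ t then ((m + 1 : ℕ) : ℝ≥0∞) * (bb a k t * Sb a k (t + 1) ^ m) else 0)
      ≤ Sb a k n ^ (m + 1) := by
  rw [ENNReal.tsum_eq_iSup_sum]
  apply iSup_le
  intro s
  obtain ⟨N, hN⟩ := s.exists_nat_subset_range
  refine le_trans (Finset.sum_le_sum_of_subset hN) ?_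
  exact le_trans le_self_add (telescope_aux n m N)

lemma WW_bound (ha : ∀ n, 0 < a n) (hk0 : 0 ≤ k) (hk1 : k ≤ 1) (hkk : k ^ 2 < 1) :
    ∀ m n, WW a k n m * (Nat.factorial m : ℝ≥0∞) ≤ Sb a k n ^ m := by
  intro m
  induction m with
  | zero => intro n; simp [WW_zero]
  | succ m ih =>
    intro n
    rw [WW_succ ha hk0 hk1, ← ENNReal.tsum_mul_right]
    refine le_trans (ENNReal.tsum_le_tsum fun t => ?_) (telescope n m)
    split_ifs with h
    · rw [Nat.factorial_succ, Nat.cast_mul]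
      calc Ghead a k n t * WW a k (t + 1) m * (((m + 1 : ℕ) : ℝ≥0∞) * (Nat.factorial m : ℝ≥0∞))
          = ((m + 1 : ℕ) : ℝ≥0∞) * (Ghead a k n t * (WW a k (t + 1) m * (Nat.factorial m : ℝ≥0∞))) := by
            ring
        _ ≤ ((m + 1 : ℕ) : ℝ≥0∞) * (bb a k t * Sb a k (t + 1) ^ m) :=
            mul_le_mul_right (mul_le_mul' (Ghead_le_bb ha hk0 hkk n t) (ih (t + 1))) _
    · simp

lemma DD_bound (ha : ∀ n, 0 < a n) (hk0 : 0 ≤ k) (hk1 : k ≤ 1) (hkk : k ^ 2 < 1) (n m : ℕ) :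
    DD a k n m * (Nat.factorial (m + 1) : ℝ≥0∞) ≤ Sb a k n ^ (m + 1) := by
  rw [DD, ← ENNReal.tsum_mul_right]
  refine le_trans (ENNReal.tsum_le_tsum fun t => ?_) (telescope n m)
  split_ifs with h
  · rw [Nat.factorial_succ, Nat.cast_mul]
    calc Kh a k t * WW a k (t + 1) m * (((m + 1 : ℕ) : ℝ≥0∞) * (Nat.factorial m : ℝ≥0∞))
        = ((m + 1 : ℕ) : ℝ≥0∞) * (Kh a k t * (WW a k (t + 1) m * (Nat.factorial m : ℝ≥0∞))) := by
          ring
      _ ≤ ((m + 1 : ℕ) : ℝ≥0∞) * (bb a k t * Sb a k (t + 1) ^ m) :=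
          mul_le_mul_right (mul_le_mul' (Kh_le_bb ha hk0 hk1 hkk t) (WW_bound ha hk0 hk1 hkk m (t + 1))) _
  · simp

lemma fact_ne_zero (m : ℕ) : (Nat.factorial m : ℝ≥0∞) ≠ 0 := by
  exact_mod_cast Nat.cast_ne_zero.mpr (Nat.factorial_ne_zero m)

lemma WW_ne_top (ha : ∀ n, 0 < a n) (hsum : Summable fun n => 1 / a n)
    (hk0 : 0 ≤ k) (hk1 : k ≤ 1) (hkk : k ^ 2 < 1) (n m : ℕ) : WW a k n m ≠ ⊤ := by
  intro h
  have hb := WW_bound ha hk0 hk1 hkk m n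
  rw [h, ENNReal.top_mul (fact_ne_zero m)] at hb
  exact ENNReal.pow_ne_top (Sb_ne_top ha hsum (by linarith) n) (top_le_iff.mp hb)

lemma DD_ne_top (ha : ∀ n, 0 < a n) (hsum : Summable fun n => 1 / a n)
    (hk0 : 0 ≤ k) (hk1 : k ≤ 1) (hkk : k ^ 2 < 1) (n m : ℕ) : DD a k n m ≠ ⊤ := by
  intro h
  have hb := DD_bound ha hk0 hk1 hkk n m
  rw [h, ENNReal.top_mul (fact_ne_zero (m + 1))] at hb
  exact ENNReal.pow_ne_top (Sb_ne_top ha hsum (by linarith) n) (top_le_iff.mp hb)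

-- ## the key ENNReal identity
lemma key (ha : ∀ n, 0 < a n) (hk0 : 0 ≤ k) (hk1 : k ≤ 1) (hkk : k ^ 2 < 1) (n m : ℕ) :
    ENNReal.ofReal (k ^ (2 * n)) * WW a k n (m + 1)
      = ENNReal.ofReal (k ^ (2 * n)) * WW a k (n + 1) (m + 1) + DD a k n m := by
  rw [WW_succ ha hk0 hk1, WW_succ ha hk0 hk1]
  rw [← ENNReal.tsum_mul_left, ← ENNReal.tsum_mul_left]
  rw [DD, ← ENNReal.tsum_add]
  apply tsum_congr
  intro t
  have hknn : (0:ℝ) ≤ k ^ (2 * n) := pow_nonneg hk0 _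
  have hden : (0:ℝ) < (1 - k ^ 2) * a t := mul_pos (by linarith) (ha t)
  rcases lt_trichotomy t n with h | h | h
  · rw [if_neg (by omega), if_neg (by omega), if_neg (by omega)]; simp
  · subst h
    rw [if_pos le_rfl, if_neg (by omega), if_pos le_rfl, mul_zero, zero_add]
    rw [← mul_assoc]
    congr 1
    rw [Ghead, ← ENNReal.ofReal_mul hknn, Kh]
    congr 1
    have e1 : 2 * (t + 1 - t) = 2 := by omega
    rw [e1]
    have hat : a t ≠ 0 := (ha t).ne'
    have h2 : (1:ℝ) - k ^ 2 ≠ 0 := by linarith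
    field_simp
  · obtain ⟨s, rfl⟩ : ∃ s, t = n + s + 1 := ⟨t - n - 1, by omega⟩
    rw [if_pos (by omega), if_pos (by omega), if_pos (by omega)]
    rw [← mul_assoc, ← mul_assoc, ← add_mul]
    congr 1
    rw [Ghead, Ghead, Kh, ← ENNReal.ofReal_mul hknn, ← ENNReal.ofReal_mul hknn]
    have e1 : 2 * (n + s + 1 + 1 - n) = 2 * (s + 2) := by omega
    have e2 : 2 * (n + s + 1 + 1 - (n + 1)) = 2 * (s + 1) := by omega
    rw [e1, e2]
    have hat : a (n + s + 1) ≠ 0 := (ha _).ne'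
    have h2 : (1:ℝ) - k ^ 2 ≠ 0 := by linarith
    have hp1 : k ^ (2 * (s + 1)) ≤ 1 := pow_le_one₀ hk0 hk1
    have hnn1 : (0:ℝ) ≤ k ^ (2 * n) * ((1 - k ^ (2 * (s + 1))) / ((1 - k ^ 2) * a (n + s + 1))) := by
      apply mul_nonneg hknn (div_nonneg (by linarith) hden.le)
    have hnn2 : (0:ℝ) ≤ k ^ (2 * (n + s + 1)) / a (n + s + 1) :=
      div_nonneg (pow_nonneg hk0 _) (ha _).le
    rw [← ENNReal.ofReal_add hnn1 hnn2]
    congr 1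
    field_simp
    ring

-- ## bridging to the real definitions

lemma fin_mk_zero {m : ℕ} (h : 0 < m + 1) : (⟨0, h⟩ : Fin (m + 1)) = 0 :=
  Fin.ext (by simp)

lemma condR_iff : ∀ (m n : ℕ) (j : Fin m → ℕ),
    condR m n j ↔ (StrictMono j ∧ ∀ i, n ≤ j i) := by
  intro m
  induction m with
  | zero =>
    intro n j
    constructor
    · intro _; exact ⟨fun i1 _ _ => i1.elim0, fun i => i.elim0⟩
    · intro _; trivial
  | succ m ih =>
    intro n j
    rw [condR, ih]
    constructor
    · rintro ⟨h0, hsm, hge⟩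
      constructor
      · intro i1 i2 hlt
        rcases i2 with ⟨v2, hv2⟩
        rcases i1 with ⟨v1, hv1⟩
        have hv : v1 < v2 := hlt
        cases v2 with
        | zero => omega
        | succ u2 =>
          cases v1 with
          | zero =>
            rw [fin_mk_zero hv1]
            have h1 : j 0 + 1 ≤ Fin.tail j ⟨u2, by omega⟩ := hge _
            have h2 : Fin.tail j ⟨u2, by omega⟩ = j ⟨u2 + 1, hv2⟩ := rfl
            omega
          | succ u1 =>
            have h3 : (⟨u1, by omega⟩ : Fin m) < ⟨u2, by omega⟩ := by
              simp only [Fin.mk_lt_mk]; omega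
            have h4 := hsm h3
            have h5 : Fin.tail j ⟨u1, by omega⟩ = j ⟨u1 + 1, hv1⟩ := rfl
            have h6 : Fin.tail j ⟨u2, by omega⟩ = j ⟨u2 + 1, hv2⟩ := rfl
            rw [h5, h6] at h4
            exact h4
      · rintro ⟨v, hv⟩
        cases v with
        | zero => rw [fin_mk_zero hv]; exact h0
        | succ u =>
          have h1 : j 0 + 1 ≤ Fin.tail j ⟨u, by omega⟩ := hge _
          have h2 : Fin.tail j ⟨u, by omega⟩ = j ⟨u + 1, hv⟩ := rfl
          omega
    · rintro ⟨hsm, hge⟩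
      refine ⟨hge 0, ?_, ?_⟩
      · intro i1 i2 h
        exact hsm (by rw [Fin.lt_def, Fin.val_succ, Fin.val_succ]; exact Nat.succ_lt_succ h)
      · intro i
        exact Nat.succ_le_of_lt (hsm (Fin.succ_pos i))

def prevF (n : ℕ) {m : ℕ} (j : Fin m → ℕ) (i : Fin m) : ℕ :=
  if (i : ℕ) = 0 then n
  else j ⟨(i : ℕ) - 1, Nat.lt_of_le_of_lt (Nat.sub_le _ _) i.isLt⟩ + 1

lemma prevF_zero {m : ℕ} (n : ℕ) (j : Fin (m + 1) → ℕ) : prevF n j 0 = n := by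
  simp only [prevF, Fin.val_zero]
  simp

lemma prevF_succ {m : ℕ} (n : ℕ) (j : Fin (m + 1) → ℕ) (i : Fin m) :
    prevF n j i.succ = j i.castSucc + 1 := by
  rcases i with ⟨v, hv⟩
  simp only [prevF, Fin.val_succ]
  rw [if_neg (by omega)]
  congr 1

lemma prevF_tail {m : ℕ} (j : Fin (m + 1) → ℕ) (i : Fin m) :
    prevF (j 0 + 1) (Fin.tail j) i = j i.castSucc + 1 := by
  rcases i with ⟨v, hv⟩
  cases v with
  | zero =>
    simp only [prevF]
    have h1 : Fin.castSucc (⟨0, hv⟩ : Fin m) = 0 := Fin.ext (by simp)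
    rw [h1]
    simp
  | succ u =>
    simp only [prevF]
    rw [if_neg (by omega)]
    have h1 : Fin.castSucc (⟨u + 1, hv⟩ : Fin m) = ⟨u + 1, by omega⟩ := Fin.ext (by simp)
    rw [h1]
    congr 1

lemma rterm_eq_prod : ∀ (m n : ℕ) (j : Fin m → ℕ),
    rterm a k m n j
      = ∏ i : Fin m, ((1 - k ^ (2 * (j i + 1 - prevF n j i))) / ((1 - k ^ 2) * a (j i))) := by
  intro m
  induction m with
  | zero => intro n j; simp [rterm]
  | succ m ih =>
    intro n j
    have htail : rterm a k m (j 0 + 1) (Fin.tail j)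
        = ∏ i : Fin m,
            ((1 - k ^ (2 * (j i.succ + 1 - prevF n j i.succ))) / ((1 - k ^ 2) * a (j i.succ))) := by
      rw [ih]
      refine Finset.prod_congr rfl fun i _ => ?_
      rw [prevF_tail, prevF_succ]
      rfl
    rw [rterm, htail]
    rw [show (1 - k ^ (2 * (j 0 + 1 - n))) / ((1 - k ^ 2) * a (j 0))
        = (1 - k ^ (2 * (j 0 + 1 - prevF n j 0))) / ((1 - k ^ 2) * a (j 0)) by rw [prevF_zero]]
    exact (Fin.prod_univ_succ
      (f := fun i : Fin (m + 1) =>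
        (1 - k ^ (2 * (j i + 1 - prevF n j i))) / ((1 - k ^ 2) * a (j i)))).symm

lemma prod_div_form (m : ℕ) (f g : Fin m → ℝ) (c : ℝ) :
    ∏ i : Fin m, (f i / (c * g i)) = (∏ i : Fin m, f i) / (c ^ m * ∏ i : Fin m, g i) := by
  rw [Finset.prod_div_distrib, Finset.prod_mul_distrib, Finset.prod_const]
  simp

lemma V_ne_top (n m : ℕ) (j : Fin m → ℕ) : V a k n m j ≠ ⊤ := by
  rw [V]; split_ifs
  · exact ENNReal.ofReal_ne_top
  · exact ENNReal.zero_ne_top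

lemma cC_eq (ha : ∀ n, 0 < a n) (hk0 : 0 ≤ k) (hk1 : k ≤ 1) (m : ℕ) :
    cC a k m = (WW a k 0 m).toReal := by
  have hterm : ∀ j : Fin m → ℕ,
      Set.indicator {j : Fin m → ℕ | StrictMono j}
        (fun j => gapPow k m j / ((1 - k ^ 2) ^ m * ∏ i : Fin m, a (j i))) j
        = (V a k 0 m j).toReal := by
    intro j
    by_cases hc : condR m 0 j
    · have hsm : StrictMono j := ((condR_iff m 0 j).mp hc).1
      rw [V, if_pos hc, ENNReal.toReal_ofReal (rterm_nonneg ha hk0 hk1 m 0 j),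
        Set.indicator_of_mem (by exact hsm), rterm_eq_prod, prod_div_form]
      congr 1
    · have hsm : ¬ StrictMono j := by
        intro hsm
        exact hc ((condR_iff m 0 j).mpr ⟨hsm, fun i => Nat.zero_le _⟩)
      rw [V, if_neg hc, Set.indicator_of_notMem (by exact hsm)]
      rfl
  calc cC a k m
      = ∑' (x : ↑{j : Fin m → ℕ | StrictMono j}),
          gapPow k m (x : Fin m → ℕ) / ((1 - k ^ 2) ^ m * ∏ i : Fin m, a ((x : Fin m → ℕ) i)) := rfl
    _ = ∑' j : Fin m → ℕ, Set.indicator {j : Fin m → ℕ | StrictMono j}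
          (fun j => gapPow k m j / ((1 - k ^ 2) ^ m * ∏ i : Fin m, a (j i))) j :=
        tsum_subtype {j : Fin m → ℕ | StrictMono j}
          (fun j => gapPow k m j / ((1 - k ^ 2) ^ m * ∏ i : Fin m, a (j i)))
    _ = ∑' j : Fin m → ℕ, (V a k 0 m j).toReal := tsum_congr hterm
    _ = (WW a k 0 m).toReal := by
        rw [WW, ENNReal.tsum_toReal_eq (fun j => V_ne_top _ _ _)]

lemma dterm_eq (ha : ∀ n, 0 < a n) (hkk : k ^ 2 < 1) (n m : ℕ) (j : Fin (m + 1) → ℕ) :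
    (k ^ (2 * j 0) * ∏ i : Fin m, (1 - k ^ (2 * (j i.succ - j i.castSucc)))) /
      ((1 - k ^ 2) ^ m * ∏ i : Fin (m + 1), a (j i))
    = (k ^ (2 * j 0) / a (j 0)) * rterm a k m (j 0 + 1) (Fin.tail j) := by
  have step : rterm a k m (j 0 + 1) (Fin.tail j)
      = ∏ i : Fin m, ((1 - k ^ (2 * (j i.succ - j i.castSucc))) / ((1 - k ^ 2) * a (j i.succ))) := by
    rw [rterm_eq_prod]
    refine Finset.prod_congr rfl fun i _ => ?_
    rw [prevF_tail]
    have h1 : Fin.tail j i = j i.succ := rfl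
    rw [h1, show j i.succ + 1 - (j i.castSucc + 1) = j i.succ - j i.castSucc from by omega]
  rw [step, prod_div_form, Fin.prod_univ_succ (fun i => a (j i))]
  have h2 : ((1:ℝ) - k ^ 2) ^ m ≠ 0 := pow_ne_zero _ (by nlinarith)
  have h3 : a (j 0) ≠ 0 := (ha _).ne'
  have h4 : (∏ i : Fin m, a (j i.succ)) ≠ 0 :=
    Finset.prod_ne_zero_iff.mpr fun i _ => (ha _).ne'
  rw [div_mul_div_comm, div_eq_div_iff (by positivity <;> simp) (by positivity <;> simp)]
  ring

lemma DD_eq_tsum (ha : ∀ n, 0 < a n) (hk0 : 0 ≤ k) (hk1 : k ≤ 1) (hkk : k ^ 2 < 1) (n m : ℕ) :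
    DD a k n m = ∑' j : Fin (m + 1) → ℕ,
      (if StrictMono j ∧ n ≤ j 0 then
        ENNReal.ofReal ((k ^ (2 * j 0) *
          ∏ i : Fin m, (1 - k ^ (2 * (j i.succ - j i.castSucc)))) /
          ((1 - k ^ 2) ^ m * ∏ i : Fin (m + 1), a (j i)))
      else 0) := by
  rw [DD, ← tsum_split (H := Kh a k)]
  apply tsum_congr
  intro j
  have hiff : (StrictMono j ∧ n ≤ j 0) ↔ (n ≤ j 0 ∧ condR m (j 0 + 1) (Fin.tail j)) := by
    constructor
    · rintro ⟨hsm, h0⟩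
      have := (condR_iff (m + 1) n j).mpr ⟨hsm, fun i => h0.trans (hsm.monotone (Fin.zero_le i))⟩
      rw [condR] at this
      exact this
    · rintro ⟨h0, hc⟩
      have : condR (m + 1) n j := ⟨h0, hc⟩
      exact ⟨((condR_iff (m + 1) n j).mp this).1, h0⟩
  by_cases hc : StrictMono j ∧ n ≤ j 0
  · obtain ⟨h0, hcr⟩ := hiff.mp hc
    rw [if_pos hc, if_pos h0, V, if_pos hcr, dterm_eq ha hkk n m j,
      ENNReal.ofReal_mul (div_nonneg (pow_nonneg hk0 _) (ha _).le)]
    rfl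
  · rw [if_neg hc]
    rcases Classical.em (n ≤ j 0) with h0 | h0
    · rw [if_pos h0, V, if_neg (fun h => hc (hiff.mpr ⟨h0, h⟩)), mul_zero]
    · rw [if_neg h0, zero_mul]

lemma dC_eq (ha : ∀ n, 0 < a n) (hk0 : 0 ≤ k) (hk1 : k ≤ 1) (hkk : k ^ 2 < 1) (n m : ℕ) :
    dC a k n m = (DD a k n m).toReal := by
  have hterm : ∀ j : Fin (m + 1) → ℕ,
      Set.indicator {j : Fin (m + 1) → ℕ | StrictMono j ∧ n ≤ j 0}
        (fun j => (k ^ (2 * j 0) * ∏ i : Fin m, (1 - k ^ (2 * (j i.succ - j i.castSucc)))) /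
          ((1 - k ^ 2) ^ m * ∏ i : Fin (m + 1), a (j i))) j
      = ((if StrictMono j ∧ n ≤ j 0 then
          ENNReal.ofReal ((k ^ (2 * j 0) *
            ∏ i : Fin m, (1 - k ^ (2 * (j i.succ - j i.castSucc)))) /
            ((1 - k ^ 2) ^ m * ∏ i : Fin (m + 1), a (j i)))
        else 0)).toReal := by
    intro j
    have hnn : 0 ≤ (k ^ (2 * j 0) * ∏ i : Fin m, (1 - k ^ (2 * (j i.succ - j i.castSucc)))) /
        ((1 - k ^ 2) ^ m * ∏ i : Fin (m + 1), a (j i)) := by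
      rw [dterm_eq ha hkk n m j]
      exact mul_nonneg (div_nonneg (pow_nonneg hk0 _) (ha _).le)
        (rterm_nonneg ha hk0 hk1 _ _ _)
    by_cases hc : StrictMono j ∧ n ≤ j 0
    · rw [if_pos hc, ENNReal.toReal_ofReal hnn, Set.indicator_of_mem (by exact hc)]
    · rw [if_neg hc, Set.indicator_of_notMem (by exact hc)]
      rfl
  calc dC a k n m
      = ∑' (x : ↑{j : Fin (m + 1) → ℕ | StrictMono j ∧ n ≤ j 0}),
          (k ^ (2 * (x : Fin (m + 1) → ℕ) 0) *
            ∏ i : Fin m, (1 - k ^ (2 * ((x : Fin (m + 1) → ℕ) i.succ - (x : Fin (m + 1) → ℕ) i.castSucc)))) /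
            ((1 - k ^ 2) ^ m * ∏ i : Fin (m + 1), a ((x : Fin (m + 1) → ℕ) i)) := rfl
    _ = ∑' j : Fin (m + 1) → ℕ, Set.indicator {j : Fin (m + 1) → ℕ | StrictMono j ∧ n ≤ j 0}
          (fun j => (k ^ (2 * j 0) * ∏ i : Fin m, (1 - k ^ (2 * (j i.succ - j i.castSucc)))) /
            ((1 - k ^ 2) ^ m * ∏ i : Fin (m + 1), a (j i))) j :=
        tsum_subtype {j : Fin (m + 1) → ℕ | StrictMono j ∧ n ≤ j 0}
          (fun j => (k ^ (2 * j 0) * ∏ i : Fin m, (1 - k ^ (2 * (j i.succ - j i.castSucc)))) /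
            ((1 - k ^ 2) ^ m * ∏ i : Fin (m + 1), a (j i)))
    _ = ∑' j : Fin (m + 1) → ℕ,
          ((if StrictMono j ∧ n ≤ j 0 then
            ENNReal.ofReal ((k ^ (2 * j 0) *
              ∏ i : Fin m, (1 - k ^ (2 * (j i.succ - j i.castSucc)))) /
              ((1 - k ^ 2) ^ m * ∏ i : Fin (m + 1), a (j i)))
          else 0)).toReal := tsum_congr hterm
    _ = (DD a k n m).toReal := by
        rw [DD_eq_tsum ha hk0 hk1 hkk,
          ENNReal.tsum_toReal_eq
            (fun j => by split_ifs; exacts [ENNReal.ofReal_ne_top, ENNReal.zero_ne_top])]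

-- ## real layer

lemma WW0_toReal (n : ℕ) : (WW a k n 0).toReal = 1 := by
  rw [WW_zero]; simp

lemma C1m (ha : ∀ n, 0 < a n) (hsum : Summable fun n => 1 / a n)
    (hk0 : 0 ≤ k) (hk1 : k ≤ 1) (hkk : k ^ 2 < 1) (n m : ℕ) :
    a n * dC a k n m
      = k ^ (2 * n) * (WW a k (n + 1) m).toReal + a n * dC a k (n + 1) m := by
  have hW := WW_ne_top ha hsum hk0 hk1 hkk (n + 1) m
  have hD := DD_ne_top ha hsum hk0 hk1 hkk (n + 1) m
  have hm : Kh a k n * WW a k (n + 1) m ≠ ⊤ :=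
    ENNReal.mul_ne_top (by rw [Kh]; exact ENNReal.ofReal_ne_top) hW
  rw [dC_eq ha hk0 hk1 hkk, dC_eq ha hk0 hk1 hkk, DD_split,
    ENNReal.toReal_add hm hD,
    ENNReal.toReal_mul, Kh, ENNReal.toReal_ofReal (div_nonneg (pow_nonneg hk0 _) (ha n).le)]
  field_simp [(ha n).ne']

lemma C2 (ha : ∀ n, 0 < a n) (hsum : Summable fun n => 1 / a n)
    (hk0 : 0 ≤ k) (hk1 : k ≤ 1) (hkk : k ^ 2 < 1) (n m : ℕ) :
    k ^ (2 * n) * (WW a k n (m + 1)).toReal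
      = k ^ (2 * n) * (WW a k (n + 1) (m + 1)).toReal + dC a k n m := by
  have h := congrArg ENNReal.toReal (key ha hk0 hk1 hkk n m)
  rw [ENNReal.toReal_mul,
    ENNReal.toReal_add
      (ENNReal.mul_ne_top ENNReal.ofReal_ne_top (WW_ne_top ha hsum hk0 hk1 hkk (n + 1) (m + 1)))
      (DD_ne_top ha hsum hk0 hk1 hkk n m),
    ENNReal.toReal_mul, ENNReal.toReal_ofReal (pow_nonneg hk0 _)] at h
  rw [dC_eq ha hk0 hk1 hkk]
  exact h

lemma dC_nonneg (ha : ∀ n, 0 < a n) (hk0 : 0 ≤ k) (hk1 : k ≤ 1) (hkk : k ^ 2 < 1) (n m : ℕ) :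
    0 ≤ dC a k n m := by
  rw [dC_eq ha hk0 hk1 hkk]; exact ENNReal.toReal_nonneg

lemma R1 (ha : ∀ n, 0 < a n) (hsum : Summable fun n => 1 / a n)
    (hk0 : 0 ≤ k) (hk1 : k ≤ 1) (hkk : k ^ 2 < 1) (n : ℕ) :
    a (n + 1) * dC a k (n + 2) 0 + k ^ 2 * a n * dC a k n 0
      = (a (n + 1) + k ^ 2 * a n) * dC a k (n + 1) 0 := by
  have e1 := C1m ha hsum hk0 hk1 hkk n 0
  have e2 := C1m ha hsum hk0 hk1 hkk (n + 1) 0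
  rw [WW0_toReal] at e1 e2
  linear_combination k ^ 2 * e1 - e2

lemma R2 (ha : ∀ n, 0 < a n) (hsum : Summable fun n => 1 / a n)
    (hk0 : 0 ≤ k) (hk1 : k ≤ 1) (hkk : k ^ 2 < 1) (n m : ℕ) :
    a (n + 1) * dC a k (n + 2) (m + 1) + k ^ 2 * a n * dC a k n (m + 1)
      = (a (n + 1) + k ^ 2 * a n) * dC a k (n + 1) (m + 1) + dC a k (n + 1) m := by
  have e1 := C1m ha hsum hk0 hk1 hkk n (m + 1)
  have e2 := C1m ha hsum hk0 hk1 hkk (n + 1) (m + 1)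
  have e3 := C2 ha hsum hk0 hk1 hkk (n + 1) m
  linear_combination k ^ 2 * e1 - e2 + e3

lemma B1 (ha : ∀ n, 0 < a n) (hsum : Summable fun n => 1 / a n)
    (hk0 : 0 ≤ k) (hk1 : k ≤ 1) (hkk : k ^ 2 < 1) :
    a 0 * dC a k 0 0 = 1 + a 0 * dC a k 1 0 := by
  have e1 := C1m ha hsum hk0 hk1 hkk 0 0
  rw [WW0_toReal] at e1
  linear_combination e1

lemma B2 (ha : ∀ n, 0 < a n) (hsum : Summable fun n => 1 / a n)
    (hk0 : 0 ≤ k) (hk1 : k ≤ 1) (hkk : k ^ 2 < 1) (m : ℕ) :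
    a 0 * dC a k 0 (m + 1) + dC a k 0 m = cC a k (m + 1) + a 0 * dC a k 1 (m + 1) := by
  have e1 := C1m ha hsum hk0 hk1 hkk 0 (m + 1)
  have e2 := C2 ha hsum hk0 hk1 hkk 0 m
  have e3 := cC_eq ha hk0 hk1 (m + 1)
  linear_combination e1 - e2 - e3

-- ## growth bounds in ℝ

lemma dC_le' (ha : ∀ n, 0 < a n) (hsum : Summable fun n => 1 / a n)
    (hk0 : 0 ≤ k) (hk1 : k ≤ 1) (hkk : k ^ 2 < 1) (n m : ℕ) :
    dC a k n m ≤ ((Sb a k 0).toReal + 1) ^ (m + 1) / (Nat.factorial m : ℝ) := by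
  set S : ℝ := (Sb a k 0).toReal + 1 with hS
  have hS0 : (0:ℝ) ≤ (Sb a k 0).toReal := ENNReal.toReal_nonneg
  have htop : Sb a k 0 ≠ ⊤ := Sb_ne_top ha hsum (by linarith) 0
  have h1 : DD a k n m * (Nat.factorial (m + 1) : ℝ≥0∞) ≤ Sb a k 0 ^ (m + 1) :=
    (DD_bound ha hk0 hk1 hkk n m).trans (pow_le_pow_left' (Sb_anti (Nat.zero_le n)) _)
  have h2 := ENNReal.toReal_mono (ENNReal.pow_ne_top htop) h1
  rw [ENNReal.toReal_mul, ENNReal.toReal_pow, ENNReal.toReal_natCast] at h2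
  rw [← dC_eq ha hk0 hk1 hkk] at h2
  have h3 : dC a k n m * (Nat.factorial (m + 1) : ℝ) ≤ S ^ (m + 1) :=
    h2.trans (pow_le_pow_left₀ ENNReal.toReal_nonneg (by simp [hS]) _)
  have hfm : (0:ℝ) < (Nat.factorial m : ℝ) := by exact_mod_cast Nat.factorial_pos m
  rw [le_div_iff₀ hfm]
  refine le_trans ?_ h3
  have hd0 : 0 ≤ dC a k n m := dC_nonneg ha hk0 hk1 hkk n m
  have : (Nat.factorial m : ℝ) ≤ (Nat.factorial (m + 1) : ℝ) := by
    exact_mod_cast Nat.factorial_le (Nat.le_succ m)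
  nlinarith

lemma cC_le' (ha : ∀ n, 0 < a n) (hsum : Summable fun n => 1 / a n)
    (hk0 : 0 ≤ k) (hk1 : k ≤ 1) (hkk : k ^ 2 < 1) (m : ℕ) :
    cC a k (m + 1) ≤ ((Sb a k 0).toReal + 1) ^ (m + 1) / (Nat.factorial m : ℝ) := by
  set S : ℝ := (Sb a k 0).toReal + 1 with hS
  have htop : Sb a k 0 ≠ ⊤ := Sb_ne_top ha hsum (by linarith) 0
  have h1 := WW_bound ha hk0 hk1 hkk (m + 1) 0
  have h2 := ENNReal.toReal_mono (ENNReal.pow_ne_top htop) h1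
  rw [ENNReal.toReal_mul, ENNReal.toReal_pow, ENNReal.toReal_natCast] at h2
  rw [← cC_eq ha hk0 hk1] at h2
  have h3 : cC a k (m + 1) * (Nat.factorial (m + 1) : ℝ) ≤ S ^ (m + 1) :=
    h2.trans (pow_le_pow_left₀ ENNReal.toReal_nonneg (by simp [hS]) _)
  have hfm : (0:ℝ) < (Nat.factorial m : ℝ) := by exact_mod_cast Nat.factorial_pos m
  rw [le_div_iff₀ hfm]
  refine le_trans ?_ h3
  have hc0 : 0 ≤ cC a k (m + 1) := by
    rw [cC_eq ha hk0 hk1]; exact ENNReal.toReal_nonneg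
  have : (Nat.factorial m : ℝ) ≤ (Nat.factorial (m + 1) : ℝ) := by
    exact_mod_cast Nat.factorial_le (Nat.le_succ m)
  nlinarith

-- ## complex layer

lemma summable_aux (C q : ℝ) (u : ℕ → ℂ)
    (h : ∀ m, ‖u m‖ ≤ C * q ^ m / (Nat.factorial m : ℝ)) : Summable u := by
  refine Summable.of_norm_bounded ?_ h
  simpa [mul_div_assoc] using (Real.summable_pow_div_factorial q).mul_left C

lemma norm_A (ha : ∀ n, 0 < a n) (hk0 : 0 ≤ k) (hk1 : k ≤ 1) (hkk : k ^ 2 < 1)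
    (p m : ℕ) (z : ℂ) :
    ‖(-1 : ℂ) ^ m * (dC a k p m : ℂ) * z ^ m‖ = dC a k p m * ‖z‖ ^ m := by
  rw [norm_mul, norm_mul, norm_pow, norm_pow]
  simp [Complex.norm_real, abs_of_nonneg (dC_nonneg ha hk0 hk1 hkk p m)]

lemma summable_A (ha : ∀ n, 0 < a n) (hsum : Summable fun n => 1 / a n)
    (hk0 : 0 ≤ k) (hk1 : k ≤ 1) (hkk : k ^ 2 < 1) (p : ℕ) (z : ℂ) :
    Summable (fun m => (-1 : ℂ) ^ m * (dC a k p m : ℂ) * z ^ m) := by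
  set S : ℝ := (Sb a k 0).toReal + 1 with hS
  have hS1 : (0:ℝ) ≤ S := by have := ENNReal.toReal_nonneg (a := Sb a k 0); simp [hS]; linarith
  apply summable_aux (S * 1) (S * ‖z‖)
  intro m
  rw [norm_A ha hk0 hk1 hkk]
  have h1 := dC_le' ha hsum hk0 hk1 hkk p m
  have h2 : dC a k p m * ‖z‖ ^ m ≤ (S ^ (m + 1) / (Nat.factorial m : ℝ)) * ‖z‖ ^ m :=
    mul_le_mul_of_nonneg_right h1 (pow_nonneg (norm_nonneg z) m)
  refine h2.trans (le_of_eq ?_)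
  rw [mul_pow]
  ring

lemma summable_B (ha : ∀ n, 0 < a n) (hsum : Summable fun n => 1 / a n)
    (hk0 : 0 ≤ k) (hk1 : k ≤ 1) (hkk : k ^ 2 < 1) (p : ℕ) (z : ℂ) :
    Summable (fun m => (-1 : ℂ) ^ m * (dC a k p m : ℂ) * z ^ (m + 1)) := by
  have h := (summable_A ha hsum hk0 hk1 hkk p z).mul_left z
  refine h.congr fun m => ?_
  ring

lemma zWgt (ha : ∀ n, 0 < a n) (hsum : Summable fun n => 1 / a n)
    (hk0 : 0 ≤ k) (hk1 : k ≤ 1) (hkk : k ^ 2 < 1) (p : ℕ) (z : ℂ) :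
    z * Wgt a k p z = ∑' m : ℕ, Eser a k p z m := by
  rw [Wgt, ← tsum_mul_left]
  have h2 : (∑' m : ℕ, Eser a k p z m)
        = Eser a k p z 0 + ∑' m : ℕ, (-1 : ℂ) ^ m * (dC a k p m : ℂ) * z ^ (m + 1) := by
    rw [tsum_eq_zero_add' (by exact summable_B ha hsum hk0 hk1 hkk p z)]
    congr 1
  rw [h2, Eser, zero_add]
  apply tsum_congr
  intro m
  ring

lemma wgt_rec (ha : ∀ n, 0 < a n) (hsum : Summable fun n => 1 / a n)
    (hk0 : 0 ≤ k) (hk1 : k ≤ 1) (hkk : k ^ 2 < 1) (n : ℕ) (z : ℂ) :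
    (a (n + 1) : ℂ) * Wgt a k (n + 2) z + z * Wgt a k (n + 1) z
        + (k : ℂ) ^ 2 * (a n : ℂ) * Wgt a k n z
      = ((a (n + 1) : ℂ) + (k : ℂ) ^ 2 * (a n : ℂ)) * Wgt a k (n + 1) z := by
  have hA2 := summable_A ha hsum hk0 hk1 hkk (n + 2) z
  have hA0 := summable_A ha hsum hk0 hk1 hkk n z
  have hA1 := summable_A ha hsum hk0 hk1 hkk (n + 1) z
  have hE : Summable (Eser a k (n + 1) z) := by
    refine (summable_nat_add_iff 1).mp ?_
    exact (summable_B ha hsum hk0 hk1 hkk (n + 1) z).congr fun m => rfl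
  rw [zWgt ha hsum hk0 hk1 hkk (n + 1) z]
  rw [Wgt, Wgt, Wgt, ← tsum_mul_left, ← tsum_mul_left, ← tsum_mul_left,
    ← Summable.tsum_add (hA2.mul_left _) hE,
    ← Summable.tsum_add ((hA2.mul_left _).add hE) (hA0.mul_left _)]
  apply tsum_congr
  intro m
  cases m with
  | zero =>
    have hr := R1 ha hsum hk0 hk1 hkk n
    have hrc : ((a (n + 1) * dC a k (n + 2) 0 + k ^ 2 * a n * dC a k n 0 : ℝ) : ℂ)
        = (((a (n + 1) + k ^ 2 * a n) * dC a k (n + 1) 0 : ℝ) : ℂ) := by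
      exact_mod_cast congrArg Complex.ofReal hr
    push_cast at hrc
    simp only [Eser]
    push_cast
    linear_combination hrc
  | succ m =>
    have hr := R2 ha hsum hk0 hk1 hkk n m
    have hrc : ((a (n + 1) * dC a k (n + 2) (m + 1) + k ^ 2 * a n * dC a k n (m + 1) : ℝ) : ℂ)
        = (((a (n + 1) + k ^ 2 * a n) * dC a k (n + 1) (m + 1) + dC a k (n + 1) m : ℝ) : ℂ) := by
      exact_mod_cast congrArg Complex.ofReal hr
    push_cast at hrc
    simp only [Eser]
    push_cast
    linear_combination (-1 : ℂ) ^ (m + 1) * z ^ (m + 1) * hrc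

lemma summable_G (ha : ∀ n, 0 < a n) (hsum : Summable fun n => 1 / a n)
    (hk0 : 0 ≤ k) (hk1 : k ≤ 1) (hkk : k ^ 2 < 1) (z : ℂ) :
    Summable (fun m => (-1 : ℂ) ^ (m + 1) * (cC a k (m + 1) : ℂ) * z ^ (m + 1)) := by
  set S : ℝ := (Sb a k 0).toReal + 1 with hS
  apply summable_aux (S * ‖z‖) (S * ‖z‖)
  intro m
  have hnn : 0 ≤ cC a k (m + 1) := by
    rw [cC_eq ha hk0 hk1]; exact ENNReal.toReal_nonneg
  have h0 : ‖(-1 : ℂ) ^ (m + 1) * (cC a k (m + 1) : ℂ) * z ^ (m + 1)‖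
      = cC a k (m + 1) * ‖z‖ ^ (m + 1) := by
    rw [norm_mul, norm_mul, norm_pow, norm_pow]
    simp [Complex.norm_real, abs_of_nonneg hnn]
  rw [h0]
  have h1 := cC_le' ha hsum hk0 hk1 hkk m
  have h2 : cC a k (m + 1) * ‖z‖ ^ (m + 1)
      ≤ (S ^ (m + 1) / (Nat.factorial m : ℝ)) * ‖z‖ ^ (m + 1) :=
    mul_le_mul_of_nonneg_right h1 (pow_nonneg (norm_nonneg z) _)
  refine h2.trans (le_of_eq ?_)
  rw [mul_pow]
  ring

lemma wgt_base (ha : ∀ n, 0 < a n) (hsum : Summable fun n => 1 / a n)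
    (hk0 : 0 ≤ k) (hk1 : k ≤ 1) (hkk : k ^ 2 < 1) (z : ℂ) :
    (a 0 : ℂ) * Wgt a k 0 z
      = Fgt a k z + (a 0 : ℂ) * Wgt a k 1 z + z * Wgt a k 0 z := by
  have hA0 := summable_A ha hsum hk0 hk1 hkk 0 z
  have hA1 := summable_A ha hsum hk0 hk1 hkk 1 z
  have hGs := summable_G ha hsum hk0 hk1 hkk z
  have hG : Summable (Gser a k z) := by
    refine (summable_nat_add_iff 1).mp ?_
    exact hGs.congr fun m => rfl
  have hE : Summable (Eser a k 0 z) := by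
    refine (summable_nat_add_iff 1).mp ?_
    exact (summable_B ha hsum hk0 hk1 hkk 0 z).congr fun m => rfl
  have hFgt : Fgt a k z = ∑' m : ℕ, Gser a k z m := by
    rw [Fgt, tsum_eq_zero_add'
      (by exact hGs.congr fun m => rfl : Summable fun m => Gser a k z (m + 1))]
    rw [Gser]
    congr 1
  rw [hFgt, zWgt ha hsum hk0 hk1 hkk 0 z]
  rw [Wgt, Wgt, ← tsum_mul_left, ← tsum_mul_left,
    ← Summable.tsum_add hG (hA1.mul_left _),
    ← Summable.tsum_add (hG.add (hA1.mul_left _)) hE]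
  apply tsum_congr
  intro m
  cases m with
  | zero =>
    have hr := B1 ha hsum hk0 hk1 hkk
    have hrc : ((a 0 * dC a k 0 0 : ℝ) : ℂ) = ((1 + a 0 * dC a k 1 0 : ℝ) : ℂ) := by
      exact_mod_cast congrArg Complex.ofReal hr
    push_cast at hrc
    simp only [Eser, Gser]
    push_cast
    linear_combination hrc
  | succ m =>
    have hr := B2 ha hsum hk0 hk1 hkk m
    have hrc : ((a 0 * dC a k 0 (m + 1) + dC a k 0 m : ℝ) : ℂ)
        = ((cC a k (m + 1) + a 0 * dC a k 1 (m + 1) : ℝ) : ℂ) := by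
      exact_mod_cast congrArg Complex.ofReal hr
    push_cast at hrc
    simp only [Eser, Gser]
    push_cast
    linear_combination (-1 : ℂ) ^ (m + 1) * z ^ (m + 1) * hrc

end basic
end S5

/-- The Wronskian of `(P_n(z))` and `(Φ_n(z))` is the constant `𝔉(z)`:
`α_n (P_n(z) Φ_{n+1}(z) − P_{n+1}(z) Φ_n(z)) = 𝔉(z)` for all `n ≥ 0`, `z ∈ ℂ`. -/
theorem statement5
    (a : ℕ → ℝ) (ha : ∀ n, 0 < a n) (hsum : Summable fun n => 1 / a n)
    (k : ℝ) (hk : k ∈ Set.Ioo (0 : ℝ) 1)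
    (P : ℕ → ℂ → ℂ)
    (hP0 : ∀ z, P 0 z = 1)
    (hP1 : ∀ z, (alph a k 0 : ℂ) * P 1 z + ((bet a k 0 : ℂ) - z) * P 0 z = 0)
    (hPrec : ∀ n, 1 ≤ n → ∀ z,
      (alph a k n : ℂ) * P (n + 1) z + ((bet a k n : ℂ) - z) * P n z
        + (alph a k (n - 1) : ℂ) * P (n - 1) z = 0)
    (n : ℕ) (z : ℂ) :
    (alph a k n : ℂ) * (P n z * Phi a k (n + 1) z - P (n + 1) z * Phi a k n z)
      = Fgt a k z := by
  obtain ⟨hk0', hk1'⟩ := hk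
  have hk0 : (0:ℝ) ≤ k := hk0'.le
  have hk1 : k ≤ 1 := hk1'.le
  have hkk : k ^ 2 < 1 := by nlinarith
  have hkc : (k : ℂ) ≠ 0 := by exact_mod_cast hk0'.ne'
  have h3 : (k : ℂ) * (k : ℂ)⁻¹ = 1 := mul_inv_cancel₀ hkc
  have hPhiRec : ∀ n : ℕ,
      (alph a k (n + 1) : ℂ) * Phi a k (n + 2) z
        + ((bet a k (n + 1) : ℂ) - z) * Phi a k (n + 1) z
        + (alph a k n : ℂ) * Phi a k n z = 0 := by
    intro n
    have hw := S5.wgt_rec ha hsum hk0 hk1 hkk n z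
    have hbr : (a (n + 1) : ℂ) * Wgt a k (n + 2) z
        - ((a (n + 1) : ℂ) + (k : ℂ) ^ 2 * (a n : ℂ) - z) * Wgt a k (n + 1) z
        + (k : ℂ) ^ 2 * (a n : ℂ) * Wgt a k n z = 0 := by linear_combination hw
    simp only [Phi, alph, bet]
    push_cast
    rw [← inv_pow, ← inv_pow, ← inv_pow]
    linear_combination ((-1 : ℂ) ^ n * ((k : ℂ)⁻¹) ^ (n + 1)) * hbr
      + ((-1 : ℂ) ^ n * (a (n + 1) : ℂ) * Wgt a k (n + 2) z * ((k : ℂ)⁻¹) ^ (n + 1)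
        - (-1 : ℂ) ^ n * (a n : ℂ) * Wgt a k n z * (k : ℂ) * ((k : ℂ)⁻¹) ^ n) * h3
  induction n with
  | zero =>
    have hb := S5.wgt_base ha hsum hk0 hk1 hkk z
    have hp := hP1 z
    rw [hP0 z] at hp
    rw [hP0 z]
    simp only [alph, bet] at hp ⊢
    simp only [Phi]
    push_cast at hp ⊢
    linear_combination hb - Wgt a k 0 z * hp - (a 0 : ℂ) * Wgt a k 1 z * h3
  | succ n ih =>
    have hp := hPrec (n + 1) (by omega) z
    simp only [Nat.add_sub_cancel] at hp
    have hph := hPhiRec n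
    linear_combination ih - Phi a k (n + 1) z * hp + P (n + 1) z * hph
end

section
/- If λ ∈ ℂ satisfies 𝔉(λ) = 0, then the sequences (P_n(λ)) and (Φ_n(λ)) are proportional: for every n ≥ 0, Φ_n(λ) = 𝔚(λ) · P_n(λ), where Φ_n(z) = (−1)^n k^{−n} 𝔚_n(z) and 𝔚 = 𝔚_0. -/
open scoped BigOperators

namespace St6

/-- Index type: strictly monotone `m`-tuples with all entries `≥ n`. -/
def Idx (n m : ℕ) : Type := {j : Fin m → ℕ // StrictMono j ∧ ∀ i, n ≤ j i}

instance (n : ℕ) : Unique (Idx n 0) where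
  default := ⟨fun i => i.elim0, by
    refine ⟨fun x => x.elim0, fun i => i.elim0⟩⟩
  uniq x := Subtype.ext (funext fun i => i.elim0)

instance (n : ℕ) : Fintype (Idx n 0) := Fintype.ofSubsingleton default

/-- Recursive weight: `wH k a m p j` with offset `p` (gaps measured from `p-1`). -/
noncomputable def wH (a : ℕ → ℝ) (k : ℝ) : (m : ℕ) → ℕ → (Fin m → ℕ) → ℝ
  | 0, _, _ => 1
  | m + 1, p, j => (1 - k ^ 2 * k ^ (2 * (j 0 - p))) / ((1 - k ^ 2) * a (j 0)) *
      wH a k m (j 0 + 1) (Fin.tail j)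

/-- Head–tail decomposition of `Idx n (m+1)`. -/
def htEquiv (n m : ℕ) : Idx n (m + 1) ≃ (t : ℕ) × Idx (n + t + 1) m where
  toFun j := ⟨j.1 0 - n,
    ⟨Fin.tail j.1, by
      constructor
      · intro x y hxy
        exact j.2.1 (by simpa using (Fin.succ_lt_succ_iff).2 hxy)
      · intro i
        have h0 : n + (j.1 0 - n) = j.1 0 := Nat.add_sub_cancel' (j.2.2 0)
        have : j.1 0 < j.1 i.succ := j.2.1 (Fin.succ_pos i)
        simpa [Fin.tail, h0] using this⟩⟩
  invFun x := ⟨Fin.cons (n + x.1) x.2.1, by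
    obtain ⟨t, j', hsm, hge⟩ := x
    constructor
    · intro u v huv
      induction u using Fin.cases with
      | zero =>
          induction v using Fin.cases with
          | zero => exact absurd huv (lt_irrefl _)
          | succ v' =>
              have h1 : n + t < j' v' :=
                lt_of_lt_of_le (Nat.lt_succ_self (n + t)) (hge v')
              simpa using h1
      | succ u' =>
          induction v using Fin.cases with
          | zero => exact absurd huv (by simp [Fin.lt_iff_val_lt_val])
          | succ v' =>
              have h1 : u' < v' := by
                simpa [Fin.succ_lt_succ_iff] using huv
              simpa using hsm h1
    · intro i
      induction i using Fin.cases with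
      | zero => simp
      | succ i' => simpa using le_trans (by omega) (hge i')⟩
  left_inv := by
    rintro ⟨j, hsm, hge⟩
    apply Subtype.ext
    have h0 : n + (j 0 - n) = j 0 := Nat.add_sub_cancel' (hge 0)
    simp only [h0]
    exact Fin.cons_self_tail j
  right_inv := by
    rintro ⟨t, j', hj⟩
    have ht : (Fin.cons (n + t) j' : Fin (m + 1) → ℕ) 0 - n = t := by simp
    refine Sigma.ext ht ?_
    refine (Subtype.heq_iff_coe_eq ?_).2 ?_
    · intro x; simp [ht]
    · simp [Fin.tail_cons]

section Analysis

variable {a : ℕ → ℝ} {k : ℝ}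

/-- Tail sums of `1/a`. -/
noncomputable def Rt (a : ℕ → ℝ) (n : ℕ) : ℝ := ∑' t, (a (n + t))⁻¹

lemma sumR (hs : Summable fun n => (a n)⁻¹) (n : ℕ) :
    Summable fun t => (a (n + t))⁻¹ := by
  have := (summable_nat_add_iff (f := fun n => (a n)⁻¹) n).2 hs
  simpa [add_comm] using this

lemma Rt_succ (hs : Summable fun n => (a n)⁻¹) (n : ℕ) :
    Rt a n = (a n)⁻¹ + Rt a (n + 1) := by
  have h := Summable.tsum_eq_zero_add (sumR hs n)
  simpa [Rt, add_assoc, add_comm 1] using h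

lemma Rt_nonneg (ha : ∀ n, 0 < a n) (n : ℕ) : 0 ≤ Rt a n :=
  tsum_nonneg fun t => (inv_nonneg).2 (ha _).le

lemma Rt_antitone (ha : ∀ n, 0 < a n) (hs : Summable fun n => (a n)⁻¹) :
    Antitone (Rt a) := by
  apply antitone_nat_of_succ_le
  intro n
  rw [Rt_succ hs n]
  have := (inv_nonneg).2 (ha n).le
  linarith

lemma pow_gap {x y : ℝ} (hy : 0 ≤ y) (hxy : y ≤ x) (m : ℕ) :
    ((m : ℝ) + 1) * ((x - y) * y ^ m) ≤ x ^ (m + 1) - y ^ (m + 1) := by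
  induction m with
  | zero => simp
  | succ m ih =>
      have hx : 0 ≤ x := le_trans hy hxy
      have hyx : y ^ m * y ≤ x ^ m * x := by
        apply mul_le_mul (pow_le_pow_left₀ hy hxy m) hxy hy (pow_nonneg hx m)
      have h1 : x * (x ^ (m+1) - y ^ (m+1)) + (x - y) * y ^ (m+1)
          = x ^ (m+2) - y ^ (m+2) := by ring
      have h2 : x * (((m : ℝ) + 1) * ((x - y) * y ^ m)) ≤ x * (x ^ (m+1) - y ^ (m+1)) := by
        apply mul_le_mul_of_nonneg_left ih hx
      have h3 : y * (((m : ℝ) + 1) * ((x - y) * y ^ m)) ≤ x * (((m : ℝ) + 1) * ((x - y) * y ^ m)) := by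
        apply mul_le_mul_of_nonneg_right hxy
        have := sub_nonneg.2 hxy
        positivity
      have h4 : y * (((m : ℝ) + 1) * ((x - y) * y ^ m)) = ((m : ℝ) + 1) * ((x - y) * y ^ (m + 1)) := by
        ring
      push_cast
      linarith

lemma tel_summable (ha : ∀ n, 0 < a n) (hs : Summable fun n => (a n)⁻¹) (m p : ℕ) :
    Summable fun t => (a (p + t))⁻¹ * Rt a (p + t + 1) ^ m := by
  apply Summable.of_nonneg_of_le
    (fun t => mul_nonneg ((inv_nonneg).2 (ha _).le) (pow_nonneg (Rt_nonneg ha _) m))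
    (fun t => ?_) ((sumR hs p).mul_right (Rt a 0 ^ m))
  have h1 : Rt a (p + t + 1) ≤ Rt a 0 := Rt_antitone ha hs (Nat.zero_le _)
  exact mul_le_mul_of_nonneg_left
    (pow_le_pow_left₀ (Rt_nonneg ha _) h1 m) ((inv_nonneg).2 (ha _).le)

lemma tel_bound (ha : ∀ n, 0 < a n) (hs : Summable fun n => (a n)⁻¹) (m p : ℕ) :
    ((m : ℝ) + 1) * ∑' t, (a (p + t))⁻¹ * Rt a (p + t + 1) ^ m ≤ Rt a p ^ (m + 1) := by
  rw [← tsum_mul_left]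
  apply Summable.tsum_le_of_sum_range_le (((tel_summable ha hs m p)).mul_left _)
  intro N
  have key : ∀ t, ((m : ℝ) + 1) * ((a (p + t))⁻¹ * Rt a (p + t + 1) ^ m)
      ≤ Rt a (p + t) ^ (m + 1) - Rt a (p + t + 1) ^ (m + 1) := by
    intro t
    have hxy : Rt a (p + t + 1) ≤ Rt a (p + t) := Rt_antitone ha hs (Nat.le_succ _)
    have hsub : Rt a (p + t) - Rt a (p + t + 1) = (a (p + t))⁻¹ := by
      rw [Rt_succ hs (p + t)]; ring
    have := pow_gap (Rt_nonneg ha (p + t + 1)) hxy m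
    rw [hsub] at this
    linarith
  calc ∑ t ∈ Finset.range N, ((m : ℝ) + 1) * ((a (p + t))⁻¹ * Rt a (p + t + 1) ^ m)
      ≤ ∑ t ∈ Finset.range N, (Rt a (p + t) ^ (m + 1) - Rt a (p + t + 1) ^ (m + 1)) :=
        Finset.sum_le_sum fun t _ => key t
    _ = Rt a p ^ (m + 1) - Rt a (p + N) ^ (m + 1) := by
        have := Finset.sum_range_sub' (fun t => Rt a (p + t) ^ (m + 1)) N
        simpa [add_assoc] using this
    _ ≤ Rt a p ^ (m + 1) := by
        have : 0 ≤ Rt a (p + N) ^ (m + 1) := pow_nonneg (Rt_nonneg ha _) _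
        linarith

end Analysis


section Core

open Nat

variable {a : ℕ → ℝ} {k : ℝ}

noncomputable def Hs (a : ℕ → ℝ) (k : ℝ) (p m : ℕ) : ℝ :=
  ∑' j : Idx p m, wH a k m p j.1

lemma wH_nonneg (ha : ∀ n, 0 < a n) (hk0 : 0 < k) (hk1 : k < 1) :
    ∀ m p (j : Fin m → ℕ), 0 ≤ wH a k m p j := by
  intro m
  induction m with
  | zero => intro p j; rw [wH]; norm_num
  | succ m ih =>
      intro p j
      rw [wH]
      have hnum : 0 ≤ 1 - k ^ 2 * k ^ (2 * (j 0 - p)) := by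
        have h1 : k ^ 2 * k ^ (2 * (j 0 - p)) ≤ 1 := by
          rw [← pow_add]
          exact pow_le_one₀ hk0.le hk1.le
        linarith
      have hden : 0 < (1 - k ^ 2) * a (j 0) := by
        have : k ^ 2 < 1 := by nlinarith
        have := ha (j 0)
        nlinarith
      exact mul_nonneg (div_nonneg hnum hden.le) (ih _ _)

lemma Hs_nonneg (ha : ∀ n, 0 < a n) (hk0 : 0 < k) (hk1 : k < 1) (p m : ℕ) :
    0 ≤ Hs a k p m :=
  tsum_nonneg fun j => wH_nonneg ha hk0 hk1 m p j.1

/-- Head–tail decomposition of a tsum over `Idx n (m+1)`. -/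
lemma HT_core (ha : ∀ n, 0 < a n) (hk0 : 0 < k) (hk1 : k < 1) (m n : ℕ) (f : ℕ → ℝ)
    (hf0 : ∀ h, 0 ≤ f h)
    (hsum_m : ∀ p, Summable fun j : Idx p m => wH a k m p j.1)
    (hfs : Summable fun t => f (n + t))
    (C : ℝ) (hC : ∀ q, Hs a k q m ≤ C) :
    Summable (fun j : Idx n (m + 1) => f (j.1 0) * wH a k m (j.1 0 + 1) (Fin.tail j.1))
    ∧ (∑' j : Idx n (m + 1), f (j.1 0) * wH a k m (j.1 0 + 1) (Fin.tail j.1))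
        = (∑' t : ℕ, f (n + t) * Hs a k (n + t + 1) m)
    ∧ Summable fun t : ℕ => f (n + t) * Hs a k (n + t + 1) m := by
  have hHnn : ∀ q, 0 ≤ Hs a k q m := fun q => Hs_nonneg ha hk0 hk1 q m
  have hiii : Summable fun t : ℕ => f (n + t) * Hs a k (n + t + 1) m := by
    apply Summable.of_nonneg_of_le (fun t => mul_nonneg (hf0 _) (hHnn _))
      (fun t => mul_le_mul_of_nonneg_left (hC _) (hf0 _)) (hfs.mul_right C)
  set g : ((t : ℕ) × Idx (n + t + 1) m) → ℝ :=
    fun x => f (n + x.1) * wH a k m (n + x.1 + 1) x.2.1 with hg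
  have hgE : ∀ j : Idx n (m + 1),
      g (htEquiv n m j) = f (j.1 0) * wH a k m (j.1 0 + 1) (Fin.tail j.1) := by
    intro j
    have h0 : n + (j.1 0 - n) = j.1 0 := Nat.add_sub_cancel' (j.2.2 0)
    show f (n + (j.1 0 - n)) * wH a k m (n + (j.1 0 - n) + 1) (Fin.tail j.1) = _
    rw [h0]
  have hfib : ∀ t : ℕ, (∑' y : Idx (n + t + 1) m, g ⟨t, y⟩)
      = f (n + t) * Hs a k (n + t + 1) m := by
    intro t
    simp only [hg, Hs]
    exact tsum_mul_left
  have hg0 : ∀ x, 0 ≤ g x := fun x => mul_nonneg (hf0 _) (wH_nonneg ha hk0 hk1 _ _ _)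
  have hgsum : Summable g := by
    refine (summable_sigma_of_nonneg hg0).2 ⟨fun t => ?_, ?_⟩
    · simpa only [hg] using (hsum_m (n + t + 1)).mul_left (f (n + t))
    · refine Summable.congr hiii fun t => ?_
      exact (hfib t).symm
  have hFg : (fun j : Idx n (m + 1) => f (j.1 0) * wH a k m (j.1 0 + 1) (Fin.tail j.1))
      = fun j => g (htEquiv n m j) := by
    funext j; exact (hgE j).symm
  refine ⟨?_, ?_, hiii⟩
  · rw [hFg]
    exact ((htEquiv n m).summable_iff).2 hgsum
  · rw [hFg]
    rw [(htEquiv n m).tsum_eq g, Summable.tsum_sigma hgsum]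
    exact tsum_congr hfib

lemma fp_nonneg (ha : ∀ n, 0 < a n) (hk0 : 0 < k) (hk1 : k < 1) (p h : ℕ) :
    0 ≤ (1 - k ^ 2 * k ^ (2 * (h - p))) / ((1 - k ^ 2) * a h) := by
  have h1 : k ^ 2 * k ^ (2 * (h - p)) ≤ 1 := by
    rw [← pow_add]; exact pow_le_one₀ hk0.le hk1.le
  have hden : 0 < (1 - k ^ 2) * a h := by
    have : k ^ 2 < 1 := by nlinarith
    have := ha h
    nlinarith
  exact div_nonneg (by linarith) hden.le

lemma fp_le (ha : ∀ n, 0 < a n) (hk0 : 0 < k) (hk1 : k < 1) (p h : ℕ) :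
    (1 - k ^ 2 * k ^ (2 * (h - p))) / ((1 - k ^ 2) * a h) ≤ (1 - k ^ 2)⁻¹ * (a h)⁻¹ := by
  have hk2 : 0 < 1 - k ^ 2 := by nlinarith
  have hden : 0 < (1 - k ^ 2) * a h := mul_pos hk2 (ha h)
  have h1 : 0 ≤ k ^ 2 * k ^ (2 * (h - p)) := by positivity
  calc (1 - k ^ 2 * k ^ (2 * (h - p))) / ((1 - k ^ 2) * a h)
      ≤ 1 / ((1 - k ^ 2) * a h) := by
        gcongr
        linarith
    _ = (1 - k ^ 2)⁻¹ * (a h)⁻¹ := by rw [one_div, mul_inv]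

lemma main_ind (ha : ∀ n, 0 < a n) (hs : Summable fun n => (a n)⁻¹)
    (hk0 : 0 < k) (hk1 : k < 1) :
    ∀ m, (∀ p, Summable fun j : Idx p m => wH a k m p j.1) ∧
      (∀ p, Hs a k p m ≤ Rt a p ^ m / ((1 - k ^ 2) ^ m * (m ! : ℝ))) := by
  have hk2 : 0 < 1 - k ^ 2 := by nlinarith
  intro m
  induction m with
  | zero =>
      constructor
      · intro p
        exact Summable.of_finite
      · intro p
        have h1 : Hs a k p 0 = 1 := by
          rw [Hs, tsum_fintype]
          simp [wH]
        rw [h1]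
        norm_num
  | succ m ih =>
      obtain ⟨ihS, ihB⟩ := ih
      have hfactpos : (0 : ℝ) < (m ! : ℝ) := by exact_mod_cast Nat.factorial_pos m
      have hCb : ∀ q, Hs a k q m ≤ Rt a 0 ^ m / ((1 - k ^ 2) ^ m * (m ! : ℝ)) := by
        intro q
        refine le_trans (ihB q) ?_
        gcongr
        · exact Rt_nonneg ha q
        · exact Rt_antitone ha hs (Nat.zero_le q)
      have key : ∀ p, Summable (fun j : Idx p (m + 1) =>
            ((1 - k ^ 2 * k ^ (2 * (j.1 0 - p))) / ((1 - k ^ 2) * a (j.1 0))) *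
              wH a k m (j.1 0 + 1) (Fin.tail j.1))
          ∧ (∑' j : Idx p (m + 1),
              ((1 - k ^ 2 * k ^ (2 * (j.1 0 - p))) / ((1 - k ^ 2) * a (j.1 0))) *
                wH a k m (j.1 0 + 1) (Fin.tail j.1))
            = (∑' t : ℕ, ((1 - k ^ 2 * k ^ (2 * ((p + t) - p))) / ((1 - k ^ 2) * a (p + t))) *
                Hs a k (p + t + 1) m)
          ∧ Summable fun t : ℕ =>
              ((1 - k ^ 2 * k ^ (2 * ((p + t) - p))) / ((1 - k ^ 2) * a (p + t))) *
                Hs a k (p + t + 1) m := by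
        intro p
        apply HT_core ha hk0 hk1 m p
          (fun h => (1 - k ^ 2 * k ^ (2 * (h - p))) / ((1 - k ^ 2) * a h))
          (fun h => fp_nonneg ha hk0 hk1 p h) ihS ?_ _ hCb
        apply Summable.of_nonneg_of_le (fun t => fp_nonneg ha hk0 hk1 p (p + t))
          (fun t => fp_le ha hk0 hk1 p (p + t)) ((sumR hs p).mul_left _)
      have hfun : ∀ p, (fun j : Idx p (m + 1) => wH a k (m + 1) p j.1)
          = fun j : Idx p (m + 1) =>
              ((1 - k ^ 2 * k ^ (2 * (j.1 0 - p))) / ((1 - k ^ 2) * a (j.1 0))) *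
                wH a k m (j.1 0 + 1) (Fin.tail j.1) := by
        intro p; funext j; rw [wH]
      constructor
      · intro p
        rw [hfun p]
        exact (key p).1
      · intro p
        have hrec : Hs a k p (m + 1)
            = ∑' t : ℕ, ((1 - k ^ 2 * k ^ (2 * ((p + t) - p))) / ((1 - k ^ 2) * a (p + t))) *
                Hs a k (p + t + 1) m := by
          rw [Hs, hfun p]
          exact (key p).2.1
        rw [hrec]
        have hstep : ∀ t : ℕ,
            ((1 - k ^ 2 * k ^ (2 * ((p + t) - p))) / ((1 - k ^ 2) * a (p + t))) *
                Hs a k (p + t + 1) m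
              ≤ ((1 - k ^ 2)⁻¹ * ((1 - k ^ 2) ^ m * (m ! : ℝ))⁻¹) *
                  ((a (p + t))⁻¹ * Rt a (p + t + 1) ^ m) := by
          intro t
          have h1 := mul_le_mul (fp_le ha hk0 hk1 p (p + t))
            (by rw [← div_eq_mul_inv]; exact ihB (p + t + 1) :
              Hs a k (p + t + 1) m ≤ Rt a (p + t + 1) ^ m * ((1 - k ^ 2) ^ m * (m ! : ℝ))⁻¹)
            (Hs_nonneg ha hk0 hk1 _ _)
            (mul_nonneg (inv_nonneg.2 hk2.le) (inv_nonneg.2 (ha _).le))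
          refine le_trans h1 (le_of_eq ?_)
          ring
        have htel : (∑' t : ℕ, (a (p + t))⁻¹ * Rt a (p + t + 1) ^ m)
            ≤ Rt a p ^ (m + 1) / ((m : ℝ) + 1) := by
          rw [le_div_iff₀ (by positivity)]
          have := tel_bound ha hs m p
          linarith
        calc (∑' t : ℕ, ((1 - k ^ 2 * k ^ (2 * ((p + t) - p))) / ((1 - k ^ 2) * a (p + t))) *
                Hs a k (p + t + 1) m)
            ≤ ∑' t : ℕ, ((1 - k ^ 2)⁻¹ * ((1 - k ^ 2) ^ m * (m ! : ℝ))⁻¹) *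
                ((a (p + t))⁻¹ * Rt a (p + t + 1) ^ m) :=
              Summable.tsum_le_tsum hstep (key p).2.2 ((tel_summable ha hs m p).mul_left _)
          _ = ((1 - k ^ 2)⁻¹ * ((1 - k ^ 2) ^ m * (m ! : ℝ))⁻¹) *
                ∑' t : ℕ, (a (p + t))⁻¹ * Rt a (p + t + 1) ^ m := tsum_mul_left
          _ ≤ ((1 - k ^ 2)⁻¹ * ((1 - k ^ 2) ^ m * (m ! : ℝ))⁻¹) *
                (Rt a p ^ (m + 1) / ((m : ℝ) + 1)) :=
              mul_le_mul_of_nonneg_left htel (by positivity)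
          _ = Rt a p ^ (m + 1) / ((1 - k ^ 2) ^ (m + 1) * ((m + 1)! : ℝ)) := by
              rw [Nat.factorial_succ, pow_succ]
              push_cast
              field_simp
              ring

lemma Hs_glob (ha : ∀ n, 0 < a n) (hs : Summable fun n => (a n)⁻¹)
    (hk0 : 0 < k) (hk1 : k < 1) (q m : ℕ) :
    Hs a k q m ≤ Rt a 0 ^ m / ((1 - k ^ 2) ^ m * (m.factorial : ℝ)) := by
  have hk2 : 0 < 1 - k ^ 2 := by nlinarith
  have hfact : (0 : ℝ) < (m.factorial : ℝ) := by exact_mod_cast Nat.factorial_pos m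
  refine le_trans ((main_ind ha hs hk0 hk1 m).2 q) ?_
  gcongr
  · exact Rt_nonneg ha q
  · exact Rt_antitone ha hs (Nat.zero_le q)

lemma Hs_zero (p : ℕ) : Hs a k p 0 = 1 := by
  rw [Hs, tsum_fintype]
  simp [wH]

noncomputable def Ds (a : ℕ → ℝ) (k : ℝ) (n m : ℕ) : ℝ :=
  ∑' j : Idx n (m + 1), k ^ (2 * j.1 0) * (a (j.1 0))⁻¹ * wH a k m (j.1 0 + 1) (Fin.tail j.1)

lemma Ds_facts (ha : ∀ n, 0 < a n) (hs : Summable fun n => (a n)⁻¹)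
    (hk0 : 0 < k) (hk1 : k < 1) (n m : ℕ) :
    (Summable fun j : Idx n (m + 1) =>
        k ^ (2 * j.1 0) * (a (j.1 0))⁻¹ * wH a k m (j.1 0 + 1) (Fin.tail j.1))
    ∧ Ds a k n m = (∑' t : ℕ, k ^ (2 * (n + t)) * (a (n + t))⁻¹ * Hs a k (n + t + 1) m)
    ∧ Summable fun t : ℕ => k ^ (2 * (n + t)) * (a (n + t))⁻¹ * Hs a k (n + t + 1) m := by
  have h := HT_core ha hk0 hk1 m n (fun h => k ^ (2 * h) * (a h)⁻¹)
    (fun h => mul_nonneg (pow_nonneg hk0.le _) (inv_nonneg.2 (ha _).le))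
    (main_ind ha hs hk0 hk1 m).1
    (Summable.of_nonneg_of_le
      (fun t => mul_nonneg (pow_nonneg hk0.le _) (inv_nonneg.2 (ha _).le))
      (fun t => by
        have h1 : k ^ (2 * (n + t)) ≤ 1 := pow_le_one₀ hk0.le hk1.le
        have h2 : 0 ≤ (a (n + t))⁻¹ := inv_nonneg.2 (ha _).le
        nlinarith)
      (sumR hs n))
    (Rt a 0 ^ m / ((1 - k ^ 2) ^ m * (m.factorial : ℝ)))
    (fun q => Hs_glob ha hs hk0 hk1 q m)
  exact ⟨h.1, h.2.1, h.2.2⟩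

lemma Hs_facts (ha : ∀ n, 0 < a n) (hs : Summable fun n => (a n)⁻¹)
    (hk0 : 0 < k) (hk1 : k < 1) (p m : ℕ) :
    Hs a k p (m + 1)
      = (∑' t : ℕ, (1 - k ^ 2 * k ^ (2 * t)) / ((1 - k ^ 2) * a (p + t)) * Hs a k (p + t + 1) m)
    ∧ Summable fun t : ℕ =>
        (1 - k ^ 2 * k ^ (2 * t)) / ((1 - k ^ 2) * a (p + t)) * Hs a k (p + t + 1) m := by
  have h := HT_core ha hk0 hk1 m p
    (fun h => (1 - k ^ 2 * k ^ (2 * (h - p))) / ((1 - k ^ 2) * a h))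
    (fun h => fp_nonneg ha hk0 hk1 p h)
    (main_ind ha hs hk0 hk1 m).1
    (Summable.of_nonneg_of_le (fun t => fp_nonneg ha hk0 hk1 p (p + t))
      (fun t => fp_le ha hk0 hk1 p (p + t)) ((sumR hs p).mul_left _))
    (Rt a 0 ^ m / ((1 - k ^ 2) ^ m * (m.factorial : ℝ)))
    (fun q => Hs_glob ha hs hk0 hk1 q m)
  have hcongr : ∀ t : ℕ,
      (1 - k ^ 2 * k ^ (2 * ((p + t) - p))) / ((1 - k ^ 2) * a (p + t)) * Hs a k (p + t + 1) m
      = (1 - k ^ 2 * k ^ (2 * t)) / ((1 - k ^ 2) * a (p + t)) * Hs a k (p + t + 1) m := by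
    intro t
    rw [Nat.add_sub_cancel_left]
  constructor
  · have h1 : Hs a k p (m + 1) = ∑' j : Idx p (m + 1),
        (1 - k ^ 2 * k ^ (2 * (j.1 0 - p))) / ((1 - k ^ 2) * a (j.1 0)) *
          wH a k m (j.1 0 + 1) (Fin.tail j.1) := by
      rw [Hs]
      exact tsum_congr fun j => by rw [wH]
    rw [h1, h.2.1]
    exact tsum_congr hcongr
  · exact Summable.congr h.2.2 hcongr

/-- Restriction identity (R). -/
lemma R_id (ha : ∀ n, 0 < a n) (hs : Summable fun n => (a n)⁻¹)
    (hk0 : 0 < k) (hk1 : k < 1) (n m : ℕ) :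
    a n * (Ds a k n m - Ds a k (n + 1) m) = k ^ (2 * n) * Hs a k (n + 1) m := by
  have h0 := Ds_facts ha hs hk0 hk1 n m
  have h1 := Ds_facts ha hs hk0 hk1 (n + 1) m
  have hsplit : Ds a k n m
      = k ^ (2 * n) * (a n)⁻¹ * Hs a k (n + 1) m + Ds a k (n + 1) m := by
    rw [h0.2.1, h1.2.1]
    rw [Summable.tsum_eq_zero_add h0.2.2]
    simp only [Nat.add_zero]
    congr 1
    apply tsum_congr
    intro t
    have e1 : n + (t + 1) = n + 1 + t := by omega
    rw [e1]
  rw [hsplit]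
  have hane := (ha n).ne'
  field_simp
  ring

/-- Splitting identity (M). -/
lemma M_id (ha : ∀ n, 0 < a n) (hs : Summable fun n => (a n)⁻¹)
    (hk0 : 0 < k) (hk1 : k < 1) (p m : ℕ) :
    k ^ (2 * p) * Hs a k p (m + 1)
      = k ^ (2 * p) * (a p)⁻¹ * Hs a k (p + 1) m
        + k ^ (2 * p) * Hs a k (p + 1) (m + 1) + Ds a k (p + 1) m := by
  have hk2 : 0 < 1 - k ^ 2 := by nlinarith
  have hrec := Hs_facts ha hs hk0 hk1 p m
  have hrec1 := Hs_facts ha hs hk0 hk1 (p + 1) m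
  have hD := Ds_facts ha hs hk0 hk1 (p + 1) m
  -- A' and B' families
  set A : ℕ → ℝ := fun t => k ^ (2 * p) *
    ((1 - k ^ 2 * k ^ (2 * t)) / ((1 - k ^ 2) * a (p + 1 + t)) * Hs a k (p + 1 + t + 1) m) with hA
  set B : ℕ → ℝ := fun t =>
    k ^ (2 * (p + 1 + t)) * (a (p + 1 + t))⁻¹ * Hs a k (p + 1 + t + 1) m with hB
  have hAsum : Summable A := hrec1.2.mul_left _
  have hBsum : Summable B := hD.2.2
  have hterm : ∀ t : ℕ,
      k ^ (2 * p) * ((1 - k ^ 2 * k ^ (2 * (t + 1))) / ((1 - k ^ 2) * a (p + (t + 1))) *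
        Hs a k (p + (t + 1) + 1) m) = A t + B t := by
    intro t
    have e1 : p + (t + 1) = p + 1 + t := by omega
    rw [e1, hA, hB]
    have hane := (ha (p + 1 + t)).ne'
    field_simp
    ring
  calc k ^ (2 * p) * Hs a k p (m + 1)
      = ∑' t : ℕ, k ^ (2 * p) *
          ((1 - k ^ 2 * k ^ (2 * t)) / ((1 - k ^ 2) * a (p + t)) * Hs a k (p + t + 1) m) := by
        rw [hrec.1, tsum_mul_left]
    _ = k ^ (2 * p) * ((1 - k ^ 2 * k ^ (2 * 0)) / ((1 - k ^ 2) * a (p + 0)) * Hs a k (p + 0 + 1) m)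
        + ∑' t : ℕ, k ^ (2 * p) *
          ((1 - k ^ 2 * k ^ (2 * (t + 1))) / ((1 - k ^ 2) * a (p + (t + 1))) *
            Hs a k (p + (t + 1) + 1) m) :=
        Summable.tsum_eq_zero_add (hrec.2.mul_left _)
    _ = k ^ (2 * p) * (a p)⁻¹ * Hs a k (p + 1) m + (∑' t, A t + ∑' t, B t) := by
        rw [tsum_congr hterm, Summable.tsum_add hAsum hBsum]
        congr 1
        have hane := (ha p).ne'
        simp only [Nat.add_zero, Nat.mul_zero, pow_zero, mul_one]
        field_simp
    _ = k ^ (2 * p) * (a p)⁻¹ * Hs a k (p + 1) m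
        + k ^ (2 * p) * Hs a k (p + 1) (m + 1) + Ds a k (p + 1) m := by
      rw [hA, hB]
      rw [tsum_mul_left, ← hrec1.1, ← hD.2.1]
      ring

end Core

section Corresp

variable {a : ℕ → ℝ} {k : ℝ}

lemma tailSM {m : ℕ} {j : Fin (m + 1) → ℕ} (hsm : StrictMono j) :
    StrictMono (Fin.tail j) := fun x y hxy => hsm (by simpa using Fin.succ_lt_succ_iff.2 hxy)

lemma tailGE {m : ℕ} {j : Fin (m + 1) → ℕ} (hsm : StrictMono j) :
    ∀ i, j 0 + 1 ≤ Fin.tail j i := fun i => hsm (Fin.succ_pos i)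

noncomputable def gp (k : ℝ) (m p : ℕ) (j : Fin m → ℕ) : ℝ :=
  ∏ i : Fin m,
    (1 - k ^ (2 * (j i + 1 -
      (if (i : ℕ) = 0 then p
       else j ⟨(i : ℕ) - 1, Nat.lt_of_le_of_lt (Nat.sub_le _ _) i.isLt⟩ + 1))))

lemma gp_zero (m : ℕ) (j : Fin m → ℕ) : gp k m 0 j = gapPow k m j := rfl

lemma gp_succ (m p : ℕ) (j : Fin (m + 1) → ℕ) :
    gp k (m + 1) p j = (1 - k ^ (2 * (j 0 + 1 - p))) * gp k m (j 0 + 1) (Fin.tail j) := by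
  rw [gp, gp, Fin.prod_univ_succ]
  refine congrArg₂ (· * ·) (by simp) (Finset.prod_congr rfl fun i _ => ?_)
  have h1 : ¬(((i.succ : Fin (m + 1)) : ℕ) = 0) := by simp
  rw [if_neg h1]
  by_cases h : (i : ℕ) = 0
  · rw [if_pos h]
    have e1 : (⟨((i.succ : Fin (m + 1)) : ℕ) - 1,
        Nat.lt_of_le_of_lt (Nat.sub_le _ _) i.succ.isLt⟩ : Fin (m + 1)) = 0 := by
      apply Fin.ext
      simp [h]
    rw [e1]
    rfl
  · rw [if_neg h]
    have e1 : (⟨((i.succ : Fin (m + 1)) : ℕ) - 1,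
        Nat.lt_of_le_of_lt (Nat.sub_le _ _) i.succ.isLt⟩ : Fin (m + 1))
        = (⟨(i : ℕ) - 1, Nat.lt_of_le_of_lt (Nat.sub_le _ _) i.isLt⟩ : Fin m).succ := by
      apply Fin.ext
      simp
      omega
    rw [e1]
    rfl

lemma wH_eq (ha : ∀ n, 0 < a n) (hk0 : 0 < k) (hk1 : k < 1) :
    ∀ m p (j : Fin m → ℕ), StrictMono j → (∀ i, p ≤ j i) →
      wH a k m p j = gp k m p j / ((1 - k ^ 2) ^ m * ∏ i, a (j i)) := by
  have hk2 : (0:ℝ) < 1 - k ^ 2 := by nlinarith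
  intro m
  induction m with
  | zero =>
      intro p j _ _
      rw [wH, gp]
      simp
  | succ m ih =>
      intro p j hsm hge
      rw [wH, gp_succ, ih (j 0 + 1) (Fin.tail j) (tailSM hsm) (tailGE hsm),
        Fin.prod_univ_succ (fun i => a (j i))]
      have hexp : k ^ (2 * (j 0 + 1 - p)) = k ^ 2 * k ^ (2 * (j 0 - p)) := by
        rw [← pow_add]
        congr 1
        have := hge 0
        omega
      rw [hexp]
      have e2 : (∏ i : Fin m, a (Fin.tail j i)) = ∏ i : Fin m, a (j i.succ) := rfl
      rw [e2]
      have hne1 : (1 - k ^ 2) ≠ 0 := hk2.ne'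
      have hne2 : a (j 0) ≠ 0 := (ha _).ne'
      have hc := div_mul_div_comm (1 - k ^ 2 * k ^ (2 * (j 0 - p))) ((1 - k ^ 2) * a (j 0))
        (gp k m (j 0 + 1) (Fin.tail j)) ((1 - k ^ 2) ^ m * ∏ i : Fin m, a (j i.succ))
      rw [hc]
      congr 1
      rw [pow_succ]
      ring

lemma gp_tail {m : ℕ} (j : Fin (m + 1) → ℕ) :
    gp k m (j 0 + 1) (Fin.tail j)
      = ∏ i : Fin m, (1 - k ^ (2 * (j i.succ - j i.castSucc))) := by
  rw [gp]
  apply Finset.prod_congr rfl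
  intro i _
  by_cases h : (i : ℕ) = 0
  · rw [if_pos h]
    have e2 : j i.castSucc = j 0 := by
      congr 1
      apply Fin.ext
      simp [h]
    show (1 : ℝ) - k ^ (2 * (j i.succ + 1 - (j 0 + 1))) = 1 - k ^ (2 * (j i.succ - j i.castSucc))
    rw [e2, Nat.succ_sub_succ]
  · rw [if_neg h]
    have e1 : (⟨(i : ℕ) - 1, Nat.lt_of_le_of_lt (Nat.sub_le _ _) i.isLt⟩ : Fin m).succ
        = i.castSucc := by
      apply Fin.ext
      simp
      omega
    show (1 : ℝ) - k ^ (2 * (j i.succ + 1 -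
        (j (⟨(i : ℕ) - 1, Nat.lt_of_le_of_lt (Nat.sub_le _ _) i.isLt⟩ : Fin m).succ + 1)))
      = 1 - k ^ (2 * (j i.succ - j i.castSucc))
    rw [e1, Nat.succ_sub_succ]

lemma cC_eq (ha : ∀ n, 0 < a n) (hk0 : 0 < k) (hk1 : k < 1) (m : ℕ) :
    cC a k m = Hs a k 0 m := by
  let E : Idx 0 m ≃ {j : Fin m → ℕ // StrictMono j} :=
    Equiv.subtypeEquivRight fun j => ⟨fun h => h.1, fun h => ⟨h, fun i => Nat.zero_le _⟩⟩
  rw [cC, Hs, ← Equiv.tsum_eq E (fun x : {j : Fin m → ℕ // StrictMono j} =>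
    gapPow k m x.1 / ((1 - k ^ 2) ^ m * ∏ i : Fin m, a (x.1 i)))]
  apply tsum_congr
  intro c
  show gapPow k m c.1 / ((1 - k ^ 2) ^ m * ∏ i : Fin m, a (c.1 i)) = wH a k m 0 c.1
  rw [wH_eq ha hk0 hk1 m 0 c.1 c.2.1 c.2.2, gp_zero]

lemma dC_eq (ha : ∀ n, 0 < a n) (hk0 : 0 < k) (hk1 : k < 1) (n m : ℕ) :
    dC a k n m = Ds a k n m := by
  have hk2 : (0:ℝ) < 1 - k ^ 2 := by nlinarith
  let E : Idx n (m + 1) ≃ {j : Fin (m + 1) → ℕ // StrictMono j ∧ n ≤ j 0} :=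
    Equiv.subtypeEquivRight fun j =>
      ⟨fun h => ⟨h.1, h.2 0⟩,
       fun h => ⟨h.1, fun i => le_trans h.2 (h.1.monotone (Fin.zero_le i))⟩⟩
  rw [dC, Ds, ← Equiv.tsum_eq E (fun x : {j : Fin (m + 1) → ℕ // StrictMono j ∧ n ≤ j 0} =>
    (k ^ (2 * x.1 0) * ∏ i : Fin m, (1 - k ^ (2 * (x.1 i.succ - x.1 i.castSucc)))) /
      ((1 - k ^ 2) ^ m * ∏ i : Fin (m + 1), a (x.1 i)))]
  apply tsum_congr
  intro j
  show (k ^ (2 * j.1 0) * ∏ i : Fin m, (1 - k ^ (2 * (j.1 i.succ - j.1 i.castSucc)))) /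
      ((1 - k ^ 2) ^ m * ∏ i : Fin (m + 1), a (j.1 i))
    = k ^ (2 * j.1 0) * (a (j.1 0))⁻¹ * wH a k m (j.1 0 + 1) (Fin.tail j.1)
  rw [wH_eq ha hk0 hk1 m (j.1 0 + 1) (Fin.tail j.1) (tailSM j.2.1) (tailGE j.2.1),
    gp_tail, Fin.prod_univ_succ (fun i => a (j.1 i))]
  have e2 : (∏ i : Fin m, a (Fin.tail j.1 i)) = ∏ i : Fin m, a (j.1 i.succ) := rfl
  rw [e2]
  ring

end Corresp

section Ids

variable {a : ℕ → ℝ} {k : ℝ}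

lemma Ds_nonneg (ha : ∀ n, 0 < a n) (hk0 : 0 < k) (hk1 : k < 1) (n m : ℕ) :
    0 ≤ Ds a k n m :=
  tsum_nonneg fun j => mul_nonneg
    (mul_nonneg (pow_nonneg hk0.le _) (inv_nonneg.2 (ha _).le))
    (wH_nonneg ha hk0 hk1 _ _ _)

lemma Ds_glob (ha : ∀ n, 0 < a n) (hs : Summable fun n => (a n)⁻¹)
    (hk0 : 0 < k) (hk1 : k < 1) (n m : ℕ) :
    Ds a k n m ≤ Rt a 0 * (Rt a 0 ^ m / ((1 - k ^ 2) ^ m * (m.factorial : ℝ))) := by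
  have hk2 : (0:ℝ) < 1 - k ^ 2 := by nlinarith
  have hfact : (0:ℝ) < (m.factorial : ℝ) := by exact_mod_cast Nat.factorial_pos m
  have hCnn : 0 ≤ Rt a 0 ^ m / ((1 - k ^ 2) ^ m * (m.factorial : ℝ)) := by
    apply div_nonneg (pow_nonneg (Rt_nonneg ha 0) m)
    positivity
  rw [(Ds_facts ha hs hk0 hk1 n m).2.1]
  calc (∑' t : ℕ, k ^ (2 * (n + t)) * (a (n + t))⁻¹ * Hs a k (n + t + 1) m)
      ≤ ∑' t : ℕ, (a (n + t))⁻¹ * (Rt a 0 ^ m / ((1 - k ^ 2) ^ m * (m.factorial : ℝ))) := by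
        refine Summable.tsum_le_tsum (fun t => ?_) (Ds_facts ha hs hk0 hk1 n m).2.2
          ((sumR hs n).mul_right _)
        have h3 : k ^ (2 * (n + t)) * (a (n + t))⁻¹ ≤ (a (n + t))⁻¹ := by
          have h1 : k ^ (2 * (n + t)) ≤ 1 := pow_le_one₀ hk0.le hk1.le
          have hb : 0 ≤ (a (n + t))⁻¹ := inv_nonneg.2 (ha _).le
          nlinarith
        exact mul_le_mul h3 (Hs_glob ha hs hk0 hk1 _ m) (Hs_nonneg ha hk0 hk1 _ _)
          (inv_nonneg.2 (ha _).le)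
    _ = Rt a n * (Rt a 0 ^ m / ((1 - k ^ 2) ^ m * (m.factorial : ℝ))) := tsum_mul_right
    _ ≤ Rt a 0 * (Rt a 0 ^ m / ((1 - k ^ 2) ^ m * (m.factorial : ℝ))) :=
        mul_le_mul_of_nonneg_right (Rt_antitone ha hs (Nat.zero_le n)) hCnn

lemma A_id0 (ha : ∀ n, 0 < a n) (hs : Summable fun n => (a n)⁻¹)
    (hk0 : 0 < k) (hk1 : k < 1) (n : ℕ) :
    a (n + 1) * (Ds a k (n + 1) 0 - Ds a k (n + 2) 0)
      + k ^ 2 * a n * (Ds a k (n + 1) 0 - Ds a k n 0) = 0 := by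
  have h1 := R_id ha hs hk0 hk1 (n + 1) 0
  have h2 := R_id ha hs hk0 hk1 n 0
  have hz1 : Hs a k (n + 2) 0 = 1 := Hs_zero _
  have hz2 : Hs a k (n + 1) 0 = 1 := Hs_zero _
  linear_combination h1 - k ^ 2 * h2 + k ^ (2 * (n + 1)) * hz1 - (k ^ 2 * k ^ (2 * n)) * hz2

lemma A_idS (ha : ∀ n, 0 < a n) (hs : Summable fun n => (a n)⁻¹)
    (hk0 : 0 < k) (hk1 : k < 1) (n m : ℕ) :
    a (n + 1) * (Ds a k (n + 1) (m + 1) - Ds a k (n + 2) (m + 1))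
      + k ^ 2 * a n * (Ds a k (n + 1) (m + 1) - Ds a k n (m + 1)) = -Ds a k (n + 1) m := by
  have h1 := R_id ha hs hk0 hk1 (n + 1) (m + 1)
  have h2 := R_id ha hs hk0 hk1 n (m + 1)
  have h3 := M_id ha hs hk0 hk1 (n + 1) m
  have h4 := R_id ha hs hk0 hk1 (n + 1) m
  have hinv : a (n + 1) * (a (n + 1))⁻¹ = 1 := mul_inv_cancel₀ (ha (n + 1)).ne'
  linear_combination h1 - k ^ 2 * h2 - h3 + (a (n + 1))⁻¹ * h4
    - (Ds a k (n + 1) m - Ds a k (n + 2) m) * hinv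

lemma B_id0 (ha : ∀ n, 0 < a n) (hs : Summable fun n => (a n)⁻¹)
    (hk0 : 0 < k) (hk1 : k < 1) :
    a 0 * (Ds a k 0 0 - Ds a k 1 0) = 1 := by
  have h := R_id ha hs hk0 hk1 0 0
  have hz : Hs a k 1 0 = 1 := Hs_zero _
  linear_combination h + hz

lemma B_idS (ha : ∀ n, 0 < a n) (hs : Summable fun n => (a n)⁻¹)
    (hk0 : 0 < k) (hk1 : k < 1) (m : ℕ) :
    Hs a k 0 (m + 1) = a 0 * (Ds a k 0 (m + 1) - Ds a k 1 (m + 1)) + Ds a k 0 m := by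
  have h1 := R_id ha hs hk0 hk1 0 (m + 1)
  have h3 := M_id ha hs hk0 hk1 0 m
  have h4 := R_id ha hs hk0 hk1 0 m
  have hinv : a 0 * (a 0)⁻¹ = 1 := mul_inv_cancel₀ (ha 0).ne'
  linear_combination h3 - h1 - (a 0)⁻¹ * h4 + (Ds a k 0 m - Ds a k 1 m) * hinv

end Ids
section Cx

variable {a : ℕ → ℝ} {k : ℝ}

lemma Wgt_eq (ha : ∀ n, 0 < a n) (hk0 : 0 < k) (hk1 : k < 1) (n : ℕ) (z : ℂ) :
    Wgt a k n z = ∑' m : ℕ, (-1 : ℂ) ^ m * (Ds a k n m : ℂ) * z ^ m :=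
  tsum_congr fun m => by rw [dC_eq ha hk0 hk1 n m]

lemma Wsum (ha : ∀ n, 0 < a n) (hs : Summable fun n => (a n)⁻¹)
    (hk0 : 0 < k) (hk1 : k < 1) (n : ℕ) (z : ℂ) :
    Summable fun m : ℕ => (-1 : ℂ) ^ m * (Ds a k n m : ℂ) * z ^ m := by
  have hk2 : (0:ℝ) < 1 - k ^ 2 := by nlinarith
  apply Summable.of_norm
  apply Summable.of_nonneg_of_le (fun m => norm_nonneg _) (fun m => ?_)
    ((Real.summable_pow_div_factorial (Rt a 0 * ‖z‖ / (1 - k ^ 2))).mul_left (Rt a 0))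
  have h1 : ‖(-1 : ℂ) ^ m * (Ds a k n m : ℂ) * z ^ m‖ = Ds a k n m * ‖z‖ ^ m := by
    rw [norm_mul, norm_mul, norm_pow, norm_pow, norm_neg, norm_one, one_pow, one_mul,
      Complex.norm_real, Real.norm_of_nonneg (Ds_nonneg ha hk0 hk1 n m)]
  rw [h1]
  calc Ds a k n m * ‖z‖ ^ m
      ≤ (Rt a 0 * (Rt a 0 ^ m / ((1 - k ^ 2) ^ m * (m.factorial : ℝ)))) * ‖z‖ ^ m :=
        mul_le_mul_of_nonneg_right (Ds_glob ha hs hk0 hk1 n m) (pow_nonneg (norm_nonneg z) m)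
    _ = Rt a 0 * ((Rt a 0 * ‖z‖ / (1 - k ^ 2)) ^ m / (m.factorial : ℝ)) := by
        rw [div_pow, mul_pow]
        ring

lemma Fsum (ha : ∀ n, 0 < a n) (hs : Summable fun n => (a n)⁻¹)
    (hk0 : 0 < k) (hk1 : k < 1) (z : ℂ) :
    Summable fun m : ℕ => (-1 : ℂ) ^ (m + 1) * (cC a k (m + 1) : ℂ) * z ^ (m + 1) := by
  have hk2 : (0:ℝ) < 1 - k ^ 2 := by nlinarith
  apply Summable.of_norm
  apply Summable.of_nonneg_of_le (fun m => norm_nonneg _) (fun m => ?_)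
    ((summable_nat_add_iff 1).2
      (Real.summable_pow_div_factorial (Rt a 0 * ‖z‖ / (1 - k ^ 2))))
  have hnn : 0 ≤ cC a k (m + 1) := by
    rw [cC_eq ha hk0 hk1]
    exact Hs_nonneg ha hk0 hk1 _ _
  have h1 : ‖(-1 : ℂ) ^ (m + 1) * (cC a k (m + 1) : ℂ) * z ^ (m + 1)‖
      = cC a k (m + 1) * ‖z‖ ^ (m + 1) := by
    rw [norm_mul, norm_mul, norm_pow, norm_pow, norm_neg, norm_one, one_pow, one_mul,
      Complex.norm_real, Real.norm_of_nonneg hnn]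
  rw [h1]
  calc cC a k (m + 1) * ‖z‖ ^ (m + 1)
      ≤ (Rt a 0 ^ (m + 1) / ((1 - k ^ 2) ^ (m + 1) * ((m + 1).factorial : ℝ)))
          * ‖z‖ ^ (m + 1) := by
        apply mul_le_mul_of_nonneg_right ?_ (pow_nonneg (norm_nonneg z) _)
        rw [cC_eq ha hk0 hk1]
        exact Hs_glob ha hs hk0 hk1 0 (m + 1)
    _ = (Rt a 0 * ‖z‖ / (1 - k ^ 2)) ^ (m + 1) / (((m + 1).factorial : ℝ)) := by
        have hne1 : ((1:ℝ) - k ^ 2) ≠ 0 := hk2.ne'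
        have hne2 : (((m + 1).factorial : ℝ)) ≠ 0 :=
          Nat.cast_ne_zero.2 (Nat.factorial_ne_zero _)
        rw [div_pow, mul_pow]
        field_simp

lemma keyB (ha : ∀ n, 0 < a n) (hs : Summable fun n => (a n)⁻¹)
    (hk0 : 0 < k) (hk1 : k < 1) (z : ℂ) :
    Fgt a k z = (a 0 : ℂ) * (Wgt a k 0 z - Wgt a k 1 z) - z * Wgt a k 0 z := by
  have hW : ∀ q, Wgt a k q z = ∑' m : ℕ, (-1 : ℂ) ^ m * (Ds a k q m : ℂ) * z ^ m :=
    fun q => Wgt_eq ha hk0 hk1 q z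
  have hsum : ∀ q, Summable fun m : ℕ => (-1 : ℂ) ^ m * (Ds a k q m : ℂ) * z ^ m :=
    fun q => Wsum ha hs hk0 hk1 q z
  have hs1 : Summable fun m : ℕ => (a 0 : ℂ) *
      ((-1 : ℂ) ^ m * (Ds a k 0 m : ℂ) * z ^ m - (-1 : ℂ) ^ m * (Ds a k 1 m : ℂ) * z ^ m) :=
    ((hsum 0).sub (hsum 1)).mul_left _
  have step1 : (a 0 : ℂ) * (Wgt a k 0 z - Wgt a k 1 z) - z * Wgt a k 0 z
      = (∑' m : ℕ, (a 0 : ℂ) * ((-1 : ℂ) ^ m * (Ds a k 0 m : ℂ) * z ^ m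
            - (-1 : ℂ) ^ m * (Ds a k 1 m : ℂ) * z ^ m))
        - ∑' m : ℕ, z * ((-1 : ℂ) ^ m * (Ds a k 0 m : ℂ) * z ^ m) := by
    rw [hW 0, hW 1, ← Summable.tsum_sub (hsum 0) (hsum 1), tsum_mul_left, tsum_mul_left]
  have hb0 : (a 0 : ℂ) * ((-1 : ℂ) ^ 0 * (Ds a k 0 0 : ℂ) * z ^ 0
      - (-1 : ℂ) ^ 0 * (Ds a k 1 0 : ℂ) * z ^ 0) = 1 := by
    have hr := congrArg Complex.ofReal (B_id0 ha hs hk0 hk1)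
    push_cast at hr
    push_cast
    linear_combination hr
  have hsh : Summable fun m : ℕ => (a 0 : ℂ) *
      ((-1 : ℂ) ^ (m + 1) * (Ds a k 0 (m + 1) : ℂ) * z ^ (m + 1)
        - (-1 : ℂ) ^ (m + 1) * (Ds a k 1 (m + 1) : ℂ) * z ^ (m + 1)) :=
    (summable_nat_add_iff 1).2 hs1
  have hzs : Summable fun m : ℕ => z * ((-1 : ℂ) ^ m * (Ds a k 0 m : ℂ) * z ^ m) :=
    (hsum 0).mul_left z
  have hfin : (∑' m : ℕ, (-1 : ℂ) ^ (m + 1) * (cC a k (m + 1) : ℂ) * z ^ (m + 1))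
      = (∑' m : ℕ, (a 0 : ℂ) *
          ((-1 : ℂ) ^ (m + 1) * (Ds a k 0 (m + 1) : ℂ) * z ^ (m + 1)
            - (-1 : ℂ) ^ (m + 1) * (Ds a k 1 (m + 1) : ℂ) * z ^ (m + 1)))
        - ∑' m : ℕ, z * ((-1 : ℂ) ^ m * (Ds a k 0 m : ℂ) * z ^ m) := by
    rw [← Summable.tsum_sub hsh hzs]
    apply tsum_congr
    intro m
    have hr := congrArg Complex.ofReal (B_idS ha hs hk0 hk1 m)
    push_cast at hr
    have hc : (cC a k (m + 1) : ℂ) = ((Hs a k 0 (m + 1) : ℝ) : ℂ) := by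
      rw [cC_eq ha hk0 hk1 (m + 1)]
    rw [hc]
    linear_combination ((-1 : ℂ) ^ (m + 1) * z ^ (m + 1)) * hr
  rw [show Fgt a k z
      = 1 + ∑' m : ℕ, (-1 : ℂ) ^ (m + 1) * (cC a k (m + 1) : ℂ) * z ^ (m + 1) from rfl]
  rw [hfin, step1, Summable.tsum_eq_zero_add hs1, hb0]
  ring

lemma keyA (ha : ∀ n, 0 < a n) (hs : Summable fun n => (a n)⁻¹)
    (hk0 : 0 < k) (hk1 : k < 1) (n : ℕ) (z : ℂ) :
    (a (n + 1) : ℂ) * (Wgt a k (n + 1) z - Wgt a k (n + 2) z)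
      + (k : ℂ) ^ 2 * (a n : ℂ) * (Wgt a k (n + 1) z - Wgt a k n z)
      = z * Wgt a k (n + 1) z := by
  have hW : ∀ q, Wgt a k q z = ∑' m : ℕ, (-1 : ℂ) ^ m * (Ds a k q m : ℂ) * z ^ m :=
    fun q => Wgt_eq ha hk0 hk1 q z
  have hsum : ∀ q, Summable fun m : ℕ => (-1 : ℂ) ^ m * (Ds a k q m : ℂ) * z ^ m :=
    fun q => Wsum ha hs hk0 hk1 q z
  set c : ℕ → ℕ → ℂ := fun q m => (-1 : ℂ) ^ m * (Ds a k q m : ℂ) * z ^ m with hc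
  set S : ℕ → ℂ := fun m => (a (n + 1) : ℂ) * (c (n + 1) m - c (n + 2) m)
      + (k : ℂ) ^ 2 * (a n : ℂ) * (c (n + 1) m - c n m) with hS
  have hSsum : Summable S :=
    ((((hsum (n + 1)).sub (hsum (n + 2))).mul_left _).add
      (((hsum (n + 1)).sub (hsum n)).mul_left _))
  have step1 : (a (n + 1) : ℂ) * (Wgt a k (n + 1) z - Wgt a k (n + 2) z)
      + (k : ℂ) ^ 2 * (a n : ℂ) * (Wgt a k (n + 1) z - Wgt a k n z) = ∑' m, S m := by
    rw [hW (n + 1), hW (n + 2), hW n, ← Summable.tsum_sub (hsum (n + 1)) (hsum (n + 2)),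
      ← Summable.tsum_sub (hsum (n + 1)) (hsum n), ← tsum_mul_left, ← tsum_mul_left,
      ← Summable.tsum_add (((hsum (n + 1)).sub (hsum (n + 2))).mul_left _)
        (((hsum (n + 1)).sub (hsum n)).mul_left _)]
  rw [step1, Summable.tsum_eq_zero_add hSsum]
  have h0 : S 0 = 0 := by
    have hr := congrArg Complex.ofReal (A_id0 ha hs hk0 hk1 n)
    push_cast at hr
    simp only [hS, hc, pow_zero, one_mul, mul_one]
    linear_combination hr
  rw [h0, zero_add]
  have hterm : ∀ m : ℕ, S (m + 1) = z * c (n + 1) m := by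
    intro m
    have hr := congrArg Complex.ofReal (A_idS ha hs hk0 hk1 n m)
    push_cast at hr
    simp only [hS, hc]
    linear_combination ((-1 : ℂ) ^ (m + 1) * z ^ (m + 1)) * hr
  rw [tsum_congr hterm, tsum_mul_left, ← hW (n + 1)]

end Cx
section Fin2

variable {a : ℕ → ℝ} {k : ℝ}

lemma neg_one_sq_pow (n : ℕ) : (-1 : ℂ) ^ n * (-1 : ℂ) ^ n = 1 := by
  rw [← pow_add, ← two_mul, pow_mul]
  norm_num

lemma phi_flip (hk : (k : ℂ) ≠ 0) (n : ℕ) (Wn X : ℂ) :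
    ((-1 : ℂ) ^ n * (((k : ℂ)) ^ n)⁻¹ * Wn = X) ↔ (Wn = (-1 : ℂ) ^ n * (k : ℂ) ^ n * X) := by
  have h1 := neg_one_sq_pow n
  have h2 : ((k : ℂ)) ^ n * (((k : ℂ)) ^ n)⁻¹ = 1 := mul_inv_cancel₀ (pow_ne_zero _ hk)
  constructor
  · intro h
    linear_combination ((-1 : ℂ) ^ n * (k : ℂ) ^ n) * h
      - Wn * ((k : ℂ) ^ n) * (((k : ℂ)) ^ n)⁻¹ * h1 - Wn * h2
  · intro h
    linear_combination ((-1 : ℂ) ^ n * (((k : ℂ)) ^ n)⁻¹) * h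
      + X * ((k : ℂ) ^ n) * (((k : ℂ)) ^ n)⁻¹ * h1 + X * h2

end Fin2

end St6

/-- If `𝔉(λ) = 0` then the sequences `(P_n(λ))` and `(Φ_n(λ))` are
proportional: `Φ_n(λ) = 𝔚(λ) · P_n(λ)` for all `n`, with `𝔚 = 𝔚₀`. -/
theorem statement6
    (a : ℕ → ℝ) (ha : ∀ n, 0 < a n) (hsum : Summable fun n => 1 / a n)
    (k : ℝ) (hk : k ∈ Set.Ioo (0 : ℝ) 1)
    (P : ℕ → ℂ → ℂ)
    (hP0 : ∀ z, P 0 z = 1)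
    (hP1 : ∀ z, (alph a k 0 : ℂ) * P 1 z + ((bet a k 0 : ℂ) - z) * P 0 z = 0)
    (hPrec : ∀ n, 1 ≤ n → ∀ z,
      (alph a k n : ℂ) * P (n + 1) z + ((bet a k n : ℂ) - z) * P n z
        + (alph a k (n - 1) : ℂ) * P (n - 1) z = 0)
    (lam : ℂ) (hlam : Fgt a k lam = 0) :
    ∀ n : ℕ, Phi a k n lam = Wgt a k 0 lam * P n lam := by
  obtain ⟨hk0, hk1⟩ := hk
  have hs : Summable fun n => (a n)⁻¹ := by simpa [one_div] using hsum
  have hkC : (k : ℂ) ≠ 0 := by exact_mod_cast hk0.ne'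
  have haC : ∀ n, ((a n : ℝ) : ℂ) ≠ 0 := fun n => by exact_mod_cast (ha n).ne'
  -- the base relation from 𝔉(λ) = 0
  have hE : (a 0 : ℂ) * (Wgt a k 0 lam - Wgt a k 1 lam) - lam * Wgt a k 0 lam = 0 := by
    rw [← St6.keyB ha hs hk0 hk1 lam]
    exact hlam
  -- recurrence for W
  have hL : ∀ n : ℕ, (a (n + 1) : ℂ) * (Wgt a k (n + 1) lam - Wgt a k (n + 2) lam)
      + (k : ℂ) ^ 2 * (a n : ℂ) * (Wgt a k (n + 1) lam - Wgt a k n lam)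
      = lam * Wgt a k (n + 1) lam := fun n => St6.keyA ha hs hk0 hk1 n lam
  -- pairwise induction
  have key : ∀ n : ℕ, Phi a k n lam = Wgt a k 0 lam * P n lam
      ∧ Phi a k (n + 1) lam = Wgt a k 0 lam * P (n + 1) lam := by
    intro n
    induction n with
    | zero =>
        constructor
        · rw [Phi, hP0]
          simp
        · -- n = 1 case
          have hP1' := hP1 lam
          rw [hP0] at hP1'
          have hP1c : (k : ℂ) * (a 0 : ℂ) * P 1 lam + ((a 0 : ℂ) - lam) = 0 := by
            have e1 : (alph a k 0 : ℝ) = k * a 0 := rfl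
            have e2 : (bet a k 0 : ℝ) = a 0 := rfl
            rw [e1, e2] at hP1'
            push_cast at hP1'
            linear_combination hP1'
          rw [Phi]
          rw [St6.phi_flip hkC 1 (Wgt a k 1 lam) (Wgt a k 0 lam * P 1 lam)]
          -- W1 = (-1)^1 k^1 (W0 P1)
          have hainv : (a 0 : ℂ) * ((a 0 : ℂ))⁻¹ = 1 := mul_inv_cancel₀ (haC 0)
          rw [pow_one, pow_one]
          -- a0 * W1 = a0 W0 - lam W0 (from hE) and k a0 P1 = lam - a0
          have h1 : (a 0 : ℂ) * Wgt a k 1 lam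
              = (a 0 : ℂ) * Wgt a k 0 lam - lam * Wgt a k 0 lam := by
            linear_combination -hE
          -- multiply target by a0
          have h2 : (a 0 : ℂ) * Wgt a k 1 lam
              = (a 0 : ℂ) * (-1 * (k : ℂ) * (Wgt a k 0 lam * P 1 lam)) := by
            rw [h1]
            linear_combination (Wgt a k 0 lam) * hP1c
          exact mul_left_cancel₀ (haC 0) h2
    | succ n ih =>
        obtain ⟨ih0, ih1⟩ := ih
        refine ⟨ih1, ?_⟩
        -- prepare recurrence for P at n+1
        have hPr := hPrec (n + 1) (Nat.le_add_left 1 n) lam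
        have e3 : n + 1 - 1 = n := rfl
        rw [e3] at hPr
        have hPrc : (k : ℂ) * (a (n + 1) : ℂ) * P (n + 2) lam
            + ((a (n + 1) : ℂ) + (k : ℂ) ^ 2 * (a n : ℂ) - lam) * P (n + 1) lam
            + (k : ℂ) * (a n : ℂ) * P n lam = 0 := by
          have e1 : (alph a k (n + 1) : ℝ) = k * a (n + 1) := rfl
          have e2 : (bet a k (n + 1) : ℝ) = a (n + 1) + k ^ 2 * a n := rfl
          have e4 : (alph a k n : ℝ) = k * a n := rfl
          rw [e1, e2, e4] at hPr
          push_cast at hPr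
          linear_combination hPr
        -- express W n, W (n+1) via P
        have e0 : Wgt a k n lam
            = (-1 : ℂ) ^ n * (k : ℂ) ^ n * (Wgt a k 0 lam * P n lam) :=
          (St6.phi_flip hkC n _ _).1 ih0
        have e1 : Wgt a k (n + 1) lam
            = (-1 : ℂ) ^ (n + 1) * (k : ℂ) ^ (n + 1) * (Wgt a k 0 lam * P (n + 1) lam) :=
          (St6.phi_flip hkC (n + 1) _ _).1 ih1
        rw [Phi, St6.phi_flip hkC (n + 2) _ _]
        -- main algebra
        have h2 : (a (n + 1) : ℂ) * Wgt a k (n + 2) lam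
            = ((a (n + 1) : ℂ) + (k : ℂ) ^ 2 * (a n : ℂ) - lam) * Wgt a k (n + 1) lam
              - (k : ℂ) ^ 2 * (a n : ℂ) * Wgt a k n lam := by
          linear_combination -(hL n)
        have h4 : (a (n + 1) : ℂ) * Wgt a k (n + 2) lam
            = (a (n + 1) : ℂ) *
              ((-1 : ℂ) ^ (n + 2) * (k : ℂ) ^ (n + 2) * (Wgt a k 0 lam * P (n + 2) lam)) := by
          rw [h2, e1, e0]
          linear_combination (-((-1 : ℂ) ^ n * (k : ℂ) ^ n * (k : ℂ) * Wgt a k 0 lam)) * hPrc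
        exact mul_left_cancel₀ (haC (n + 1)) h4
  intro n
  exact (key n).1
end

section
/- For every q ∈ (0,1), every integer r ≥ 1, and every w ∈ ℂ with |w| < 1, one has Σ_{n=0}^∞ q^{rn} / (q^n w; q)_{r+1} = 1 / ( (1 − q^r) · (w; q)_r ), where all denominators are nonzero and the series converges absolutely. -/
open scoped BigOperators

/-- The q-Pochhammer symbol `(w;q)_r = ∏_{i=0}^{r−1} (1 − q^i w)` (complex version). -/
noncomputable def qPC (q w : ℂ) (r : ℕ) : ℂ := ∏ i ∈ Finset.range r, (1 - q ^ i * w)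

lemma norm_pow_mul_le {q : ℝ} (hq0 : 0 < q) (hq1 : q < 1) (z : ℂ) (i : ℕ) :
    ‖(q : ℂ) ^ i * z‖ ≤ ‖z‖ := by
  rw [norm_mul, norm_pow, Complex.norm_real, Real.norm_eq_abs, abs_of_pos hq0]
  calc q ^ i * ‖z‖ ≤ 1 * ‖z‖ :=
        mul_le_mul_of_nonneg_right (pow_le_one₀ hq0.le hq1.le) (norm_nonneg z)
    _ = ‖z‖ := one_mul _

lemma qPC_ne_zero {q : ℝ} (hq0 : 0 < q) (hq1 : q < 1) {z : ℂ} (hz : ‖z‖ < 1) (m : ℕ) :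
    qPC (q : ℂ) z m ≠ 0 := by
  refine Finset.prod_ne_zero_iff.2 fun i _ h => ?_
  have h1 : ‖(q : ℂ) ^ i * z‖ < 1 := lt_of_le_of_lt (norm_pow_mul_le hq0 hq1 z i) hz
  rw [sub_eq_zero] at h
  rw [← h, norm_one] at h1
  exact lt_irrefl 1 h1

lemma le_norm_qPC {q : ℝ} (hq0 : 0 < q) (hq1 : q < 1) {z : ℂ} (hz : ‖z‖ < 1) (m : ℕ) :
    (1 - ‖z‖) ^ m ≤ ‖qPC (q : ℂ) z m‖ := by
  rw [qPC, norm_prod]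
  calc (1 - ‖z‖) ^ m = ∏ _i ∈ Finset.range m, (1 - ‖z‖) := by
        rw [Finset.prod_const, Finset.card_range]
    _ ≤ _ := Finset.prod_le_prod (fun i _ => by linarith) (fun i _ => ?_)
  calc 1 - ‖z‖ ≤ 1 - ‖(q : ℂ) ^ i * z‖ := by
        have := norm_pow_mul_le hq0 hq1 z i; linarith
    _ = ‖(1 : ℂ)‖ - ‖(q : ℂ) ^ i * z‖ := by rw [norm_one]
    _ ≤ ‖1 - (q : ℂ) ^ i * z‖ := norm_sub_norm_le _ _

/-- For `q ∈ (0,1)`, `r ≥ 1`, `|w| < 1`: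
`Σ_{n=0}^∞ q^{rn}/(q^n w;q)_{r+1} = 1/((1 − q^r)(w;q)_r)`, all denominators are
nonzero and the series converges absolutely. -/
theorem statement10 (q : ℝ) (hq : q ∈ Set.Ioo (0 : ℝ) 1) (r : ℕ) (hr : 1 ≤ r)
    (w : ℂ) (hw : ‖w‖ < 1) :
    (∀ n : ℕ, qPC (q : ℂ) ((q : ℂ) ^ n * w) (r + 1) ≠ 0) ∧
    (1 - (q : ℂ) ^ r ≠ 0 ∧ qPC (q : ℂ) w r ≠ 0) ∧
    Summable (fun n : ℕ => ‖(q : ℂ) ^ (r * n) / qPC (q : ℂ) ((q : ℂ) ^ n * w) (r + 1)‖) ∧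
    ∑' n : ℕ, (q : ℂ) ^ (r * n) / qPC (q : ℂ) ((q : ℂ) ^ n * w) (r + 1)
      = 1 / ((1 - (q : ℂ) ^ r) * qPC (q : ℂ) w r) := by
  obtain ⟨hq0, hq1⟩ := hq
  have hqnorm : ∀ n : ℕ, ‖(q : ℂ) ^ n * w‖ < 1 := fun n =>
    lt_of_le_of_lt (norm_pow_mul_le hq0 hq1 w n) hw
  have hne : ∀ n m : ℕ, qPC (q : ℂ) ((q : ℂ) ^ n * w) m ≠ 0 := fun n m =>
    qPC_ne_zero hq0 hq1 (hqnorm n) m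
  have hqr : (1 : ℂ) - (q : ℂ) ^ r ≠ 0 := by
    intro h
    rw [sub_eq_zero] at h
    have : ‖(q : ℂ) ^ r‖ < 1 := by
      rw [norm_pow, Complex.norm_real, Real.norm_eq_abs, abs_of_pos hq0]
      exact pow_lt_one₀ hq0.le hq1 (by omega)
    rw [← h, norm_one] at this
    exact lt_irrefl 1 this
  have hw0 : qPC (q : ℂ) w r ≠ 0 := by
    have := hne 0 r
    simpa using this
  -- the telescoping sequence
  set A : ℕ → ℂ := fun n =>
    (q : ℂ) ^ (r * n) / ((1 - (q : ℂ) ^ r) * qPC (q : ℂ) ((q : ℂ) ^ n * w) r) with hA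
  -- telescoping identity
  have key : ∀ n : ℕ,
      (q : ℂ) ^ (r * n) / qPC (q : ℂ) ((q : ℂ) ^ n * w) (r + 1) = A n - A (n + 1) := by
    intro n
    set z : ℂ := (q : ℂ) ^ n * w with hz
    have D1 : qPC (q : ℂ) z (r + 1) = qPC (q : ℂ) z r * (1 - (q : ℂ) ^ r * z) :=
      Finset.prod_range_succ _ _
    have D2 : qPC (q : ℂ) z (r + 1) = (1 - z) * qPC (q : ℂ) ((q : ℂ) ^ (n + 1) * w) r := by
      rw [qPC, Finset.prod_range_succ']
      have : ∀ i, (1 - (q : ℂ) ^ (i + 1) * z) = 1 - (q : ℂ) ^ i * ((q : ℂ) ^ (n + 1) * w) := by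
        intro i; rw [hz]; ring
      simp only [this]
      rw [qPC]; ring
    have hP : qPC (q : ℂ) z r ≠ 0 := hne n r
    have hP' : qPC (q : ℂ) ((q : ℂ) ^ (n + 1) * w) r ≠ 0 := hne (n + 1) r
    have hD : qPC (q : ℂ) z (r + 1) ≠ 0 := hne n (r + 1)
    have h1z : (1 : ℂ) - z ≠ 0 := by
      intro h; apply hD; rw [D2, h, zero_mul]
    have h1qz : (1 : ℂ) - (q : ℂ) ^ r * z ≠ 0 := by
      intro h; apply hD; rw [D1, h, mul_zero]
    have hA1 : A n = (q : ℂ) ^ (r * n) * (1 - (q : ℂ) ^ r * z)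
        / ((1 - (q : ℂ) ^ r) * qPC (q : ℂ) z (r + 1)) := by
      simp only [hA]
      rw [D1]
      field_simp
      rw [← hz, mul_div_assoc, div_self hP, mul_one]
    have hA2 : A (n + 1) = (q : ℂ) ^ (r * n) * ((q : ℂ) ^ r * (1 - z))
        / ((1 - (q : ℂ) ^ r) * qPC (q : ℂ) z (r + 1)) := by
      simp only [hA]
      rw [D2]
      have hpow : (q : ℂ) ^ (r * (n + 1)) = (q : ℂ) ^ (r * n) * (q : ℂ) ^ r := by
        rw [← pow_add]; ring_nf
      rw [hpow]
      field_simp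
    rw [hA1, hA2, div_sub_div_same]
    have hnum : (q : ℂ) ^ (r * n) * (1 - (q : ℂ) ^ r * z)
        - (q : ℂ) ^ (r * n) * ((q : ℂ) ^ r * (1 - z)) = (q : ℂ) ^ (r * n) * (1 - (q : ℂ) ^ r) := by
      ring
    rw [hnum]
    field_simp
  -- summability
  have hsum : Summable (fun n : ℕ =>
      ‖(q : ℂ) ^ (r * n) / qPC (q : ℂ) ((q : ℂ) ^ n * w) (r + 1)‖) := by
    have hwpos : 0 < 1 - ‖w‖ := by linarith
    have hc : 0 < (1 - ‖w‖) ^ (r + 1) := pow_pos hwpos _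
    refine Summable.of_nonneg_of_le (f := fun n : ℕ => (q ^ r) ^ n * ((1 - ‖w‖) ^ (r + 1))⁻¹)
      (fun n => norm_nonneg _) (fun n => ?_) ?_
    · 
      rw [norm_div]
      have hb : (1 - ‖w‖) ^ (r + 1) ≤ ‖qPC (q : ℂ) ((q : ℂ) ^ n * w) (r + 1)‖ := by
        calc (1 - ‖w‖) ^ (r + 1) ≤ (1 - ‖(q : ℂ) ^ n * w‖) ^ (r + 1) := by
              apply pow_le_pow_left₀ hwpos.le
              have := norm_pow_mul_le hq0 hq1 w n; linarith
          _ ≤ _ := le_norm_qPC hq0 hq1 (hqnorm n) _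
      have hnum : ‖(q : ℂ) ^ (r * n)‖ = (q ^ r) ^ n := by
        rw [norm_pow, Complex.norm_real, Real.norm_eq_abs, abs_of_pos hq0, ← pow_mul]
      rw [hnum, div_eq_mul_inv]
      apply mul_le_mul_of_nonneg_left _ (by positivity)
      apply inv_anti₀ hc hb
    · exact Summable.mul_right _ (summable_geometric_of_lt_one (by positivity)
        (pow_lt_one₀ hq0.le hq1 (by omega)))
  refine ⟨fun n => hne n (r + 1), ⟨hqr, hw0⟩, hsum, ?_⟩
  -- the sum
  have hsum' : Summable (fun n : ℕ =>
      (q : ℂ) ^ (r * n) / qPC (q : ℂ) ((q : ℂ) ^ n * w) (r + 1)) :=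
    hsum.of_norm
  have hA0 : A 0 = 1 / ((1 - (q : ℂ) ^ r) * qPC (q : ℂ) w r) := by
    simp [hA]
  have hAlim : Filter.Tendsto A Filter.atTop (nhds 0) := by
    have hwpos : 0 < 1 - ‖w‖ := by linarith
    have hbound : ∀ n : ℕ, ‖A n‖ ≤
        (q ^ r) ^ n * (‖1 - (q : ℂ) ^ r‖ * (1 - ‖w‖) ^ r)⁻¹ := by
      intro n
      rw [hA]
      simp only [norm_div, norm_mul]
      have hnum : ‖(q : ℂ) ^ (r * n)‖ = (q ^ r) ^ n := by
        rw [norm_pow, Complex.norm_real, Real.norm_eq_abs, abs_of_pos hq0, ← pow_mul]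
      rw [hnum, div_eq_mul_inv]
      apply mul_le_mul_of_nonneg_left _ (by positivity)
      apply inv_anti₀ (mul_pos (norm_pos_iff.2 hqr) (by positivity))
      apply mul_le_mul_of_nonneg_left _ (norm_nonneg _)
      calc (1 - ‖w‖) ^ r ≤ (1 - ‖(q : ℂ) ^ n * w‖) ^ r := by
            apply pow_le_pow_left₀ hwpos.le
            have := norm_pow_mul_le hq0 hq1 w n; linarith
        _ ≤ _ := le_norm_qPC hq0 hq1 (hqnorm n) _
    have hgeo : Filter.Tendsto (fun n : ℕ =>
        (q ^ r) ^ n * (‖1 - (q : ℂ) ^ r‖ * (1 - ‖w‖) ^ r)⁻¹) Filter.atTop (nhds 0) := by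
      rw [show (0 : ℝ) = 0 * (‖1 - (q : ℂ) ^ r‖ * (1 - ‖w‖) ^ r)⁻¹ by ring]
      exact (tendsto_pow_atTop_nhds_zero_of_lt_one (by positivity)
        (pow_lt_one₀ hq0.le hq1 (by omega))).mul_const _
    have : Filter.Tendsto (fun n => ‖A n‖) Filter.atTop (nhds 0) :=
      squeeze_zero (fun n => norm_nonneg _) hbound hgeo
    exact tendsto_zero_iff_norm_tendsto_zero.2 this
  have hps : Filter.Tendsto (fun N : ℕ =>
      ∑ n ∈ Finset.range N, (q : ℂ) ^ (r * n) / qPC (q : ℂ) ((q : ℂ) ^ n * w) (r + 1))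
      Filter.atTop (nhds (A 0)) := by
    have heq : ∀ N : ℕ, ∑ n ∈ Finset.range N,
        (q : ℂ) ^ (r * n) / qPC (q : ℂ) ((q : ℂ) ^ n * w) (r + 1) = A 0 - A N := by
      intro N
      rw [Finset.sum_congr rfl (fun n _ => key n)]
      exact Finset.sum_range_sub' A N
    simp only [heq]
    have := (tendsto_const_nhds (x := A 0) (f := Filter.atTop (α := ℕ))).sub hAlim
    simpa using this
  have := hsum'.hasSum.tendsto_sum_nat
  have := tendsto_nhds_unique this hps
  rw [this, hA0]
end
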